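/- arXiv:1603.06247 — 5 statements merged into one kernel-verified Lean document; each statement's English description precedes it below -/
import Mathlib

section
/- The singular point (1:1:1:1) of the sextic surface F defined by Q = 0 is an ordinary double point (node): the 4×4 Hessian matrix (∂²Q/∂xᵢ∂xⱼ) evaluated at (1,1,1,1) has rank exactly 3. -/
open MvPolynomial Matrix

/-- The 56-nodal sextic `Q = x₀⁵x₂ + x₀x₁⁵ + x₁x₂⁵ − 5x₀²x₁²x₂²
    + (x₀³x₁ + x₀x₂³ + x₁³x₂)x₃² − x₃⁶`. -/
noncomputable def Q : MvPolynomial (Fin 4) ℂ :=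
  X 0 ^ 5 * X 2 + X 0 * X 1 ^ 5 + X 1 * X 2 ^ 5 - 5 * X 0 ^ 2 * X 1 ^ 2 * X 2 ^ 2
    + (X 0 ^ 3 * X 1 + X 0 * X 2 ^ 3 + X 1 ^ 3 * X 2) * X 3 ^ 2 - X 3 ^ 6

lemma pd_ofNat (i : Fin 4) (n : ℕ) [n.AtLeastTwo] :
    pderiv i (no_index (OfNat.ofNat n) : MvPolynomial (Fin 4) ℂ) = 0 := by
  have h : (OfNat.ofNat n : MvPolynomial (Fin 4) ℂ)
      = ((OfNat.ofNat n : ℕ) : MvPolynomial (Fin 4) ℂ) := by norm_cast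
  rw [h]; exact Derivation.map_natCast _ _

/-- The Hessian matrix of `Q` at `(1,1,1,1)`. -/
noncomputable def M : Matrix (Fin 4) (Fin 4) ℂ :=
  !![16, -12, -12, 8; -12, 16, -12, 8; -12, -12, 16, 8; 8, 8, 8, -24]

set_option maxHeartbeats 4000000 in
lemma hessian_eq :
    (Matrix.of fun i j : Fin 4 =>
      eval (fun _ => (1 : ℂ)) (pderiv i (pderiv j Q))) = M := by
  ext i j
  fin_cases i <;> fin_cases j <;>
    · simp only [Matrix.of_apply, Q, _root_.map_sub, _root_.map_add, pderiv_mul, pderiv_pow,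
        pderiv_X, pd_ofNat, Derivation.map_natCast, Pi.single_apply,
        eval_mul, eval_add, eval_pow, eval_X, _root_.map_one, _root_.map_zero, _root_.map_natCast, eval_ofNat,
        mul_zero, zero_mul, mul_one, one_mul, add_zero, zero_add, one_pow]
      simp (config := { decide := true }) only [Fin.ext_iff, pderiv_one, _root_.map_zero,
        _root_.map_one, if_true, if_false, Fin.isValue, mul_zero, zero_mul, add_zero,
        zero_add, mul_one]
      norm_num [M]

lemma rankM : M.rank = 3 := by
  -- upper bound
  have hle : M.rank ≤ 3 := by
    have hfac : M = (!![1,0,0;0,1,0;0,0,1;-1,-1,-1] : Matrix (Fin 4) (Fin 3) ℂ) *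
        (!![16,-12,-12,8;-12,16,-12,8;-12,-12,16,8] : Matrix (Fin 3) (Fin 4) ℂ) := by
      ext i j
      fin_cases i <;> fin_cases j <;>
        norm_num [M, Matrix.mul_apply, Fin.sum_univ_succ]
    calc M.rank ≤ (!![16,-12,-12,8;-12,16,-12,8;-12,-12,16,8] : Matrix (Fin 3) (Fin 4) ℂ).rank := by
          rw [hfac]; exact Matrix.rank_mul_le_right _ _
      _ ≤ 3 := (Matrix.rank_le_card_height _).trans (Fintype.card_fin _).le
  -- lower bound
  have hge : 3 ≤ M.rank := by
    set E : Matrix (Fin 3) (Fin 4) ℂ := !![1,0,0,0;0,1,0,0;0,0,1,0] with hE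
    set F : Matrix (Fin 4) (Fin 3) ℂ := !![1,0,0;0,1,0;0,0,1;0,0,0] with hF
    have hS : E * M * F = (!![16,-12,-12;-12,16,-12;-12,-12,16] : Matrix (Fin 3) (Fin 3) ℂ) := by
      ext i j
      fin_cases i <;> fin_cases j <;>
        norm_num [hE, hF, M, Matrix.mul_apply, Fin.sum_univ_succ]
    have hdet : (!![16,-12,-12;-12,16,-12;-12,-12,16] : Matrix (Fin 3) (Fin 3) ℂ).det ≠ 0 := by
      rw [Matrix.det_fin_three]
      norm_num [Matrix.cons_val_zero, Matrix.cons_val_one, Matrix.head_cons,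
        Matrix.cons_val_two, Matrix.vecHead, Matrix.vecTail, Matrix.tail_cons]
    have hunit : IsUnit (!![16,-12,-12;-12,16,-12;-12,-12,16] : Matrix (Fin 3) (Fin 3) ℂ) := by
      rw [Matrix.isUnit_iff_isUnit_det]
      exact hdet.isUnit
    have hrS : (!![16,-12,-12;-12,16,-12;-12,-12,16] : Matrix (Fin 3) (Fin 3) ℂ).rank = 3 := by
      simpa using Matrix.rank_of_isUnit _ hunit
    calc (3 : ℕ) = (E * M * F).rank := by rw [hS, hrS]
      _ ≤ (M * F).rank := by rw [Matrix.mul_assoc]; exact Matrix.rank_mul_le_right _ _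
      _ ≤ M.rank := Matrix.rank_mul_le_left _ _
  omega

/-- The singular point (1:1:1:1) of the sextic `Q = 0` is a node: the Hessian
matrix of `Q` at `(1,1,1,1)` has rank exactly 3. -/
theorem node_at_1111 :
    (Matrix.of fun i j : Fin 4 =>
      eval (fun _ => (1 : ℂ)) (pderiv i (pderiv j Q))).rank = 3 := by
  rw [hessian_eq]; exact rankM
end

section
/- Every singular point of the sextic surface F defined by Q = 0 is a node: for every p ∈ ℂ⁴ \ {0} with Q(p) = 0 and all four partial derivatives of Q vanishing at p, the 4×4 Hessian matrix (∂²Q/∂xᵢ∂xⱼ)(p) has rank exactly 3. -/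
open MvPolynomial

set_option maxHeartbeats 4000000

lemma pderiv_five (i : Fin 4) : pderiv i (5 : MvPolynomial (Fin 4) ℂ) = 0 := by
  rw [← map_ofNat (C : ℂ →+* MvPolynomial (Fin 4) ℂ) 5, pderiv_C]

lemma pderiv_natCast' (i : Fin 4) (n : ℕ) :
    pderiv i ((n : MvPolynomial (Fin 4) ℂ)) = 0 := by
  rw [← map_natCast (C : ℂ →+* MvPolynomial (Fin 4) ℂ) n, pderiv_C]

lemma rank_le_three_of_ker (M : Matrix (Fin 4) (Fin 4) ℂ) (v : Fin 4 → ℂ)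
    (hv : v ≠ 0) (h : M.mulVec v = 0) : M.rank ≤ 3 := by
  have hrn := LinearMap.finrank_range_add_finrank_ker M.mulVecLin
  have hv' : v ∈ LinearMap.ker M.mulVecLin := by simpa [Matrix.mulVecLin_apply] using h
  have hker : LinearMap.ker M.mulVecLin ≠ ⊥ := by
    intro hbot
    exact hv (by simpa [hbot] using hv')
  have hpos : 0 < Module.finrank ℂ (LinearMap.ker M.mulVecLin) := by
    rcases Nat.eq_zero_or_pos (Module.finrank ℂ (LinearMap.ker M.mulVecLin)) with h0 | h0
    · exact absurd (Submodule.finrank_eq_zero.mp h0) hker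
    · exact h0
  have hdim : Module.finrank ℂ (Fin 4 → ℂ) = 4 := by simp
  rw [Matrix.rank]
  omega

lemma three_le_rank_of_minor (M : Matrix (Fin 4) (Fin 4) ℂ) (f g : Fin 3 → Fin 4)
    (h : (M.submatrix f g).det ≠ 0) : 3 ≤ M.rank := by
  set E : Matrix (Fin 3) (Fin 4) ℂ := Matrix.of fun i j => if j = f i then 1 else 0 with hE
  set G : Matrix (Fin 4) (Fin 3) ℂ := Matrix.of fun i j => if i = g j then 1 else 0 with hG
  have hEF : E * M * G = M.submatrix f g := by
    ext i j
    simp [hE, hG, Matrix.mul_apply, ite_mul, mul_ite, one_mul, zero_mul, mul_one, mul_zero,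
      Finset.sum_ite_eq, Finset.sum_ite_eq']
  have hunit : IsUnit (M.submatrix f g) :=
    (Matrix.isUnit_iff_isUnit_det _).2 (isUnit_iff_ne_zero.2 h)
  have h3 : (E * M * G).rank = 3 := by
    rw [hEF, Matrix.rank_of_isUnit _ hunit]
    simp
  calc (3 : ℕ) = (E * M * G).rank := h3.symm
    _ ≤ (E * M).rank := Matrix.rank_mul_le_left _ _
    _ ≤ M.rank := Matrix.rank_mul_le_right _ _

/-- Every singular point of the sextic surface `Q = 0` is a node: at every
nonzero `p ∈ ℂ⁴` where `Q` and its four partial derivatives vanish, the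
Hessian matrix of `Q` has rank exactly 3. -/
theorem every_singular_point_is_a_node (p : Fin 4 → ℂ) (hp : p ≠ 0)
    (hQ : eval p Q = 0) (hsing : ∀ i : Fin 4, eval p (pderiv i Q) = 0) :
    (Matrix.of fun i j : Fin 4 => eval p (pderiv i (pderiv j Q))).rank = 3 := by
  have e0 : eval p (pderiv 0 Q) = (p 2)^3*(p 3)^2 + (p 1)^5 - 10*(p 0)*(p 1)^2*(p 2)^2 + 3*(p 0)^2*(p 1)*(p 3)^2 + 5*(p 0)^4*(p 2) := by
    simp only [Q, map_add, map_sub, map_mul, map_pow, pderiv_mul, pderiv_pow, pderiv_X,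
      pderiv_five, pderiv_natCast', pderiv_C, pderiv_one, map_zero, map_one, map_natCast,
      eval_X, eval_C, eval_pow, eval_mul, eval_add, eval_sub, eval_ofNat, Pi.single_apply,
      show (3:Fin 4) ≠ 0 by decide, show (3:Fin 4) ≠ 1 by decide, show (3:Fin 4) ≠ 2 by decide,
      show (2:Fin 4) ≠ 0 by decide, show (2:Fin 4) ≠ 1 by decide, show (2:Fin 4) ≠ 3 by decide,
      show (1:Fin 4) ≠ 0 by decide, show (1:Fin 4) ≠ 2 by decide, show (1:Fin 4) ≠ 3 by decide,
      show (0:Fin 4) ≠ 1 by decide, show (0:Fin 4) ≠ 2 by decide, show (0:Fin 4) ≠ 3 by decide,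
      if_true, if_false, ite_true, ite_false, reduceIte]
    push_cast
    ring
  have e1 : eval p (pderiv 1 Q) = (p 2)^5 + 3*(p 1)^2*(p 2)*(p 3)^2 + 5*(p 0)*(p 1)^4 - 10*(p 0)^2*(p 1)*(p 2)^2 + (p 0)^3*(p 3)^2 := by
    simp only [Q, map_add, map_sub, map_mul, map_pow, pderiv_mul, pderiv_pow, pderiv_X,
      pderiv_five, pderiv_natCast', pderiv_C, pderiv_one, map_zero, map_one, map_natCast,
      eval_X, eval_C, eval_pow, eval_mul, eval_add, eval_sub, eval_ofNat, Pi.single_apply,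
      show (3:Fin 4) ≠ 0 by decide, show (3:Fin 4) ≠ 1 by decide, show (3:Fin 4) ≠ 2 by decide,
      show (2:Fin 4) ≠ 0 by decide, show (2:Fin 4) ≠ 1 by decide, show (2:Fin 4) ≠ 3 by decide,
      show (1:Fin 4) ≠ 0 by decide, show (1:Fin 4) ≠ 2 by decide, show (1:Fin 4) ≠ 3 by decide,
      show (0:Fin 4) ≠ 1 by decide, show (0:Fin 4) ≠ 2 by decide, show (0:Fin 4) ≠ 3 by decide,
      if_true, if_false, ite_true, ite_false, reduceIte]
    push_cast
    ring
  have e2 : eval p (pderiv 2 Q) = 5*(p 1)*(p 2)^4 + (p 1)^3*(p 3)^2 + 3*(p 0)*(p 2)^2*(p 3)^2 - 10*(p 0)^2*(p 1)^2*(p 2) + (p 0)^5 := by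
    simp only [Q, map_add, map_sub, map_mul, map_pow, pderiv_mul, pderiv_pow, pderiv_X,
      pderiv_five, pderiv_natCast', pderiv_C, pderiv_one, map_zero, map_one, map_natCast,
      eval_X, eval_C, eval_pow, eval_mul, eval_add, eval_sub, eval_ofNat, Pi.single_apply,
      show (3:Fin 4) ≠ 0 by decide, show (3:Fin 4) ≠ 1 by decide, show (3:Fin 4) ≠ 2 by decide,
      show (2:Fin 4) ≠ 0 by decide, show (2:Fin 4) ≠ 1 by decide, show (2:Fin 4) ≠ 3 by decide,
      show (1:Fin 4) ≠ 0 by decide, show (1:Fin 4) ≠ 2 by decide, show (1:Fin 4) ≠ 3 by decide,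
      show (0:Fin 4) ≠ 1 by decide, show (0:Fin 4) ≠ 2 by decide, show (0:Fin 4) ≠ 3 by decide,
      if_true, if_false, ite_true, ite_false, reduceIte]
    push_cast
    ring
  have e3 : eval p (pderiv 3 Q) = -6*(p 3)^5 + 2*(p 1)^3*(p 2)*(p 3) + 2*(p 0)*(p 2)^3*(p 3) + 2*(p 0)^3*(p 1)*(p 3) := by
    simp only [Q, map_add, map_sub, map_mul, map_pow, pderiv_mul, pderiv_pow, pderiv_X,
      pderiv_five, pderiv_natCast', pderiv_C, pderiv_one, map_zero, map_one, map_natCast,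
      eval_X, eval_C, eval_pow, eval_mul, eval_add, eval_sub, eval_ofNat, Pi.single_apply,
      show (3:Fin 4) ≠ 0 by decide, show (3:Fin 4) ≠ 1 by decide, show (3:Fin 4) ≠ 2 by decide,
      show (2:Fin 4) ≠ 0 by decide, show (2:Fin 4) ≠ 1 by decide, show (2:Fin 4) ≠ 3 by decide,
      show (1:Fin 4) ≠ 0 by decide, show (1:Fin 4) ≠ 2 by decide, show (1:Fin 4) ≠ 3 by decide,
      show (0:Fin 4) ≠ 1 by decide, show (0:Fin 4) ≠ 2 by decide, show (0:Fin 4) ≠ 3 by decide,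
      if_true, if_false, ite_true, ite_false, reduceIte]
    push_cast
    ring
  have h00 : eval p (pderiv 0 (pderiv 0 Q)) = -10*(p 1)^2*(p 2)^2 + 6*(p 0)*(p 1)*(p 3)^2 + 20*(p 0)^3*(p 2) := by
    simp only [Q, map_add, map_sub, map_mul, map_pow, pderiv_mul, pderiv_pow, pderiv_X,
      pderiv_five, pderiv_natCast', pderiv_C, pderiv_one, map_zero, map_one, map_natCast,
      eval_X, eval_C, eval_pow, eval_mul, eval_add, eval_sub, eval_ofNat, Pi.single_apply,
      show (3:Fin 4) ≠ 0 by decide, show (3:Fin 4) ≠ 1 by decide, show (3:Fin 4) ≠ 2 by decide,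
      show (2:Fin 4) ≠ 0 by decide, show (2:Fin 4) ≠ 1 by decide, show (2:Fin 4) ≠ 3 by decide,
      show (1:Fin 4) ≠ 0 by decide, show (1:Fin 4) ≠ 2 by decide, show (1:Fin 4) ≠ 3 by decide,
      show (0:Fin 4) ≠ 1 by decide, show (0:Fin 4) ≠ 2 by decide, show (0:Fin 4) ≠ 3 by decide,
      if_true, if_false, ite_true, ite_false, reduceIte]
    push_cast
    ring
  have h01 : eval p (pderiv 0 (pderiv 1 Q)) = 5*(p 1)^4 - 20*(p 0)*(p 1)*(p 2)^2 + 3*(p 0)^2*(p 3)^2 := by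
    simp only [Q, map_add, map_sub, map_mul, map_pow, pderiv_mul, pderiv_pow, pderiv_X,
      pderiv_five, pderiv_natCast', pderiv_C, pderiv_one, map_zero, map_one, map_natCast,
      eval_X, eval_C, eval_pow, eval_mul, eval_add, eval_sub, eval_ofNat, Pi.single_apply,
      show (3:Fin 4) ≠ 0 by decide, show (3:Fin 4) ≠ 1 by decide, show (3:Fin 4) ≠ 2 by decide,
      show (2:Fin 4) ≠ 0 by decide, show (2:Fin 4) ≠ 1 by decide, show (2:Fin 4) ≠ 3 by decide,
      show (1:Fin 4) ≠ 0 by decide, show (1:Fin 4) ≠ 2 by decide, show (1:Fin 4) ≠ 3 by decide,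
      show (0:Fin 4) ≠ 1 by decide, show (0:Fin 4) ≠ 2 by decide, show (0:Fin 4) ≠ 3 by decide,
      if_true, if_false, ite_true, ite_false, reduceIte]
    push_cast
    ring
  have h02 : eval p (pderiv 0 (pderiv 2 Q)) = 3*(p 2)^2*(p 3)^2 - 20*(p 0)*(p 1)^2*(p 2) + 5*(p 0)^4 := by
    simp only [Q, map_add, map_sub, map_mul, map_pow, pderiv_mul, pderiv_pow, pderiv_X,
      pderiv_five, pderiv_natCast', pderiv_C, pderiv_one, map_zero, map_one, map_natCast,
      eval_X, eval_C, eval_pow, eval_mul, eval_add, eval_sub, eval_ofNat, Pi.single_apply,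
      show (3:Fin 4) ≠ 0 by decide, show (3:Fin 4) ≠ 1 by decide, show (3:Fin 4) ≠ 2 by decide,
      show (2:Fin 4) ≠ 0 by decide, show (2:Fin 4) ≠ 1 by decide, show (2:Fin 4) ≠ 3 by decide,
      show (1:Fin 4) ≠ 0 by decide, show (1:Fin 4) ≠ 2 by decide, show (1:Fin 4) ≠ 3 by decide,
      show (0:Fin 4) ≠ 1 by decide, show (0:Fin 4) ≠ 2 by decide, show (0:Fin 4) ≠ 3 by decide,
      if_true, if_false, ite_true, ite_false, reduceIte]
    push_cast
    ring
  have h03 : eval p (pderiv 0 (pderiv 3 Q)) = 2*(p 2)^3*(p 3) + 6*(p 0)^2*(p 1)*(p 3) := by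
    simp only [Q, map_add, map_sub, map_mul, map_pow, pderiv_mul, pderiv_pow, pderiv_X,
      pderiv_five, pderiv_natCast', pderiv_C, pderiv_one, map_zero, map_one, map_natCast,
      eval_X, eval_C, eval_pow, eval_mul, eval_add, eval_sub, eval_ofNat, Pi.single_apply,
      show (3:Fin 4) ≠ 0 by decide, show (3:Fin 4) ≠ 1 by decide, show (3:Fin 4) ≠ 2 by decide,
      show (2:Fin 4) ≠ 0 by decide, show (2:Fin 4) ≠ 1 by decide, show (2:Fin 4) ≠ 3 by decide,
      show (1:Fin 4) ≠ 0 by decide, show (1:Fin 4) ≠ 2 by decide, show (1:Fin 4) ≠ 3 by decide,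
      show (0:Fin 4) ≠ 1 by decide, show (0:Fin 4) ≠ 2 by decide, show (0:Fin 4) ≠ 3 by decide,
      if_true, if_false, ite_true, ite_false, reduceIte]
    push_cast
    ring
  have h10 : eval p (pderiv 1 (pderiv 0 Q)) = 5*(p 1)^4 - 20*(p 0)*(p 1)*(p 2)^2 + 3*(p 0)^2*(p 3)^2 := by
    simp only [Q, map_add, map_sub, map_mul, map_pow, pderiv_mul, pderiv_pow, pderiv_X,
      pderiv_five, pderiv_natCast', pderiv_C, pderiv_one, map_zero, map_one, map_natCast,
      eval_X, eval_C, eval_pow, eval_mul, eval_add, eval_sub, eval_ofNat, Pi.single_apply,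
      show (3:Fin 4) ≠ 0 by decide, show (3:Fin 4) ≠ 1 by decide, show (3:Fin 4) ≠ 2 by decide,
      show (2:Fin 4) ≠ 0 by decide, show (2:Fin 4) ≠ 1 by decide, show (2:Fin 4) ≠ 3 by decide,
      show (1:Fin 4) ≠ 0 by decide, show (1:Fin 4) ≠ 2 by decide, show (1:Fin 4) ≠ 3 by decide,
      show (0:Fin 4) ≠ 1 by decide, show (0:Fin 4) ≠ 2 by decide, show (0:Fin 4) ≠ 3 by decide,
      if_true, if_false, ite_true, ite_false, reduceIte]
    push_cast
    ring
  have h11 : eval p (pderiv 1 (pderiv 1 Q)) = 6*(p 1)*(p 2)*(p 3)^2 + 20*(p 0)*(p 1)^3 - 10*(p 0)^2*(p 2)^2 := by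
    simp only [Q, map_add, map_sub, map_mul, map_pow, pderiv_mul, pderiv_pow, pderiv_X,
      pderiv_five, pderiv_natCast', pderiv_C, pderiv_one, map_zero, map_one, map_natCast,
      eval_X, eval_C, eval_pow, eval_mul, eval_add, eval_sub, eval_ofNat, Pi.single_apply,
      show (3:Fin 4) ≠ 0 by decide, show (3:Fin 4) ≠ 1 by decide, show (3:Fin 4) ≠ 2 by decide,
      show (2:Fin 4) ≠ 0 by decide, show (2:Fin 4) ≠ 1 by decide, show (2:Fin 4) ≠ 3 by decide,
      show (1:Fin 4) ≠ 0 by decide, show (1:Fin 4) ≠ 2 by decide, show (1:Fin 4) ≠ 3 by decide,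
      show (0:Fin 4) ≠ 1 by decide, show (0:Fin 4) ≠ 2 by decide, show (0:Fin 4) ≠ 3 by decide,
      if_true, if_false, ite_true, ite_false, reduceIte]
    push_cast
    ring
  have h12 : eval p (pderiv 1 (pderiv 2 Q)) = 5*(p 2)^4 + 3*(p 1)^2*(p 3)^2 - 20*(p 0)^2*(p 1)*(p 2) := by
    simp only [Q, map_add, map_sub, map_mul, map_pow, pderiv_mul, pderiv_pow, pderiv_X,
      pderiv_five, pderiv_natCast', pderiv_C, pderiv_one, map_zero, map_one, map_natCast,
      eval_X, eval_C, eval_pow, eval_mul, eval_add, eval_sub, eval_ofNat, Pi.single_apply,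
      show (3:Fin 4) ≠ 0 by decide, show (3:Fin 4) ≠ 1 by decide, show (3:Fin 4) ≠ 2 by decide,
      show (2:Fin 4) ≠ 0 by decide, show (2:Fin 4) ≠ 1 by decide, show (2:Fin 4) ≠ 3 by decide,
      show (1:Fin 4) ≠ 0 by decide, show (1:Fin 4) ≠ 2 by decide, show (1:Fin 4) ≠ 3 by decide,
      show (0:Fin 4) ≠ 1 by decide, show (0:Fin 4) ≠ 2 by decide, show (0:Fin 4) ≠ 3 by decide,
      if_true, if_false, ite_true, ite_false, reduceIte]
    push_cast
    ring
  have h13 : eval p (pderiv 1 (pderiv 3 Q)) = 6*(p 1)^2*(p 2)*(p 3) + 2*(p 0)^3*(p 3) := by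
    simp only [Q, map_add, map_sub, map_mul, map_pow, pderiv_mul, pderiv_pow, pderiv_X,
      pderiv_five, pderiv_natCast', pderiv_C, pderiv_one, map_zero, map_one, map_natCast,
      eval_X, eval_C, eval_pow, eval_mul, eval_add, eval_sub, eval_ofNat, Pi.single_apply,
      show (3:Fin 4) ≠ 0 by decide, show (3:Fin 4) ≠ 1 by decide, show (3:Fin 4) ≠ 2 by decide,
      show (2:Fin 4) ≠ 0 by decide, show (2:Fin 4) ≠ 1 by decide, show (2:Fin 4) ≠ 3 by decide,
      show (1:Fin 4) ≠ 0 by decide, show (1:Fin 4) ≠ 2 by decide, show (1:Fin 4) ≠ 3 by decide,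
      show (0:Fin 4) ≠ 1 by decide, show (0:Fin 4) ≠ 2 by decide, show (0:Fin 4) ≠ 3 by decide,
      if_true, if_false, ite_true, ite_false, reduceIte]
    push_cast
    ring
  have h20 : eval p (pderiv 2 (pderiv 0 Q)) = 3*(p 2)^2*(p 3)^2 - 20*(p 0)*(p 1)^2*(p 2) + 5*(p 0)^4 := by
    simp only [Q, map_add, map_sub, map_mul, map_pow, pderiv_mul, pderiv_pow, pderiv_X,
      pderiv_five, pderiv_natCast', pderiv_C, pderiv_one, map_zero, map_one, map_natCast,
      eval_X, eval_C, eval_pow, eval_mul, eval_add, eval_sub, eval_ofNat, Pi.single_apply,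
      show (3:Fin 4) ≠ 0 by decide, show (3:Fin 4) ≠ 1 by decide, show (3:Fin 4) ≠ 2 by decide,
      show (2:Fin 4) ≠ 0 by decide, show (2:Fin 4) ≠ 1 by decide, show (2:Fin 4) ≠ 3 by decide,
      show (1:Fin 4) ≠ 0 by decide, show (1:Fin 4) ≠ 2 by decide, show (1:Fin 4) ≠ 3 by decide,
      show (0:Fin 4) ≠ 1 by decide, show (0:Fin 4) ≠ 2 by decide, show (0:Fin 4) ≠ 3 by decide,
      if_true, if_false, ite_true, ite_false, reduceIte]
    push_cast
    ring
  have h21 : eval p (pderiv 2 (pderiv 1 Q)) = 5*(p 2)^4 + 3*(p 1)^2*(p 3)^2 - 20*(p 0)^2*(p 1)*(p 2) := by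
    simp only [Q, map_add, map_sub, map_mul, map_pow, pderiv_mul, pderiv_pow, pderiv_X,
      pderiv_five, pderiv_natCast', pderiv_C, pderiv_one, map_zero, map_one, map_natCast,
      eval_X, eval_C, eval_pow, eval_mul, eval_add, eval_sub, eval_ofNat, Pi.single_apply,
      show (3:Fin 4) ≠ 0 by decide, show (3:Fin 4) ≠ 1 by decide, show (3:Fin 4) ≠ 2 by decide,
      show (2:Fin 4) ≠ 0 by decide, show (2:Fin 4) ≠ 1 by decide, show (2:Fin 4) ≠ 3 by decide,
      show (1:Fin 4) ≠ 0 by decide, show (1:Fin 4) ≠ 2 by decide, show (1:Fin 4) ≠ 3 by decide,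
      show (0:Fin 4) ≠ 1 by decide, show (0:Fin 4) ≠ 2 by decide, show (0:Fin 4) ≠ 3 by decide,
      if_true, if_false, ite_true, ite_false, reduceIte]
    push_cast
    ring
  have h22 : eval p (pderiv 2 (pderiv 2 Q)) = 20*(p 1)*(p 2)^3 + 6*(p 0)*(p 2)*(p 3)^2 - 10*(p 0)^2*(p 1)^2 := by
    simp only [Q, map_add, map_sub, map_mul, map_pow, pderiv_mul, pderiv_pow, pderiv_X,
      pderiv_five, pderiv_natCast', pderiv_C, pderiv_one, map_zero, map_one, map_natCast,
      eval_X, eval_C, eval_pow, eval_mul, eval_add, eval_sub, eval_ofNat, Pi.single_apply,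
      show (3:Fin 4) ≠ 0 by decide, show (3:Fin 4) ≠ 1 by decide, show (3:Fin 4) ≠ 2 by decide,
      show (2:Fin 4) ≠ 0 by decide, show (2:Fin 4) ≠ 1 by decide, show (2:Fin 4) ≠ 3 by decide,
      show (1:Fin 4) ≠ 0 by decide, show (1:Fin 4) ≠ 2 by decide, show (1:Fin 4) ≠ 3 by decide,
      show (0:Fin 4) ≠ 1 by decide, show (0:Fin 4) ≠ 2 by decide, show (0:Fin 4) ≠ 3 by decide,
      if_true, if_false, ite_true, ite_false, reduceIte]
    push_cast
    ring
  have h23 : eval p (pderiv 2 (pderiv 3 Q)) = 2*(p 1)^3*(p 3) + 6*(p 0)*(p 2)^2*(p 3) := by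
    simp only [Q, map_add, map_sub, map_mul, map_pow, pderiv_mul, pderiv_pow, pderiv_X,
      pderiv_five, pderiv_natCast', pderiv_C, pderiv_one, map_zero, map_one, map_natCast,
      eval_X, eval_C, eval_pow, eval_mul, eval_add, eval_sub, eval_ofNat, Pi.single_apply,
      show (3:Fin 4) ≠ 0 by decide, show (3:Fin 4) ≠ 1 by decide, show (3:Fin 4) ≠ 2 by decide,
      show (2:Fin 4) ≠ 0 by decide, show (2:Fin 4) ≠ 1 by decide, show (2:Fin 4) ≠ 3 by decide,
      show (1:Fin 4) ≠ 0 by decide, show (1:Fin 4) ≠ 2 by decide, show (1:Fin 4) ≠ 3 by decide,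
      show (0:Fin 4) ≠ 1 by decide, show (0:Fin 4) ≠ 2 by decide, show (0:Fin 4) ≠ 3 by decide,
      if_true, if_false, ite_true, ite_false, reduceIte]
    push_cast
    ring
  have h30 : eval p (pderiv 3 (pderiv 0 Q)) = 2*(p 2)^3*(p 3) + 6*(p 0)^2*(p 1)*(p 3) := by
    simp only [Q, map_add, map_sub, map_mul, map_pow, pderiv_mul, pderiv_pow, pderiv_X,
      pderiv_five, pderiv_natCast', pderiv_C, pderiv_one, map_zero, map_one, map_natCast,
      eval_X, eval_C, eval_pow, eval_mul, eval_add, eval_sub, eval_ofNat, Pi.single_apply,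
      show (3:Fin 4) ≠ 0 by decide, show (3:Fin 4) ≠ 1 by decide, show (3:Fin 4) ≠ 2 by decide,
      show (2:Fin 4) ≠ 0 by decide, show (2:Fin 4) ≠ 1 by decide, show (2:Fin 4) ≠ 3 by decide,
      show (1:Fin 4) ≠ 0 by decide, show (1:Fin 4) ≠ 2 by decide, show (1:Fin 4) ≠ 3 by decide,
      show (0:Fin 4) ≠ 1 by decide, show (0:Fin 4) ≠ 2 by decide, show (0:Fin 4) ≠ 3 by decide,
      if_true, if_false, ite_true, ite_false, reduceIte]
    push_cast
    ring
  have h31 : eval p (pderiv 3 (pderiv 1 Q)) = 6*(p 1)^2*(p 2)*(p 3) + 2*(p 0)^3*(p 3) := by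
    simp only [Q, map_add, map_sub, map_mul, map_pow, pderiv_mul, pderiv_pow, pderiv_X,
      pderiv_five, pderiv_natCast', pderiv_C, pderiv_one, map_zero, map_one, map_natCast,
      eval_X, eval_C, eval_pow, eval_mul, eval_add, eval_sub, eval_ofNat, Pi.single_apply,
      show (3:Fin 4) ≠ 0 by decide, show (3:Fin 4) ≠ 1 by decide, show (3:Fin 4) ≠ 2 by decide,
      show (2:Fin 4) ≠ 0 by decide, show (2:Fin 4) ≠ 1 by decide, show (2:Fin 4) ≠ 3 by decide,
      show (1:Fin 4) ≠ 0 by decide, show (1:Fin 4) ≠ 2 by decide, show (1:Fin 4) ≠ 3 by decide,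
      show (0:Fin 4) ≠ 1 by decide, show (0:Fin 4) ≠ 2 by decide, show (0:Fin 4) ≠ 3 by decide,
      if_true, if_false, ite_true, ite_false, reduceIte]
    push_cast
    ring
  have h32 : eval p (pderiv 3 (pderiv 2 Q)) = 2*(p 1)^3*(p 3) + 6*(p 0)*(p 2)^2*(p 3) := by
    simp only [Q, map_add, map_sub, map_mul, map_pow, pderiv_mul, pderiv_pow, pderiv_X,
      pderiv_five, pderiv_natCast', pderiv_C, pderiv_one, map_zero, map_one, map_natCast,
      eval_X, eval_C, eval_pow, eval_mul, eval_add, eval_sub, eval_ofNat, Pi.single_apply,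
      show (3:Fin 4) ≠ 0 by decide, show (3:Fin 4) ≠ 1 by decide, show (3:Fin 4) ≠ 2 by decide,
      show (2:Fin 4) ≠ 0 by decide, show (2:Fin 4) ≠ 1 by decide, show (2:Fin 4) ≠ 3 by decide,
      show (1:Fin 4) ≠ 0 by decide, show (1:Fin 4) ≠ 2 by decide, show (1:Fin 4) ≠ 3 by decide,
      show (0:Fin 4) ≠ 1 by decide, show (0:Fin 4) ≠ 2 by decide, show (0:Fin 4) ≠ 3 by decide,
      if_true, if_false, ite_true, ite_false, reduceIte]
    push_cast
    ring
  have h33 : eval p (pderiv 3 (pderiv 3 Q)) = -30*(p 3)^4 + 2*(p 1)^3*(p 2) + 2*(p 0)*(p 2)^3 + 2*(p 0)^3*(p 1) := by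
    simp only [Q, map_add, map_sub, map_mul, map_pow, pderiv_mul, pderiv_pow, pderiv_X,
      pderiv_five, pderiv_natCast', pderiv_C, pderiv_one, map_zero, map_one, map_natCast,
      eval_X, eval_C, eval_pow, eval_mul, eval_add, eval_sub, eval_ofNat, Pi.single_apply,
      show (3:Fin 4) ≠ 0 by decide, show (3:Fin 4) ≠ 1 by decide, show (3:Fin 4) ≠ 2 by decide,
      show (2:Fin 4) ≠ 0 by decide, show (2:Fin 4) ≠ 1 by decide, show (2:Fin 4) ≠ 3 by decide,
      show (1:Fin 4) ≠ 0 by decide, show (1:Fin 4) ≠ 2 by decide, show (1:Fin 4) ≠ 3 by decide,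
      show (0:Fin 4) ≠ 1 by decide, show (0:Fin 4) ≠ 2 by decide, show (0:Fin 4) ≠ 3 by decide,
      if_true, if_false, ite_true, ite_false, reduceIte]
    push_cast
    ring
  have h0 : (p 2)^3*(p 3)^2 + (p 1)^5 - 10*(p 0)*(p 1)^2*(p 2)^2 + 3*(p 0)^2*(p 1)*(p 3)^2 + 5*(p 0)^4*(p 2) = 0 := by rw [← e0]; exact hsing 0
  have h1 : (p 2)^5 + 3*(p 1)^2*(p 2)*(p 3)^2 + 5*(p 0)*(p 1)^4 - 10*(p 0)^2*(p 1)*(p 2)^2 + (p 0)^3*(p 3)^2 = 0 := by rw [← e1]; exact hsing 1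
  have h2 : 5*(p 1)*(p 2)^4 + (p 1)^3*(p 3)^2 + 3*(p 0)*(p 2)^2*(p 3)^2 - 10*(p 0)^2*(p 1)^2*(p 2) + (p 0)^5 = 0 := by rw [← e2]; exact hsing 2
  have h3 : -6*(p 3)^5 + 2*(p 1)^3*(p 2)*(p 3) + 2*(p 0)*(p 2)^3*(p 3) + 2*(p 0)^3*(p 1)*(p 3) = 0 := by rw [← e3]; exact hsing 3
  set M : Matrix (Fin 4) (Fin 4) ℂ :=
    Matrix.of fun i j : Fin 4 => eval p (pderiv i (pderiv j Q)) with hM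
  have hker : M.mulVec p = 0 := by
    funext i
    fin_cases i
    · show (Finset.univ.sum fun j => M 0 j * p j) = 0
      simp only [Fin.sum_univ_four, hM, Matrix.of_apply, h00, h01, h02, h03]
      linear_combination 5 * h0
    · show (Finset.univ.sum fun j => M 1 j * p j) = 0
      simp only [Fin.sum_univ_four, hM, Matrix.of_apply, h10, h11, h12, h13]
      linear_combination 5 * h1
    · show (Finset.univ.sum fun j => M 2 j * p j) = 0
      simp only [Fin.sum_univ_four, hM, Matrix.of_apply, h20, h21, h22, h23]
      linear_combination 5 * h2
    · show (Finset.univ.sum fun j => M 3 j * p j) = 0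
      simp only [Fin.sum_univ_four, hM, Matrix.of_apply, h30, h31, h32, h33]
      linear_combination 5 * h3
  have hle : M.rank ≤ 3 := rank_le_three_of_ker M p hp hker
  have hge : 3 ≤ M.rank := by
    by_contra hlt
    push_neg at hlt
    have hminor : (M.submatrix (![0,1,2] : Fin 3 → Fin 4) ![0,1,2]).det = 0 := by
      by_contra hd
      exact absurd (three_le_rank_of_minor M _ _ hd) (by omega)
    have hdet : (M.submatrix (![0,1,2] : Fin 3 → Fin 4) ![0,1,2]).det
        = -54*(p 1)*(p 2)^5*(p 3)^6 + 250*(p 1)^2*(p 2)^10 - 750*(p 1)^4*(p 2)^6*(p 3)^2 + 180*(p 1)^6*(p 2)^2*(p 3)^4 - 500*(p 1)^9*(p 2)^3 - 750*(p 0)*(p 1)*(p 2)^8*(p 3)^2 + 360*(p 0)*(p 1)^3*(p 2)^4*(p 3)^4 - 54*(p 0)*(p 1)^5*(p 3)^6 - 1000*(p 0)*(p 1)^6*(p 2)^5 - 750*(p 0)*(p 1)^8*(p 2)*(p 3)^2 + 180*(p 0)^2*(p 2)^6*(p 3)^4 + 270*(p 0)^2*(p 1)^2*(p 2)^2*(p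 3)^6 - 4000*(p 0)^2*(p 1)^3*(p 2)^7 + 3000*(p 0)^2*(p 1)^5*(p 2)^3*(p 3)^2 + 250*(p 0)^2*(p 1)^10 - 500*(p 0)^3*(p 2)^9 + 3000*(p 0)^3*(p 1)^2*(p 2)^5*(p 3)^2 + 360*(p 0)^3*(p 1)^4*(p 2)*(p 3)^4 - 4000*(p 0)^3*(p 1)^7*(p 2)^2 + 360*(p 0)^4*(p 1)*(p 2)^3*(p 3)^4 + 3250*(p 0)^4*(p 1)^4*(p 2)^4 - 750*(p 0)^4*(p 1)^6*(p 3)^2 - 54*(p 0)^5*(p 2)*(p 3)^6 - 1000*(p 0)^5*(p 1)*(p 2)^6 + 3000*(p 0)^5*(p 1)^3*(p 2)^2*(p 3)^2 - 750*(p 0)^6*(p 2)^4*(p 3)^2 + 180*(p 0)^6*(p 1)^2*(p 3)^4 - 1000*(p 0)^6*(p 1)^5*(p 2) - 4000*(p 0)^7*(p 1)^2*(p 2)^3 - 750*(p 0)^8*(p 1)*(p 2)*(p 3)^2 - 500*(p 0)^9*(p 1)^3 + 250*(p 0)^10*(p 2)^2 := by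
      rw [Matrix.det_fin_three]
      simp only [Matrix.submatrix_apply, hM, Matrix.of_apply, Matrix.cons_val', Matrix.cons_val_zero,
        Matrix.cons_val_one, Matrix.head_cons, Matrix.cons_val_two, Matrix.tail_cons,
        h00, h01, h02, h10, h11, h12, h20, h21, h22]
      ring
    rw [hdet] at hminor
    have hz0 : p 0 = 0 := by
      have hpow : (p 0) ^ 19 = 0 := by
        linear_combination ((-79/4802)*(p 0)^2*(p 1)^2*(p 2)*(p 3)^2 + (-8483/307328)*(p 0)^3*(p 1)^4 + (1955/76832)*(p 0)^4*(p 1)*(p 2)^2 + (405/21952)*(p 0)^5*(p 3)^2) * hminor - ((403974298103/10976)*(p 1)^5*(p 2)^7*(p 3)^2 + (-7821/49)*(p 0)^2*(p 2)^2*(p 3)^10 + (39500/2401)*(p 0)^2*(p 1)*(p 2)^7*(p 3)^4 + (-7110/2401)*(p 0)^2*(p 1)^3*(p 2)^3*(p 3)^6 + (-2827819928721/19208)*(p 0)^2*(p 1)^6*(p 2)^4*(p 3)^2 + (-7543469/153664)*(p 0)^3*(p 2)^5*(p 3)^6 + (-1060375/153664)*(p 0)^3*(p 1)*(p 2)^10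 + (95511/4802)*(p 0)^3*(p 1)^2*(p 2)*(p 3)^8 + (-2167589584011/12005)*(p 0)^3*(p 1)^3*(p 2)^6*(p 3)^2 + (80895/10976)*(p 0)^3*(p 1)^5*(p 2)^2*(p 3)^4 + (1060375/76832)*(p 0)^3*(p 1)^8*(p 2)^3 + (14143375/10976)*(p 0)^4*(p 2)^8*(p 3)^2 + (-26455465/153664)*(p 0)^4*(p 1)^2*(p 2)^4*(p 3)^4 + (74846347/307328)*(p 0)^4*(p 1)^4*(p 3)^6 + (70695537409025/230496)*(p 0)^4*(p 1)^5*(p 2)^5 + (2549125/153664)*(p 0)^4*(p 1)^7*(p 2)*(p 3)^2 + (26987036701/307328)*(p 0)^5*(p 1)*(p 2)^2*(p 3)^6 + (148063625/76832)*(p 0)^5*(p 1)^2*(p 2)^7 + (1063911003018471/768320)*(p 0)^5*(p 1)^4*(p 2)^3*(p 3)^2 + (-1060375/153664)*(p 0)^5*(p 1)^9 + (-89887375579/768320)*(p 0)^6*(p 3)^8 + (-34918671360933/384160)*(p 0)^6*(p 1)*(p 2)^5*(p 3)^2 + (5495887165/38416)*(p 0)^6*(p 1)^3*(p 2)*(p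 3)^4 + (3669875/76832)*(p 0)^6*(p 1)^6*(p 2)^2 + (126828141425/38416)*(p 0)^7*(p 2)^3*(p 3)^4 + (-31369144003045/32928)*(p 0)^7*(p 1)^3*(p 2)^4 + (883875/19208)*(p 0)^7*(p 1)^5*(p 3)^2 + (-113843196625/153664)*(p 0)^8*(p 2)^6 + (54290581930139/576240)*(p 0)^8*(p 1)^2*(p 2)^2*(p 3)^2 + (-94447206866339/4609920)*(p 0)^9*(p 1)*(p 3)^4 + (9543375/153664)*(p 0)^9*(p 1)^4*(p 2) + (-3947908786567/230496)*(p 0)^10*(p 1)*(p 2)^3 + (132998889817/384160)*(p 0)^11*(p 2)*(p 3)^2 + (759158131331/131712)*(p 0)^12*(p 1)^2) * h0 - ((-403974298103/10976)*(p 1)^5*(p 2)^5*(p 3)^4 + (403974298103/10976)*(p 0)*(p 1)^7*(p 2)^4*(p 3)^2 + (7821/49)*(p 0)^2*(p 3)^12 + (-39500/2401)*(p 0)^2*(p 1)*(p 2)^5*(p 3)^6 + (-2607/686)*(p 0)^2*(p 1)^3*(p 2)*(p 3)^8 + (-9875/2401)*(p 0)^2*(p 1)^4*(p 2)^6*(p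 3)^2 + (7543469/153664)*(p 0)^3*(p 2)^3*(p 3)^8 + (1060375/153664)*(p 0)^3*(p 1)*(p 2)^8*(p 3)^2 + (138725853351079/768320)*(p 0)^3*(p 1)^3*(p 2)^4*(p 3)^4 + (-2125379/43904)*(p 0)^3*(p 1)^5*(p 3)^6 + (-2019871490515/32928)*(p 0)^3*(p 1)^6*(p 2)^5 + (-14143375/10976)*(p 0)^4*(p 2)^6*(p 3)^4 + (4728397/307328)*(p 0)^4*(p 1)^2*(p 2)^2*(p 3)^6 + (-4813125/76832)*(p 0)^4*(p 1)^3*(p 2)^7 + (-44056433645977/109760)*(p 0)^4*(p 1)^5*(p 2)^3*(p 3)^2 + (184256153/38416)*(p 0)^5*(p 1)*(p 3)^8 + (1696770375/153664)*(p 0)^5*(p 1)^2*(p 2)^5*(p 3)^2 + (-4398590645/153664)*(p 0)^5*(p 1)^4*(p 2)*(p 3)^4 + (69840257283451/768320)*(p 0)^6*(p 1)*(p 2)^3*(p 3)^4 + (562907397798979/460992)*(p 0)^6*(p 1)^4*(p 2)^4 + (-2481455454361/768320)*(p 0)^7*(p 2)*(p 3)^6 + (478125/21952)*(p 0)^7*(p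 1)*(p 2)^6 + (-166972489051/144060)*(p 0)^7*(p 1)^3*(p 2)^2*(p 3)^2 + (112851742875/153664)*(p 0)^8*(p 2)^4*(p 3)^2 + (2276356943263/658560)*(p 0)^8*(p 1)^2*(p 3)^4 + (-143098756057825/230496)*(p 0)^9*(p 1)^2*(p 2)^3 + (602515174053/54880)*(p 0)^10*(p 1)*(p 2)*(p 3)^2 + (-5314094194817/4609920)*(p 0)^11*(p 1)^3 + (569215983125/153664)*(p 0)^12*(p 2)^2) * h1 - ((403974298103/5488)*(p 0)*(p 1)^6*(p 2)^5*(p 3)^2 + (7821/686)*(p 0)^2*(p 1)^2*(p 2)^2*(p 3)^8 + (-1211922894309/10976)*(p 0)^2*(p 1)^5*(p 2)^3*(p 3)^4 + (-6137463/15680)*(p 0)^3*(p 1)*(p 3)^10 + (2125379/219520)*(p 0)^3*(p 1)^4*(p 2)*(p 3)^6 + (403974298103/32928)*(p 0)^3*(p 1)^5*(p 2)^6 + (20781557/31360)*(p 0)^4*(p 1)*(p 2)^3*(p 3)^6 + (-2729730906289/6860)*(p 0)^4*(p 1)^4*(p 2)^4*(p 3)^2 + (-203845179/10976)*(p 0)^5*(p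 2)*(p 3)^8 + (47334698336301/109760)*(p 0)^5*(p 1)^3*(p 2)^2*(p 3)^4 + (403974298103/784)*(p 0)^5*(p 1)^6*(p 2)^3 + (-198258087/48020)*(p 0)^6*(p 2)^4*(p 3)^4 + (17708174447/192080)*(p 0)^6*(p 1)^2*(p 3)^6 + (-80414120475247/329280)*(p 0)^6*(p 1)^3*(p 2)^5 + (506240725297997/2304960)*(p 0)^7*(p 1)^2*(p 2)^3*(p 3)^2 + (422727057349003/4609920)*(p 0)^8*(p 1)*(p 2)*(p 3)^4 + (-408621328653/1568)*(p 0)^8*(p 1)^4*(p 2)^2 + (72137209945/588)*(p 0)^9*(p 1)*(p 2)^4 + (2462331795089/768320)*(p 0)^9*(p 1)^3*(p 3)^2 + (-835212593017/153664)*(p 0)^10*(p 2)^2*(p 3)^2 + (-3795791973775/131712)*(p 0)^11*(p 1)^2*(p 2) - (p 0)^14) * h2 - ((-403974298103/21952)*(p 1)^7*(p 2)^6*(p 3) + (7821/98)*(p 0)^2*(p 1)^2*(p 2)*(p 3)^9 + (-403974298103/21952)*(p 0)^2*(p 1)^8*(p 2)^3*(p 3) + (2125379/31360)*(p 0)^3*(p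 1)^4*(p 3)^7 + (19056497469091/658560)*(p 0)^3*(p 1)^5*(p 2)^5*(p 3) + (-16982583/31360)*(p 0)^4*(p 1)*(p 2)^2*(p 3)^7 + (2607/98)*(p 0)^5*(p 3)^9 + (15778232778767/219520)*(p 0)^5*(p 1)^6*(p 2)^2*(p 3) + (-198258087/6860)*(p 0)^6*(p 2)^3*(p 3)^5 + (191715927129589/658560)*(p 0)^6*(p 1)^3*(p 2)^4*(p 3) + (-215196107537/164640)*(p 0)^7*(p 1)^2*(p 2)^2*(p 3)^3 + (-9508459343/164640)*(p 0)^8*(p 1)*(p 3)^5 + (1560145435981/109760)*(p 0)^8*(p 1)^4*(p 2)*(p 3) + (42584502210037/658560)*(p 0)^9*(p 1)*(p 2)^3*(p 3) + (-17530718627/27440)*(p 0)^10*(p 2)*(p 3)^3 + (-32496916283/3360)*(p 0)^11*(p 1)^2*(p 3)) * h3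
      exact pow_eq_zero_iff (by norm_num) |>.mp hpow
    have hz1 : p 1 = 0 := by
      have hpow : (p 1) ^ 18 = 0 := by
        linear_combination ((-8483/307328)*(p 1)^2*(p 2)^4 + (405/21952)*(p 1)^4*(p 3)^2 + (-79/4802)*(p 0)*(p 1)*(p 2)^2*(p 3)^2 + (1955/76832)*(p 0)^2*(p 1)^3*(p 2)) * hminor - ((3950/2401)*(p 1)*(p 2)^10*(p 3)^2 + (-368919/78400)*(p 1)^2*(p 2)*(p 3)^10 + (-7613601/153664)*(p 1)^3*(p 2)^6*(p 3)^4 + (4293501209/3841600)*(p 1)^5*(p 2)^2*(p 3)^6 + (105023875/153664)*(p 1)^6*(p 2)^7 + (106828269509/9604000)*(p 1)^8*(p 2)^3*(p 3)^2 - (p 1)^13 + (-55003601/7683200)*(p 0)*(p 1)^2*(p 2)^4*(p 3)^6 + (293675/9604)*(p 0)*(p 1)^3*(p 2)^9 + (-10673653/109760)*(p 0)*(p 1)^4*(p 3)^8 + (-2789795/9604)*(p 0)*(p 1)^5*(p 2)^5*(p 3)^2 + (-1894718655491/115248000)*(p 0)*(p 1)^7*(p 2)*(p 3)^4 + (8638694055/307328)*(p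 0)*(p 1)^10*(p 2)^2 + (711/686)*(p 0)^2*(p 1)*(p 2)^2*(p 3)^8 + (380045/76832)*(p 0)^2*(p 1)^2*(p 2)^7*(p 3)^2 + (13940524937/960400)*(p 0)^2*(p 1)^4*(p 2)^3*(p 3)^4 + (-37156584607/768320)*(p 0)^2*(p 1)^7*(p 2)^4 + (-5519499073/960400)*(p 0)^2*(p 1)^9*(p 3)^2 + (6320/2401)*(p 0)^3*(p 1)*(p 2)^5*(p 3)^4 + (-69164201/7683200)*(p 0)^3*(p 1)^3*(p 2)*(p 3)^6 + (1093525/76832)*(p 0)^3*(p 1)^4*(p 2)^6 + (349094539247/11524800)*(p 0)^3*(p 1)^6*(p 2)^2*(p 3)^2 + (-22332125931/2744000)*(p 0)^4*(p 1)^3*(p 2)^4*(p 3)^2 + (20289892197/4802000)*(p 0)^4*(p 1)^5*(p 3)^4 + (22533314467/2304960)*(p 0)^4*(p 1)^8*(p 2) + (3415854231/1372000)*(p 0)^5*(p 1)^2*(p 2)^2*(p 3)^4 + (-162702261/15680)*(p 0)^5*(p 1)^5*(p 2)^3 + (-212075/153664)*(p 0)^6*(p 1)^2*(p 2)^5 +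 (-27323028181/9604000)*(p 0)^6*(p 1)^4*(p 2)*(p 3)^2 + (-1137828077/686000)*(p 0)^7*(p 1)*(p 2)^3*(p 3)^2 + (-1144985419/2881200)*(p 0)^7*(p 1)^6 + (-2638953013/11524800)*(p 0)^8*(p 1)^3*(p 2)^2) * h0 - ((-3950/2401)*(p 1)*(p 2)^8*(p 3)^4 + (17226073/307328)*(p 1)^3*(p 2)^4*(p 3)^6 + (-1060375/153664)*(p 1)^4*(p 2)^9 + (-724414421/548800)*(p 1)^5*(p 3)^8 + (-98205675/153664)*(p 1)^6*(p 2)^5*(p 3)^2 + (670379761267/115248000)*(p 1)^8*(p 2)*(p 3)^4 + (-1728353467/307328)*(p 1)^11*(p 2)^2 + (1073217/109760)*(p 0)*(p 1)^2*(p 2)^2*(p 3)^8 + (378325/153664)*(p 0)*(p 1)^3*(p 2)^7*(p 3)^2 + (-33127455/153664)*(p 0)*(p 1)^5*(p 2)^3*(p 3)^4 + (1055083325/153664)*(p 0)*(p 1)^8*(p 2)^4 + (-3380568711/384160)*(p 0)*(p 1)^10*(p 3)^2 + (-237/245)*(p 0)^2*(p 1)*(p 3)^10 + (-52035/2744)*(p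 0)^2*(p 1)^2*(p 2)^5*(p 3)^4 + (790596543/1536640)*(p 0)^2*(p 1)^4*(p 2)*(p 3)^6 + (27163875/76832)*(p 0)^2*(p 1)^5*(p 2)^6 + (-1224491754431/14406000)*(p 0)^2*(p 1)^7*(p 2)^2*(p 3)^2 + (-9480/2401)*(p 0)^3*(p 1)*(p 2)^3*(p 3)^6 + (1060375/76832)*(p 0)^3*(p 1)^2*(p 2)^8 + (73872142489/3841600)*(p 0)^3*(p 1)^4*(p 2)^4*(p 3)^2 + (21384305107/9604000)*(p 0)^3*(p 1)^6*(p 3)^4 + (224861385037/2304960)*(p 0)^3*(p 1)^9*(p 2) + (2653615513/1372000)*(p 0)^4*(p 1)^3*(p 2)^2*(p 3)^4 + (-2653615513/153664)*(p 0)^4*(p 1)^6*(p 2)^3 + (51611682449/4802000)*(p 0)^5*(p 1)^5*(p 2)*(p 3)^2 + (-7960846539/9604000)*(p 0)^6*(p 1)^2*(p 2)^3*(p 3)^2 + (-1137654169/115248)*(p 0)^6*(p 1)^7 + (-2653615513/460992)*(p 0)^7*(p 1)^4*(p 2)^2 + (-3412962507/2401000)*(p 0)^8*(p 1)^3*(p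 3)^2 + (-7960846539/9604000)*(p 0)^9*(p 2)^2*(p 3)^2) * h1 - ((237/245)*(p 1)*(p 3)^12 + (-3427/219520)*(p 1)^2*(p 2)^5*(p 3)^6 + (45531/6860)*(p 1)^4*(p 2)*(p 3)^8 + (-13822506527/4609920)*(p 1)^7*(p 2)^2*(p 3)^4 + (1522547217/1536640)*(p 1)^10*(p 2)^3 + (-237/686)*(p 0)*(p 1)*(p 2)^3*(p 3)^8 + (480095703/274400)*(p 0)*(p 1)^6*(p 3)^6 + (73906923189/4802000)*(p 0)*(p 1)^9*(p 2)*(p 3)^2 + (6978743/219520)*(p 0)^2*(p 1)^3*(p 2)^2*(p 3)^6 + (362440365019/14406000)*(p 0)^2*(p 1)^6*(p 2)^3*(p 3)^2 + (2986494928/60025)*(p 0)^2*(p 1)^11 + (-2653615513/548800)*(p 0)^3*(p 1)^3*(p 2)^5*(p 3)^2 + (-23384027543/4802000)*(p 0)^3*(p 1)^5*(p 2)*(p 3)^4 + (-1185207971497/11524800)*(p 0)^3*(p 1)^8*(p 2)^2 + (7960846539/1920800)*(p 0)^4*(p 1)^2*(p 2)^3*(p 3)^4 + (2653615513/768320)*(p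 0)^4*(p 1)^5*(p 2)^4 + (59150376163/4802000)*(p 0)^4*(p 1)^7*(p 3)^2 + (5534215331/960400)*(p 0)^5*(p 1)^4*(p 2)^2*(p 3)^2 + (-7960846539/9604000)*(p 0)^6*(p 1)*(p 2)^4*(p 3)^2 + (3412962507/2401000)*(p 0)^6*(p 1)^3*(p 3)^4 + (1137654169/576240)*(p 0)^6*(p 1)^6*(p 2) + (7960846539/9604000)*(p 0)^7*(p 2)^2*(p 3)^4 + (2653615513/2304960)*(p 0)^7*(p 1)^3*(p 2)^3) * h2 - ((3427/156800)*(p 1)^2*(p 2)^4*(p 3)^7 + (79/490)*(p 1)^4*(p 3)^9 + (-19392913/29400)*(p 1)^7*(p 2)*(p 3)^5 + (22804979083/9604000)*(p 1)^10*(p 2)^2*(p 3) + (237/490)*(p 0)*(p 1)*(p 2)^2*(p 3)^9 + (-23659412229/4802000)*(p 0)*(p 1)^7*(p 2)^4*(p 3) + (-9233681/11200)*(p 0)*(p 1)^9*(p 3)^3 + (-697559/156800)*(p 0)^2*(p 1)^3*(p 2)*(p 3)^7 + (2653615513/1097600)*(p 0)^2*(p 1)^4*(p 2)^6*(p 3)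 + (953275559/235200)*(p 0)^2*(p 1)^6*(p 2)^2*(p 3)^3 + (-2639871/9800)*(p 0)^3*(p 1)^5*(p 3)^5 + (-70217300971/7203000)*(p 0)^3*(p 1)^8*(p 2)*(p 3) + (272388171661/38416000)*(p 0)^4*(p 1)^5*(p 2)^3*(p 3) + (23882539617/9604000)*(p 0)^5*(p 1)^2*(p 2)^5*(p 3) + (42093204253/14406000)*(p 0)^6*(p 1)^6*(p 3) + (3975409259/1646400)*(p 0)^7*(p 1)^3*(p 2)^2*(p 3) + (7960846539/19208000)*(p 0)^8*(p 2)^4*(p 3)) * h3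
      exact pow_eq_zero_iff (by norm_num) |>.mp hpow
    have hz2 : p 2 = 0 := by
      have hpow : (p 2) ^ 19 = 0 := by
        linear_combination ((405/21952)*(p 2)^5*(p 3)^2 + (1955/76832)*(p 0)*(p 1)^2*(p 2)^4 + (-79/4802)*(p 0)^2*(p 1)*(p 2)^2*(p 3)^2 + (-8483/307328)*(p 0)^4*(p 2)^3) * hminor - ((78447/343)*(p 2)^2*(p 3)^12 + (-9322333883/6860)*(p 1)*(p 2)^7*(p 3)^6 + (-50625/5488)*(p 1)^4*(p 2)^8*(p 3)^2 + (-928765025/153664)*(p 0)*(p 2)^5*(p 3)^8 + (1708183370937/768320)*(p 0)*(p 1)*(p 2)^10*(p 3)^2 + (61907770884233/2304960)*(p 0)*(p 1)^3*(p 2)^6*(p 3)^4 + (-244375/19208)*(p 0)*(p 1)^6*(p 2)^7 + (1418985345867/1536640)*(p 0)^2*(p 2)^8*(p 3)^4 + (1445383377/307328)*(p 0)^2*(p 1)^2*(p 2)^4*(p 3)^6 + (-435795759275/2352)*(p 0)^2*(p 1)^3*(p 2)^9 + (-479875/76832)*(p 0)^2*(p 1)^5*(p 2)^5*(p 3)^2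 + (-243988628591/658560)*(p 0)^3*(p 2)^11 + (-26149/4802)*(p 0)^3*(p 1)*(p 2)^2*(p 3)^8 + (25594644557/72030)*(p 0)^3*(p 1)^2*(p 2)^7*(p 3)^2 + (5978277774667/109760)*(p 0)^3*(p 1)^4*(p 2)^3*(p 3)^4 + (244375/38416)*(p 0)^3*(p 1)^7*(p 2)^4 + (1090210005/153664)*(p 0)^4*(p 1)*(p 2)^5*(p 3)^4 + (169977989898319/460992)*(p 0)^4*(p 1)^4*(p 2)^6 + (-9875/2401)*(p 0)^4*(p 1)^6*(p 2)^2*(p 3)^2 + (-465554573/921984)*(p 0)^5*(p 2)^3*(p 3)^6 + (-2679625/38416)*(p 0)^5*(p 1)*(p 2)^8 + (-3324998424193/27440)*(p 0)^5*(p 1)^3*(p 2)^4*(p 3)^2 + (-106775055157/9604)*(p 0)^5*(p 1)^5*(p 3)^4 + (-1374228875/21952)*(p 0)^6*(p 2)^6*(p 3)^2 + (59250/2401)*(p 0)^6*(p 1)^2*(p 2)^2*(p 3)^4 + (-8542007593685/460992)*(p 0)^6*(p 1)^5*(p 2)^3 + (-1217625/76832)*(p 0)^7*(p 1)^2*(p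 2)^5 + (106775055157/9604)*(p 0)^7*(p 1)^4*(p 2)*(p 3)^2 + (354625/5488)*(p 0)^8*(p 1)*(p 2)^3*(p 3)^2 + (28795875/153664)*(p 0)^10*(p 2)^4) * h0 - (-(p 2)^14 + (13464056/2401)*(p 1)*(p 2)^5*(p 3)^8 + (-344966951207/153664)*(p 1)^2*(p 2)^10*(p 3)^2 + (2594355307/1152480)*(p 1)^4*(p 2)^6*(p 3)^4 + (-87455041/109760)*(p 0)*(p 2)^3*(p 3)^10 + (41153417919511/1536640)*(p 0)*(p 1)*(p 2)^8*(p 3)^4 + (-1446715737/1536640)*(p 0)*(p 1)^3*(p 2)^4*(p 3)^6 + (4270794921895/115248)*(p 0)*(p 1)^4*(p 2)^9 + (-43937287617/768320)*(p 0)^2*(p 2)^6*(p 3)^6 + (-8607887942275/921984)*(p 0)^2*(p 1)*(p 2)^11 + (78447/4802)*(p 0)^2*(p 1)^2*(p 2)^2*(p 3)^8 + (77576974380071/1152480)*(p 0)^2*(p 1)^3*(p 2)^7*(p 3)^2 + (11064883047/24010)*(p 0)^3*(p 2)^9*(p 3)^2 + (99917791590327/768320)*(p 0)^3*(p 1)^2*(p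 2)^5*(p 3)^4 + (-169978001131069/2304960)*(p 0)^3*(p 1)^5*(p 2)^6 + (38060159/4609920)*(p 0)^4*(p 1)*(p 2)^3*(p 3)^6 + (-121803300783/1568)*(p 0)^4*(p 1)^2*(p 2)^8 + (-6588419592707/54880)*(p 0)^4*(p 1)^4*(p 2)^4*(p 3)^2 + (-320325165471/9604)*(p 0)^5*(p 1)^3*(p 2)^2*(p 3)^4 + (106775055157/28812)*(p 0)^5*(p 1)^6*(p 2)^3 + (-72271443/153664)*(p 0)^6*(p 2)^4*(p 3)^4 + (106775055157/686)*(p 0)^6*(p 1)^3*(p 2)^5 + (106775055157/4802)*(p 0)^6*(p 1)^5*(p 2)*(p 3)^2 + (-2273769975/153664)*(p 0)^7*(p 2)^7 + (3950/2401)*(p 0)^10*(p 2)^2*(p 3)^2) * h1 - ((15134121869/192080)*(p 2)^6*(p 3)^8 + (344968120949/768320)*(p 1)*(p 2)^11*(p 3)^2 + (-78447/343)*(p 1)^2*(p 2)^2*(p 3)^10 + (304410375875/230496)*(p 1)^3*(p 2)^7*(p 3)^4 + (-1318520233909/219520)*(p 0)*(p 2)^9*(p 3)^4 + (-5342284861/307328)*(p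 0)*(p 1)^2*(p 2)^5*(p 3)^6 + (-427079361253/57624)*(p 0)*(p 1)^3*(p 2)^10 + (-20644578591351/768320)*(p 0)*(p 1)^5*(p 2)^6*(p 3)^2 + (1721575744487/921984)*(p 0)^2*(p 2)^12 + (218067559/153664)*(p 0)^2*(p 1)*(p 2)^3*(p 3)^8 + (31514816358533/1152480)*(p 0)^2*(p 1)^2*(p 2)^8*(p 3)^2 + (11533746615/76832)*(p 0)^3*(p 1)*(p 2)^6*(p 3)^4 + (-180910/2401)*(p 0)^3*(p 1)^3*(p 2)^2*(p 3)^6 + (-132361635000305/460992)*(p 0)^3*(p 1)^4*(p 2)^7 + (-41847934942669/768320)*(p 0)^3*(p 1)^6*(p 2)^3*(p 3)^2 + (2767326169/921984)*(p 0)^4*(p 2)^4*(p 3)^6 + (-392047625/2744)*(p 0)^4*(p 1)*(p 2)^9 + (321142435172381/768320)*(p 0)^4*(p 1)^3*(p 2)^5*(p 3)^2 + (25390870525/76832)*(p 0)^5*(p 2)^7*(p 3)^2 + (-25451185/76832)*(p 0)^5*(p 1)^2*(p 2)^3*(p 3)^4 + (2669376378925/28812)*(p 0)^5*(p 1)^5*(p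 2)^4 + (106775055157/9604)*(p 0)^5*(p 1)^7*(p 3)^2 + (-141539875/19208)*(p 0)^6*(p 1)^2*(p 2)^6 + (-106775055157/2401)*(p 0)^6*(p 1)^4*(p 2)^2*(p 3)^2 + (-8184875/9604)*(p 0)^7*(p 1)*(p 2)^4*(p 3)^2 + (-3950/2401)*(p 0)^8*(p 2)^2*(p 3)^4 + (1060375/76832)*(p 0)^8*(p 1)^3*(p 2)^3 + (-72519875/76832)*(p 0)^9*(p 2)^5) * h2 - ((26149/686)*(p 2)^5*(p 3)^9 + (-17550230813/109760)*(p 1)*(p 2)^10*(p 3)^3 + (2594355307/164640)*(p 1)^3*(p 2)^6*(p 3)^5 + (75005113/1960)*(p 0)*(p 2)^8*(p 3)^5 + (-196234881/219520)*(p 0)*(p 1)^2*(p 2)^4*(p 3)^7 + (91251859421899/4609920)*(p 0)*(p 1)^3*(p 2)^9*(p 3) + (-468575200487/164640)*(p 0)^2*(p 2)^11*(p 3) + (78447/686)*(p 0)^2*(p 1)*(p 2)^2*(p 3)^9 + (-278463945839/329280)*(p 0)^2*(p 1)^2*(p 2)^7*(p 3)^3 + (403535045487703/4609920)*(p 0)^3*(p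 1)^4*(p 2)^6*(p 3) + (38060159/658560)*(p 0)^4*(p 2)^3*(p 3)^7 + (31200430669/7840)*(p 0)^4*(p 1)*(p 2)^8*(p 3) + (40123760702407/4609920)*(p 0)^5*(p 1)^5*(p 2)^3*(p 3) + (33305930530109/1536640)*(p 0)^6*(p 1)^2*(p 2)^5*(p 3) + (-106775055157/19208)*(p 0)^7*(p 1)^6*(p 3) + (-106775055157/19208)*(p 0)^8*(p 1)^3*(p 2)^2*(p 3)) * h3
      exact pow_eq_zero_iff (by norm_num) |>.mp hpow
    have hz3 : p 3 = 0 := by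
      have hpow : (p 3) ^ 13 = 0 := by
        linear_combination ((-1/6272)*(p 3)) * hminor - ((12617425/6272)*(p 1)*(p 2)^2*(p 3)^5 + (-2650475/3136)*(p 1)^4*(p 2)^3*(p 3) + (-2903237/4704)*(p 0)*(p 3)^7 + (-1481825/6272)*(p 0)*(p 1)*(p 2)^5*(p 3) + (375/3136)*(p 0)*(p 1)^3*(p 2)*(p 3)^3 + (3937075/18816)*(p 0)^2*(p 2)^3*(p 3)^3 + (-125/3136)*(p 0)^2*(p 1)^5*(p 3) + (1081425/6272)*(p 0)^3*(p 1)^2*(p 2)^2*(p 3) + (125/784)*(p 0)^4*(p 1)*(p 3)^3 + (3625/3136)*(p 0)^6*(p 2)*(p 3)) * h0 - ((361/2688)*(p 1)*(p 3)^7 + (-5475125/6272)*(p 1)^2*(p 2)^5*(p 3) + (5954825/9408)*(p 0)*(p 1)*(p 2)^3*(p 3)^3 + (7737525/6272)*(p 0)^2*(p 2)*(p 3)^5 + (-182325/896)*(p 0)^2*(p 1)^3*(p 2)^2*(p 3) + (-295325/3136)*(p 0)^3*(p 2)^4*(p 3)) * h1 - ((34852327/18816)*(p 2)*(p 3)^7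 + (156425/896)*(p 1)*(p 2)^6*(p 3) + (-587275/6272)*(p 1)^3*(p 2)^2*(p 3)^3 + (-17604425/18816)*(p 0)*(p 2)^4*(p 3)^3 + (3866825/6272)*(p 0)*(p 1)^2*(p 3)^5 + (-5695625/6272)*(p 0)^2*(p 1)^2*(p 2)^3*(p 3) + (-1625/392)*(p 0)^3*(p 1)*(p 2)*(p 3)^3 + (125/1568)*(p 0)^4*(p 1)^3*(p 3) + (-9125/1568)*(p 0)^5*(p 2)^2*(p 3)) * h2 - ((1/6)*(p 3)^8 + (3366925/1792)*(p 1)*(p 2)^5*(p 3)^2 + (968505/3136)*(p 1)^3*(p 2)*(p 3)^4 + (378675/896)*(p 1)^6*(p 2)^2 + (632315/768)*(p 0)*(p 2)^3*(p 3)^4 + (-1051875/448)*(p 0)*(p 1)^3*(p 2)^4 + (42225/896)*(p 0)^2*(p 2)^6 + (-228925/1792)*(p 0)^2*(p 1)^2*(p 2)^2*(p 3)^2 + (-3870005/12544)*(p 0)^3*(p 1)*(p 3)^4) * h3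
      exact pow_eq_zero_iff (by norm_num) |>.mp hpow
    exact hp (funext fun i => by fin_cases i <;> assumption)
  omega
end

section
/- The singular locus of the sextic surface F defined by Q = 0 consists of exactly 56 points of ℙ³(ℂ): the set of points of the projectivization of ℂ⁴ represented by vectors p ∈ ℂ⁴ \ {0} with Q(p) = 0 and all four partial derivatives of Q vanishing at p has cardinality 56. -/
open MvPolynomial

theorem nss_lemma (a b c : ℂ)
    (hF1 : (5 : ℂ)*a^4*c + b^5 - (10 : ℂ)*a*b^2*c^2 = 0)
    (hF2 : (5 : ℂ)*a*b^4 + c^5 - (10 : ℂ)*a^2*b*c^2 = 0)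
    (hF3 : a^5 + (5 : ℂ)*b*c^4 - (10 : ℂ)*a^2*b^2*c = 0) :
    a = 0 ∧ b = 0 ∧ c = 0 := by
  have ha11 : a^11 = 0 := by linear_combination (((-625 : ℂ)/4116)*a*b^4*c) * hF1 + (((-1375 : ℂ)/1372)*a^2*b*c^3) * hF1 + (((9875 : ℂ)/4116)*a^4*b^2) * hF1 + (((125 : ℂ)/4116)*b^5*c) * hF2 + (((-75 : ℂ)/1372)*a*b^2*c^3) * hF2 + (((-1975 : ℂ)/4116)*a^3*b^3) * hF2 + (((-25 : ℂ)/4116)*b^4*c^2) * hF3 + (((15 : ℂ)/1372)*a*b*c^4) * hF3 + (((-8215 : ℂ)/4116)*a^3*b^2*c) * hF3 + ((1 : ℂ)*a^6) * hF3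
  have hb11 : b^11 = 0 := by linear_combination (((9875 : ℂ)/4116)*b^4*c^2) * hF2 + (((-625 : ℂ)/4116)*a*b*c^4) * hF2 + (((-1375 : ℂ)/1372)*a^3*b^2*c) * hF2 + (((-1975 : ℂ)/4116)*b^3*c^3) * hF3 + (((125 : ℂ)/4116)*a*c^5) * hF3 + (((-75 : ℂ)/1372)*a^3*b*c^2) * hF3 + ((1 : ℂ)*b^6) * hF1 + (((-8215 : ℂ)/4116)*a*b^3*c^2) * hF1 + (((-25 : ℂ)/4116)*a^2*c^4) * hF1 + (((15 : ℂ)/1372)*a^4*b*c) * hF1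
  have hc11 : c^11 = 0 := by linear_combination (((-1375 : ℂ)/1372)*a*b^3*c^2) * hF3 + (((9875 : ℂ)/4116)*a^2*c^4) * hF3 + (((-625 : ℂ)/4116)*a^4*b*c) * hF3 + (((-75 : ℂ)/1372)*a^2*b^3*c) * hF1 + (((-1975 : ℂ)/4116)*a^3*c^3) * hF1 + (((125 : ℂ)/4116)*a^5*b) * hF1 + ((1 : ℂ)*c^6) * hF2 + (((15 : ℂ)/1372)*a*b^4*c) * hF2 + (((-8215 : ℂ)/4116)*a^2*b*c^3) * hF2 + (((-25 : ℂ)/4116)*a^4*b^2) * hF2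
  refine ⟨by simpa using pow_eq_zero_iff (n := 11) (by norm_num) |>.mp ha11,
    by simpa using pow_eq_zero_iff (n := 11) (by norm_num) |>.mp hb11,
    by simpa using pow_eq_zero_iff (n := 11) (by norm_num) |>.mp hc11⟩

set_option maxHeartbeats 4000000 in
theorem chain_lemma (x y z : ℂ)
    (hG0 : (5 : ℂ)*x^4*z + y^5 - (10 : ℂ)*x*y^2*z^2 + (3 : ℂ)*x^2*y + z^3 = 0)
    (hG1 : (5 : ℂ)*x*y^4 + z^5 - (10 : ℂ)*x^2*y*z^2 + x^3 + (3 : ℂ)*y^2*z = 0)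
    (hG2 : x^5 + (5 : ℂ)*y*z^4 - (10 : ℂ)*x^2*y^2*z + (3 : ℂ)*x*z^2 + y^3 = 0)
    (hG3 : x^3*y + x*z^3 + y^3*z - 3 = 0) :
    (823543 : ℂ)*x^56 + (131296284 : ℂ)*x^42 + (-88428830 : ℂ)*x^28 + (-43690996 : ℂ)*x^14 - 1 = 0 ∧ y = ((-698836612381093125 : ℂ)/482785886336)*x^11 + ((-1414416628604138929 : ℂ)/482785886336)*x^25 + ((2100081171641123825 : ℂ)/482785886336)*x^39 + ((13172552129994565 : ℂ)/482785886336)*x^53 ∧ z = ((18202975872921601 : ℂ)/241392943168)*x^9 + ((36840555850385553 : ℂ)/241392943168)*x^23 + ((-54700188801399813 : ℂ)/241392943168)*x^37 + ((-343101528964173 : ℂ)/241392943168)*x^51 := by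
  have hG4 : (1 : ℂ)*x^2*y^2*z^2 + ((-3 : ℂ)/5)*y*z^5 + ((-1 : ℂ)/5)*y^3*z + ((-2 : ℂ)/5)*x*z^3 + ((1 : ℂ)/5) = 0 := by
    linear_combination (((1 : ℂ)/42)*x) * hG0 + (((-1 : ℂ)/210)*y) * hG1 + (((-5 : ℂ)/42)*z) * hG2 + (((-1 : ℂ)/15)) * hG3
  have hG5 : (1 : ℂ)*x^2*y^3*z + ((1 : ℂ)/11)*x^3*z^3 + ((-5 : ℂ)/11)*y^2*z^4 + ((-1 : ℂ)/11)*y^4 + ((-3 : ℂ)/11)*x*y*z^2 + ((-3 : ℂ)/11)*x^2 = 0 := by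
    linear_combination (((-1 : ℂ)/11)*y) * hG2 + (((1 : ℂ)/11)*x^2) * hG3
  have hG6 : (1 : ℂ)*x^3*z^4 + ((8 : ℂ)/5)*y^2*z^5 + ((6 : ℂ)/5)*y^4*z + ((7 : ℂ)/5)*x*y*z^3 + (-3 : ℂ)*x^2*z + ((-11 : ℂ)/5)*y = 0 := by
    linear_combination ((-11 : ℂ)*y) * hG4 + ((11 : ℂ)*z) * hG5
  have hG7 : (1 : ℂ)*y^4*z^3 + ((8 : ℂ)/5)*x*y*z^5 + ((1 : ℂ)/5)*x*y^3*z + ((2 : ℂ)/5)*x^2*z^3 + (-3 : ℂ)*y*z^2 + ((-1 : ℂ)/5)*x = 0 := by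
    linear_combination ((1 : ℂ)*y*z^2) * hG3 + ((-1 : ℂ)*x) * hG4
  have hG8 : (1 : ℂ)*y^3*z^4 + ((9 : ℂ)/10)*x*z^6 + ((-1 : ℂ)/10)*x^4*z + ((7 : ℂ)/10)*x*y^2*z^2 + ((-5 : ℂ)/2)*z^3 = 0 := by
    linear_combination (((11 : ℂ)/140)*x*z) * hG1 + (((-11 : ℂ)/28)*y) * hG5 + (((-1 : ℂ)/28)) * hG0 + (((23 : ℂ)/28)*z^3) * hG3
  have hG9 : (1 : ℂ)*x^4*z^3 + ((-9 : ℂ)/4)*x*y^2*z^4 + ((1 : ℂ)/2)*x^2*y*z^2 + ((1 : ℂ)/5)*z^5 + ((-1 : ℂ)/20)*x^3 + ((3 : ℂ)/5)*y^2*z = 0 := by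
    linear_combination (((-11 : ℂ)/56)*y^2*z) * hG3 + (((11 : ℂ)/56)*x) * hG5 + (((11 : ℂ)/56)*z^2) * hG0 + (((1 : ℂ)/280)) * hG1
  have hG10 : (1 : ℂ)*x*y^3*z^3 + ((1 : ℂ)/5)*x^2*z^5 + ((-2 : ℂ)/5)*x^2*y^2*z + ((-1 : ℂ)/5)*y^3 + ((-3 : ℂ)/5)*x*z^2 = 0 := by
    linear_combination (((-1 : ℂ)/70)*x^2) * hG1 + (((1 : ℂ)/14)*y^3) * hG3 + (((-1 : ℂ)/14)*y*z) * hG0 + (((1 : ℂ)/70)) * hG2 + (((3 : ℂ)/14)*x*z^2) * hG3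
  have hG11 : (1 : ℂ)*x*y*z^6 + ((-6 : ℂ)/7)*x*y^3*z^2 + ((3 : ℂ)/7)*x^2*z^4 + ((-5 : ℂ)/7)*y*z^3 + ((1 : ℂ)/7)*x*z = 0 := by
    linear_combination (((10 : ℂ)/7)*z) * hG7 + (((-10 : ℂ)/7)*y) * hG8 + (((-1 : ℂ)/7)*x*z) * hG3
  have hG12 : (1 : ℂ)*x^2*z^6 + ((4 : ℂ)/5)*y*z^5 + ((16 : ℂ)/35)*y^3*z + ((-78 : ℂ)/35)*x*z^3 + ((-1 : ℂ)/35) = 0 := by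
    linear_combination (((10 : ℂ)/7)*x) * hG8 + (((-10 : ℂ)/7)*z) * hG10 + (((1 : ℂ)/7)*z) * hG2 + (((-1 : ℂ)/7)) * hG4
  have hG13 : (1 : ℂ)*x*z^7 + ((27 : ℂ)/7)*x^4*z^2 + ((-59 : ℂ)/7)*x*y^2*z^3 + ((30 : ℂ)/7)*x^2*y*z + ((-15 : ℂ)/7)*z^4 + ((10 : ℂ)/7)*y^2 = 0 := by
    linear_combination (((50 : ℂ)/77)*z^4) * hG3 + (((-50 : ℂ)/77)*y) * hG6 + (((60 : ℂ)/77)*z) * hG0 + (((30 : ℂ)/77)*z) * hG8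
  have hG14 : (1 : ℂ)*x*y^2*z^5 + ((6 : ℂ)/7)*x^2*y*z^3 + ((-4 : ℂ)/35)*z^6 + ((-29 : ℂ)/35)*x^3*z + ((-12 : ℂ)/35)*y^2*z^2 + ((-4 : ℂ)/7)*x*y = 0 := by
    linear_combination (((20 : ℂ)/77)*x) * hG6 + (((-20 : ℂ)/77)*z) * hG9 + (((-24 : ℂ)/385)*z) * hG1
  have hG15 : (1 : ℂ)*x^2*y*z^5 + ((-1 : ℂ)/18)*z^8 + ((5 : ℂ)/99)*x^3*z^3 + ((-14 : ℂ)/99)*y^2*z^4 + ((1 : ℂ)/198)*y^4 + ((-9 : ℂ)/11)*x*y*z^2 + ((-4 : ℂ)/99)*x^2 = 0 := by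
    linear_combination (((-1 : ℂ)/18)*z^3) * hG1 + (((5 : ℂ)/18)*x) * hG7 + (((-1 : ℂ)/18)) * hG5
  have hG16 : (1 : ℂ)*z^8 + ((272 : ℂ)/77)*x^3*z^3 + ((466 : ℂ)/77)*y^2*z^4 + ((35 : ℂ)/11)*y^4 + ((-1080 : ℂ)/77)*x*y*z^2 + ((20 : ℂ)/77)*x^2 = 0 := by
    linear_combination (((18 : ℂ)/7)*z^3) * hG1 + (((-90 : ℂ)/7)*y) * hG10 + (((-36 : ℂ)/7)) * hG5 + (((198 : ℂ)/7)) * hG15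
  have hG17 : (1 : ℂ)*y^2*z^6 + ((9 : ℂ)/7)*y^4*z^2 + ((13 : ℂ)/7)*x*y*z^4 + ((-5 : ℂ)/7)*x*y^3 + ((-24 : ℂ)/7)*y*z = 0 := by
    linear_combination (((-25 : ℂ)/7)*y*z) * hG4 + (((25 : ℂ)/7)*x) * hG10 + (((10 : ℂ)/7)*y*z) * hG3 + (((-5 : ℂ)/7)*z) * hG6
  have hG18 : (1 : ℂ)*y*z^7 + ((-1 : ℂ)/7)*y^3*z^3 + ((4 : ℂ)/7)*x*z^5 + ((1 : ℂ)/7)*x^4 + ((-12 : ℂ)/7)*x*y^2*z + ((1 : ℂ)/7)*z^2 = 0 := by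
    linear_combination (((20 : ℂ)/7)*z^3) * hG2 + (((-20 : ℂ)/7)*x) * hG9 + (((10 : ℂ)/7)*z^2) * hG3 + (((155 : ℂ)/7)*z^2) * hG4
  have hG19 : (1 : ℂ)*x*z^6 + ((17 : ℂ)/7)*x^4*z + ((-19 : ℂ)/7)*x*y^2*z^2 + ((10 : ℂ)/7)*x^2*y + ((-15 : ℂ)/7)*z^3 = 0 := by
    linear_combination (((-2 : ℂ)/13)*y) * hG16 + (((2 : ℂ)/13)*z) * hG18 + (((70 : ℂ)/143)) * hG0 + (((544 : ℂ)/1001)*z^3) * hG3 + (((410 : ℂ)/1001)) * hG8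
  have hG20 : (1 : ℂ)*x^4*z^2 + (-4 : ℂ)*x*y^2*z^3 + (2 : ℂ)*x^2*y*z + (1 : ℂ)*y^2 = 0 := by
    linear_combination (((7 : ℂ)/10)) * hG13 + (((-7 : ℂ)/10)*z) * hG19
  have hG21 : (1 : ℂ)*x*y^2*z^4 + ((-6 : ℂ)/7)*x^2*y*z^2 + ((4 : ℂ)/35)*z^5 + ((-1 : ℂ)/35)*x^3 + ((-8 : ℂ)/35)*y^2*z = 0 := by
    linear_combination (((4 : ℂ)/7)) * hG9 + (((-4 : ℂ)/7)*z) * hG20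
  have hG22 : (1 : ℂ)*y*z^6 + ((9 : ℂ)/7)*y^3*z^2 + ((13 : ℂ)/7)*x*z^4 + ((-5 : ℂ)/7)*x*y^2 + ((-24 : ℂ)/7)*z = 0 := by
    linear_combination (((5 : ℂ)/7)*z^2) * hG2 + (((-5 : ℂ)/7)*x) * hG20 + (((10 : ℂ)/7)*z) * hG3 + (((30 : ℂ)/7)*z) * hG4
  have hG23 : (1 : ℂ)*y^3*z^3 + ((9 : ℂ)/10)*x*z^5 + ((-1 : ℂ)/10)*x^4 + ((7 : ℂ)/10)*x*y^2*z + ((-5 : ℂ)/2)*z^2 = 0 := by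
    linear_combination (((-7 : ℂ)/10)) * hG18 + (((7 : ℂ)/10)*z) * hG22
  have hG24 : (1 : ℂ)*x*y*z^5 + ((-6 : ℂ)/7)*x*y^3*z + ((3 : ℂ)/7)*x^2*z^3 + ((-5 : ℂ)/7)*y*z^2 + ((1 : ℂ)/7)*x = 0 := by
    linear_combination (((10 : ℂ)/7)) * hG7 + (((-10 : ℂ)/7)*y) * hG23 + (((-1 : ℂ)/7)*x) * hG3
  have hG25 : (1 : ℂ)*x^2*z^5 + ((1 : ℂ)/7)*x^2*y^2*z + ((5 : ℂ)/7)*y*z^4 + ((3 : ℂ)/7)*y^3 + ((-16 : ℂ)/7)*x*z^2 = 0 := by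
    linear_combination (((-10 : ℂ)/7)) * hG10 + (((10 : ℂ)/7)*x) * hG23 + (((1 : ℂ)/7)) * hG2
  have hG26 : (1 : ℂ)*x*y^3*z^2 + ((2 : ℂ)/3)*x^2*z^4 + ((-1 : ℂ)/3)*x^2*y^2 + ((1 : ℂ)/3)*y*z^3 + ((-5 : ℂ)/3)*x*z = 0 := by
    linear_combination (((7 : ℂ)/30)) * hG11 + (((-7 : ℂ)/30)*y) * hG19 + (((17 : ℂ)/30)*x*z) * hG3
  have hG27 : (1 : ℂ)*x^2*y*z^4 + ((-3 : ℂ)/40)*z^7 + ((-1 : ℂ)/8)*x^2*y^3 + ((-3 : ℂ)/40)*x^3*z^2 + ((-1 : ℂ)/10)*y^2*z^3 + ((-5 : ℂ)/8)*x*y*z = 0 := by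
    linear_combination (((-3 : ℂ)/40)*z^2) * hG1 + (((3 : ℂ)/8)*y) * hG26
  have hG28 : (1 : ℂ)*y^2*z^5 + ((4 : ℂ)/7)*y^4*z + ((-2 : ℂ)/7)*x*y*z^3 + ((-5 : ℂ)/7)*x^2*z + ((-4 : ℂ)/7)*y = 0 := by
    linear_combination (((15 : ℂ)/7)*y) * hG4 + (((-15 : ℂ)/7)*x) * hG26 + (((-5 : ℂ)/7)*y) * hG3 + (((10 : ℂ)/7)) * hG6
  have hG29 : (1 : ℂ)*y^4*z^2 + (3 : ℂ)*x*y*z^4 + (-1 : ℂ)*x*y^3 + (1 : ℂ)*x^2*z^2 + (-4 : ℂ)*y*z = 0 := by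
    linear_combination (((7 : ℂ)/5)) * hG17 + (((-7 : ℂ)/5)*z) * hG28
  have hG30 : (1 : ℂ)*z^7 + ((-15 : ℂ)/7)*x^2*y^3 + ((47 : ℂ)/7)*x^3*z^2 + ((-4 : ℂ)/7)*y^2*z^3 + (-5 : ℂ)*x*y*z = 0 := by
    linear_combination (((-8 : ℂ)/7)*z^2) * hG1 + (((40 : ℂ)/7)*x) * hG29 + (((-200 : ℂ)/7)) * hG27
  have hG31 : (1 : ℂ)*x^3*z^3 + ((-9 : ℂ)/4)*y^2*z^4 + (-1 : ℂ)*y^4 + ((5 : ℂ)/2)*x*y*z^2 + ((-1 : ℂ)/4)*x^2 = 0 := by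
    linear_combination (((-77 : ℂ)/260)) * hG16 + (((77 : ℂ)/260)*z) * hG30 + (((33 : ℂ)/52)) * hG5
  have hG32 : (1 : ℂ)*x^2*y*z^3 + ((-2 : ℂ)/15)*z^6 + ((-7 : ℂ)/15)*x^3*z + ((-1 : ℂ)/15)*y^2*z^2 + ((-1 : ℂ)/3)*x*y = 0 := by
    linear_combination (((7 : ℂ)/12)) * hG14 + (((-7 : ℂ)/12)*z) * hG21
  have hP14 : x^14 = ((143 : ℂ)/5)*y*z^5 + ((16739 : ℂ)/245)*y^3*z + ((20138 : ℂ)/245)*x*z^3 + ((-43639 : ℂ)/245) := by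
    linear_combination ((19000 : ℂ)*x^3*z^6) * hG0 + ((-20 : ℂ)*x^6*z) * hG0 + ((-1900 : ℂ)*x*y*z^5) * hG0 + ((1 : ℂ)*x^4*y) * hG0 + ((4380 : ℂ)*x^2*z^3) * hG0 + (((-95012713 : ℂ)/11)*y*z^2) * hG0 + ((3 : ℂ)*x) * hG0 + ((20 : ℂ)*x^7*z^2) * hG1 + ((150335 : ℂ)*z^9) * hG1 + ((922 : ℂ)*x^3*z^4) * hG1 + ((-17 : ℂ)*x^2*z) * hG1 + ((1 : ℂ)*x^9) * hG2 + ((10 : ℂ)*x^6*y^2*z) * hG2 + ((195 : ℂ)*x^4*y*z^4) * hG2 + ((1900 : ℂ)*x*y^3*z^5) * hG2 + ((-95020 : ℂ)*x^2*z^7) * hG2 + ((-1 : ℂ)*x^4*y^3) * hG2 + ((77 : ℂ)*x^5*z^2) * hG2 + ((480 : ℂ)*x^2*y^2*z^3) * hG2 + ((-39250 : ℂ)*y*z^6) * hG2 + ((55 : ℂ)*x^3*y*z) * hG2 + ((486 : ℂ)*y^3*z^2) * hG2 + ((-23033 : ℂ)*x*z^4) * hG2 + ((-3 : ℂ)*x*y^2)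 * hG2 + (((-529343051 : ℂ)/70)*z) * hG2 + ((-761175 : ℂ)*x*y*z^8) * hG3 + (((-3763059567 : ℂ)/385)*y*z^5) * hG3 + (((474915329 : ℂ)/11)*x*z^3) * hG3 + ((-9 : ℂ)) * hG3 + ((2023670 : ℂ)*y*z^5) * hG4 + (((176502717 : ℂ)/70)) * hG4 + (((-40676674 : ℂ)/77)*z^5) * hG6 + (((-392699574 : ℂ)/77)*z^3) * hG7 + (((-529343191 : ℂ)/7)*x) * hG8 + ((2739625 : ℂ)*x*z^5) * hG11 + (((950553226 : ℂ)/55)*z^2) * hG11 + (((1235148779 : ℂ)/70)) * hG12 + ((-150335 : ℂ)*z^6) * hG16 + (((13572481 : ℂ)/5)*y^2*z^2) * hG16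
  have hP28 : x^28 = ((-219762 : ℂ)/49)*y*z^5 + ((-26184042 : ℂ)/2401)*y^3*z + ((-31492028 : ℂ)/2401)*x*z^3 + ((68446809 : ℂ)/2401) := by
    linear_combination (x^14) * hP14 + ((2860 : ℂ)*x^8*z^7) * hG0 + ((21649485 : ℂ)*x*z^14) * hG0 + (((33478 : ℂ)/49)*x^11*z^2) * hG0 + ((-286 : ℂ)*x^6*y*z^6) * hG0 + (((-2479350313 : ℂ)/49)*x^4*z^9) * hG0 + (((-16739 : ℂ)/245)*x^9*y*z) * hG0 + (((-5872246 : ℂ)/49)*x^7*z^4) * hG0 + (((248496292 : ℂ)/49)*x^2*y*z^8) * hG0 + (((-5315649065038 : ℂ)/1225)*z^11) * hG0 + (((717109 : ℂ)/49)*x^5*y*z^3) * hG0 + (((2823073347 : ℂ)/175)*x^3*z^6) * hG0 + (((16787 : ℂ)/5)*x^6*z) * hG0 + (((-2670226568 : ℂ)/1225)*x*y*z^5) * hG0 + (((-43639 : ℂ)/245)*x^4*y) * hG0 + (((-165450997 : ℂ)/245)*x^2*z^3) * hG0 + (((4494491706579394 : ℂ)/13475)*y*z^2) * hG0 + (((-130917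 : ℂ)/245)*x) * hG0 + ((-229372 : ℂ)*x^5*z^10) * hG1 + (((-65032902 : ℂ)/1225)*x^8*z^5) * hG1 + (((996454846048 : ℂ)/245)*x*z^12) * hG1 + (((14027186742 : ℂ)/1225)*x^4*z^7) * hG1 + (((-688651 : ℂ)/245)*x^7*z^2) * hG1 + (((-271252145263661 : ℂ)/42875)*z^9) * hG1 + (((-387368039 : ℂ)/1225)*x^3*z^4) * hG1 + (((3558664 : ℂ)/1225)*x^2*z) * hG1 + (((143 : ℂ)/5)*x^9*y*z^5) * hG2 + ((286 : ℂ)*x^6*y^3*z^6) * hG2 + ((-14300 : ℂ)*x^7*z^8) * hG2 + ((-114543 : ℂ)*x^4*y^2*z^9) * hG2 + ((-2222220 : ℂ)*x^2*y*z^12) * hG2 + ((-108018053 : ℂ)*z^15) * hG2 + (((16739 : ℂ)/245)*x^9*y^3*z) * hG2 + (((-816812 : ℂ)/245)*x^10*z^3) * hG2 + (((-1298844 : ℂ)/49)*x^7*y^2*z^4) * hG2 + ((-521447 : ℂ)*x^5*y*z^7) * hG2 + (((-248496292 : ℂ)/49)*x^2*y^3*z^8) * hG2 + (((310313851727 : ℂ)/1225)*x^3*z^10)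 * hG2 + (((497551737904 : ℂ)/245)*y^2*z^11) * hG2 + (((-83695 : ℂ)/49)*x^8*y*z^2) * hG2 + (((-717109 : ℂ)/49)*x^5*y^3*z^3) * hG2 + (((810478882 : ℂ)/1225)*x^6*z^5) * hG2 + (((6940752251 : ℂ)/1225)*x^3*y^2*z^6) * hG2 + (((58605075612 : ℂ)/245)*x*y*z^9) * hG2 + (((-43639 : ℂ)/245)*x^9) * hG2 + (((-386173 : ℂ)/245)*x^6*y^2*z) * hG2 + (((9251402 : ℂ)/35)*x^4*y*z^4) * hG2 + (((2670226568 : ℂ)/1225)*x*y^3*z^5) * hG2 + (((-115115941128 : ℂ)/1225)*x^2*z^7) * hG2 + (((43639 : ℂ)/245)*x^4*y^3) * hG2 + (((-3293247 : ℂ)/245)*x^5*z^2) * hG2 + (((-32239003 : ℂ)/245)*x^2*y^2*z^3) * hG2 + (((-50714081597 : ℂ)/1225)*y*z^6) * hG2 + (((-2249494 : ℂ)/245)*x^3*y*z) * hG2 + (((-3953800 : ℂ)/49)*y^3*z^2) * hG2 + (((93243446 : ℂ)/25)*x*z^4) * hG2 + (((130917 : ℂ)/245)*x*y^2) * hG2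 + (((175285158655449771 : ℂ)/600250)*z) * hG2 + ((-21649485 : ℂ)*x*y^2*z^13) * hG3 + (((1372001247774 : ℂ)/35)*z^14) * hG3 + (((2665997462518 : ℂ)/1225)*y^2*z^10) * hG3 + (((-1036704311219 : ℂ)/1225)*x*y*z^8) * hG3 + (((1222628462029876838 : ℂ)/3301375)*y*z^5) * hG3 + (((-4494486093692554 : ℂ)/2695)*x*z^3) * hG3 + (((392751 : ℂ)/245)) * hG3 + ((-830925095 : ℂ)*z^14) * hG4 + (((-2728916490451911 : ℂ)/60025)*y*z^5) * hG4 + (((-58428460223799207 : ℂ)/600250)) * hG4 + (((8013446573882 : ℂ)/1225)*x*z^8) * hG6 + (((435450121617131 : ℂ)/18865)*z^5) * hG6 + (((134815638116449446 : ℂ)/660275)*z^3) * hG7 + (((-12167603716288 : ℂ)/245)*z^11) * hG8 + (((175285158795461881 : ℂ)/60025)*x) * hG8 + (((-174209573871071 : ℂ)/6125)*y*z^7) * hG11 + (((-451340971673252 : ℂ)/8575)*x*z^5) * hG11 + (((-314614897046154354 : ℂ)/471625)*z^2) * hG11 + (((-58428389098887207 : ℂ)/85750)) * hG12 + (((245027321438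 : ℂ)/175)*z^10) * hG13 + ((41535208 : ℂ)*y*z^11) * hG16 + (((311842348678016 : ℂ)/42875)*z^6) * hG16 + (((-4494490619284394 : ℂ)/42875)*y^2*z^2) * hG16
  have hP42 : x^42 = ((84484643665 : ℂ)/117649)*y*z^5 + ((205410730605 : ℂ)/117649)*y^3*z + ((247054632166 : ℂ)/117649)*x*z^3 + ((-536949888787 : ℂ)/117649) := by
    linear_combination (x^14) * hP28 + (((-21976200 : ℂ)/49)*x^8*z^7) * hG0 + (((-166354339950 : ℂ)/49)*x*z^14) * hG0 + (((-261840420 : ℂ)/2401)*x^11*z^2) * hG0 + (((2197620 : ℂ)/49)*x^6*y*z^6) * hG0 + (((19388409794710 : ℂ)/2401)*x^4*z^9) * hG0 + (((26184042 : ℂ)/2401)*x^9*y*z) * hG0 + (((45928233220 : ℂ)/2401)*x^7*z^4) * hG0 + (((-1943153698840 : ℂ)/2401)*x^2*y*z^8) * hG0 + (((91404014560835932 : ℂ)/132055)*z^11) * hG0 + (((-5608692974 : ℂ)/2401)*x^5*y*z^3) * hG0 + (((-30894345158046 : ℂ)/12005)*x^3*z^6) * hG0 + (((-1290384054 : ℂ)/2401)*x^6*z)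 * hG0 + (((4175138951532 : ℂ)/12005)*x*y*z^5) * hG0 + (((68446809 : ℂ)/2401)*x^4*y) * hG0 + (((259614779034 : ℂ)/2401)*x^2*z^3) * hG0 + (((-7038324444138289847 : ℂ)/132055)*y*z^2) * hG0 + (((205340427 : ℂ)/2401)*x) * hG0 + (((1762491240 : ℂ)/49)*x^5*z^10) * hG1 + (((101728653748 : ℂ)/12005)*x^8*z^5) * hG1 + (((-1558393813795552 : ℂ)/2401)*x*z^12) * hG1 + (((-21941925326068 : ℂ)/12005)*x^4*z^7) * hG1 + (((1080911718 : ℂ)/2401)*x^7*z^2) * hG1 + (((424838618341755949 : ℂ)/420175)*z^9) * hG1 + (((606790938752 : ℂ)/12005)*x^3*z^4) * hG1 + (((-5582322387 : ℂ)/12005)*x^2*z) * hG1 + (((-219762 : ℂ)/49)*x^9*y*z^5) * hG2 + (((-2197620 : ℂ)/49)*x^6*y^3*z^6) * hG2 + (((109881000 : ℂ)/49)*x^7*z^8) * hG2 + (((880146810 : ℂ)/49)*x^4*y^2*z^9) * hG2 + (((2439358200 : ℂ)/7)*x^2*y*z^12) * hG2 + (((830009208510 : ℂ)/49)*z^15)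 * hG2 + (((-26184042 : ℂ)/2401)*x^9*y^3*z) * hG2 + (((1277710072 : ℂ)/2401)*x^10*z^3) * hG2 + (((1451242360 : ℂ)/343)*x^7*y^2*z^4) * hG2 + (((199793146650 : ℂ)/2401)*x^5*y*z^7) * hG2 + (((1943153698840 : ℂ)/2401)*x^2*y^3*z^8) * hG2 + (((-9904472698802 : ℂ)/245)*x^3*z^10) * hG2 + (((-778141660062096 : ℂ)/2401)*y^2*z^11) * hG2 + (((654601050 : ℂ)/2401)*x^8*y*z^2) * hG2 + (((5608692974 : ℂ)/2401)*x^5*y^3*z^3) * hG2 + (((-1267790933228 : ℂ)/12005)*x^6*z^5) * hG2 + (((-10857044357274 : ℂ)/12005)*x^3*y^2*z^6) * hG2 + (((-91665007732168 : ℂ)/2401)*x*y*z^9) * hG2 + (((68446809 : ℂ)/2401)*x^9) * hG2 + (((605915964 : ℂ)/2401)*x^6*y^2*z) * hG2 + (((-14466334121 : ℂ)/343)*x^4*y*z^4) * hG2 + (((-4175138951532 : ℂ)/12005)*x*y^3*z^5) * hG2 + (((179981978191292 : ℂ)/12005)*x^2*z^7) * hG2 + (((-68446809 : ℂ)/2401)*x^4*y^3)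 * hG2 + (((5165668125 : ℂ)/2401)*x^5*z^2) * hG2 + (((50518436586 : ℂ)/2401)*x^2*y^2*z^3) * hG2 + (((79293116948448 : ℂ)/12005)*y*z^6) * hG2 + (((3528918117 : ℂ)/2401)*x^3*y*z) * hG2 + (((31013321562 : ℂ)/2401)*y^3*z^2) * hG2 + (((-7168193516207 : ℂ)/12005)*x*z^4) * hG2 + (((-205340427 : ℂ)/2401)*x*y^2) * hG2 + (((-274494625232399402833 : ℂ)/5882450)*z) * hG2 + (((166354339950 : ℂ)/49)*x*y^2*z^13) * hG3 + (((-165235751917809652 : ℂ)/26411)*z^14) * hG3 + (((-4169950993005332 : ℂ)/12005)*y^2*z^10) * hG3 + (((1620952153336261 : ℂ)/12005)*x*y*z^8) * hG3 + (((-1914622926441931286079 : ℂ)/32353475)*y*z^5) * hG3 + (((7038315636832276451 : ℂ)/26411)*x*z^3) * hG3 + (((-616021281 : ℂ)/2401)) * hG3 + ((130302383850 : ℂ)*z^14) * hG4 + (((610513725122072092 : ℂ)/84035)*y*z^5) * hG4 + (((13071189218424923573 : ℂ)/840350)) * hG4 + (((-87834418892660756 : ℂ)/84035)*x*z^8) *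 hG6 + (((-309957508225792312 : ℂ)/84035)*z^5) * hG6 + (((-211119742070760401058 : ℂ)/6470695)*z^3) * hG7 + (((209315538242718832 : ℂ)/26411)*z^11) * hG8 + (((-274494625452317141713 : ℂ)/588245)*x) * hG8 + (((272857979674989474 : ℂ)/60025)*y*z^7) * hG11 + (((100975330644138819 : ℂ)/12005)*x*z^5) * hG11 + (((492683460904880004542 : ℂ)/4621925)*z^2) * hG11 + (((91498212930284345011 : ℂ)/840350)) * hG12 + (((-2673542702667684 : ℂ)/12005)*z^10) * hG13 + (((-319155957360 : ℂ)/49)*y*z^11) * hG16 + (((-69762459556430817 : ℂ)/60025)*z^6) * hG16 + (((7038322738405603937 : ℂ)/420175)*y^2*z^2) * hG16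
  have hP56 : x^56 = ((-473401053280972 : ℂ)/4117715)*y*z^5 + ((-56398938393817756 : ℂ)/201768035)*y^3*z + ((-67832961268404072 : ℂ)/201768035)*x*z^3 + ((147428551474757491 : ℂ)/201768035) := by
    linear_combination (x^14) * hP42 + (((8448464366500 : ℂ)/117649)*x^8*z^7) * hG0 + (((63952763138313375 : ℂ)/117649)*x*z^14) * hG0 + (((2054107306050 : ℂ)/117649)*x^11*z^2) * hG0 + (((-844846436650 : ℂ)/117649)*x^6*y*z^6) * hG0 + (((-152099878560244675 : ℂ)/117649)*x^4*z^9) * hG0 + (((-205410730605 : ℂ)/117649)*x^9*y*z) * hG0 + (((-360301656589970 : ℂ)/117649)*x^7*z^4) * hG0 + (((15243823955812300 : ℂ)/117649)*x^2*y*z^8) * hG0 + (((-143411241877988796862 : ℂ)/1294139)*z^11) * hG0 + (((43999540251031 : ℂ)/117649)*x^5*y*z^3) * hG0 + (((48472653809060431 : ℂ)/117649)*x^3*z^6) * hG0 + (((10122765583925 : ℂ)/117649)*x^6*z) * hG0 + (((-6550710296843808 : ℂ)/117649)*x*y*z^5) * hG0 + (((-536949888787 : ℂ)/117649)*x^4*y)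 * hG0 + (((-2036615520434307 : ℂ)/117649)*x^2*z^3) * hG0 + (((1577556841849951121216 : ℂ)/184877)*y*z^2) * hG0 + (((-1610849666361 : ℂ)/117649)*x) * hG0 + (((-677566842193300 : ℂ)/117649)*x^5*z^10) * hG1 + (((-22801399928574 : ℂ)/16807)*x^8*z^5) * hG1 + (((12225425222038426560 : ℂ)/117649)*x*z^12) * hG1 + (((34426368899077730 : ℂ)/117649)*x^4*z^7) * hG1 + (((-8479479739085 : ℂ)/117649)*x^7*z^2) * hG1 + (((-666557177765628247081 : ℂ)/4117715)*z^9) * hG1 + (((-952034058607977 : ℂ)/117649)*x^3*z^4) * hG1 + (((8758408794290 : ℂ)/117649)*x^2*z) * hG1 + (((84484643665 : ℂ)/117649)*x^9*y*z^5) * hG2 + (((844846436650 : ℂ)/117649)*x^6*y^3*z^6) * hG2 + (((-42242321832500 : ℂ)/117649)*x^7*z^8) * hG2 + (((-338360997878325 : ℂ)/117649)*x^4*y^2*z^9) * hG2 + (((-937779544681500 : ℂ)/16807)*x^2*y*z^12) * hG2 + (((-319086248849373575 : ℂ)/117649)*z^15) * hG2 + (((205410730605 : ℂ)/117649)*x^9*y^3*z)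 * hG2 + (((-10023481898084 : ℂ)/117649)*x^10*z^3) * hG2 + (((-79693745920340 : ℂ)/117649)*x^7*y^2*z^4) * hG2 + (((-1567355200357005 : ℂ)/117649)*x^5*y*z^7) * hG2 + (((-15243823955812300 : ℂ)/117649)*x^2*y^3*z^8) * hG2 + (((761454847944047693 : ℂ)/117649)*x^3*z^10) * hG2 + (((6104434253360030080 : ℂ)/117649)*y^2*z^11) * hG2 + (((-5135268265125 : ℂ)/117649)*x^8*y*z^2) * hG2 + (((-43999540251031 : ℂ)/117649)*x^5*y^3*z^3) * hG2 + (((1989134420838070 : ℂ)/117649)*x^6*z^5) * hG2 + (((17034449159377649 : ℂ)/117649)*x^3*y^2*z^6) * hG2 + (((719101443235767140 : ℂ)/117649)*x*y*z^9) * hG2 + (((-536949888787 : ℂ)/117649)*x^9) * hG2 + (((-4753266696055 : ℂ)/117649)*x^6*y^2*z) * hG2 + (((794408436093820 : ℂ)/117649)*x^4*y*z^4) * hG2 + (((6550710296843808 : ℂ)/117649)*x*y^3*z^5) * hG2 + (((-40341180010080720 : ℂ)/16807)*x^2*z^7) * hG2 + (((536949888787 : ℂ)/117649)*x^4*y^3)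 * hG2 + (((-40523498514179 : ℂ)/117649)*x^5*z^2) * hG2 + (((-396307710750213 : ℂ)/117649)*x^2*y^2*z^3) * hG2 + (((-124409357885003619 : ℂ)/117649)*y*z^6) * hG2 + (((-27683547307840 : ℂ)/117649)*x^3*y*z) * hG2 + (((-243292323118452 : ℂ)/117649)*y^3*z^2) * hG2 + (((11246559390738124 : ℂ)/117649)*x*z^4) * hG2 + (((1610849666361 : ℂ)/117649)*x*y^2) * hG2 + (((430672973754766979216307 : ℂ)/57648010)*z) * hG2 + (((-63952763138313375 : ℂ)/117649)*x*y^2*z^13) * hG3 + (((9073787468291838398870 : ℂ)/9058973)*z^14) * hG3 + (((6542557050042295362 : ℂ)/117649)*y^2*z^10) * hG3 + (((-2543242030838318227 : ℂ)/117649)*x*y*z^8) * hG3 + (((600795988762147213710572 : ℂ)/63412811)*y*z^5) * hG3 + (((-55214420373547637603152 : ℂ)/1294139)*x*z^3) * hG3 + (((4832548999083 : ℂ)/117649)) * hG3 + (((-50093057345070125 : ℂ)/2401)*z^14) * hG4 + (((-6705129432844689643761 : ℂ)/5764801)*y*z^5) * hG4 + (((-143557840102091196045139 : ℂ)/57648010))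 * hG4 + (((137809367000477704802 : ℂ)/823543)*x*z^8) * hG6 + (((37446106886904998855919 : ℂ)/63412811)*z^5) * hG6 + (((331239881954676425108886 : ℂ)/63412811)*z^3) * hG7 + (((-11494401272715279819920 : ℂ)/9058973)*z^11) * hG8 + (((430672974099805605833957 : ℂ)/5764801)*x) * hG8 + (((-428104705514902771373 : ℂ)/588245)*y*z^7) * hG11 + (((-1108988360859089975650 : ℂ)/823543)*x*z^5) * hG11 + (((-110429146989611702040302 : ℂ)/6470695)*z^2) * hG11 + (((-1004903655063769627561413 : ℂ)/57648010)) * hG12 + (((4194805891328960094 : ℂ)/117649)*z^10) * hG13 + (((122695358301806200 : ℂ)/117649)*y*z^11) * hG16 + (((766184954754312591026 : ℂ)/4117715)*z^6) * hG16 + (((-2208579043346820709108 : ℂ)/823543)*y^2*z^2) * hG16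
  have hP11 : x^11 = ((132 : ℂ)/7)*y^4*z + (33 : ℂ)*x*y*z^3 + ((55 : ℂ)/7)*x^2*z + ((-411 : ℂ)/7)*y := by
    linear_combination ((-1900 : ℂ)*z^6) * hG0 + ((-20 : ℂ)*x^3*z) * hG0 + ((1 : ℂ)*x*y) * hG0 + ((20 : ℂ)*x^4*z^2) * hG1 + (((-61316 : ℂ)/7)*z^4) * hG1 + ((1 : ℂ)*x^6) * hG2 + ((10 : ℂ)*x^3*y^2*z) * hG2 + ((195 : ℂ)*x*y*z^4) * hG2 + ((-1 : ℂ)*x*y^3) * hG2 + ((77 : ℂ)*x^2*z^2) * hG2 + ((55 : ℂ)*y*z) * hG2 + ((1900 : ℂ)*y^2*z^5) * hG3 + ((480 : ℂ)*x*y*z^3) * hG3 + ((-3 : ℂ)*y) * hG3 + (((-3367296 : ℂ)/49)*y) * hG4 + ((9480 : ℂ)*x*z^3) * hG6 + (((2613188 : ℂ)/77)) * hG6 + ((-37043 : ℂ)*y*z^2) * hG11 + (((-565185 : ℂ)/7)*x) * hG11 + (((74616 : ℂ)/7)*z) * hG16 + (((-5417948 : ℂ)/35)) * hG28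
  have hP25 : x^25 = ((-7304685 : ℂ)/2401)*y^4*z + ((-12605035 : ℂ)/2401)*x*y*z^3 + ((-2804450 : ℂ)/2401)*x^2*z + ((22716571 : ℂ)/2401)*y := by
    linear_combination (x^14) * hP11 + (((49500 : ℂ)/7)*x^9*z^5) * hG0 + (((-3747527850 : ℂ)/7)*x^2*z^12) * hG0 + (((-4950 : ℂ)/7)*x^7*y*z^4) * hG0 + (((-8419037 : ℂ)/7)*x^5*z^7) * hG0 + (((374752785 : ℂ)/7)*y*z^11) * hG0 + (((-207964 : ℂ)/35)*x^8*z^2) * hG0 + (((742984 : ℂ)/5)*x^3*y*z^6) * hG0 + (((-4460107621 : ℂ)/35)*x*z^9) * hG0 + (((20693 : ℂ)/35)*x^6*y*z) * hG0 + (((37006866 : ℂ)/35)*x^4*z^4) * hG0 + (((-4538211 : ℂ)/35)*x^2*y*z^3) * hG0 + (((59365033878 : ℂ)/77)*z^6) * hG0 + (((71532 : ℂ)/35)*x^3*z) * hG0 + (((-411 : ℂ)/35)*x*y) * hG0 + (((132 : ℂ)/35)*x^13*z) * hG1 + ((-567204 : ℂ)*x^6*z^8) * hG1 + (((1573 : ℂ)/35)*x^9*z^3)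 * hG1 + (((4062308206 : ℂ)/35)*x^2*z^10) * hG1 + (((16893413 : ℂ)/35)*x^5*z^5) * hG1 + (((411 : ℂ)/35)*x^8) * hG1 + (((-3602374938 : ℂ)/35)*x*z^7) * hG1 + (((-1204922 : ℂ)/175)*x^4*z^2) * hG1 + (((-103478384517671 : ℂ)/42875)*z^4) * hG1 + (((495 : ℂ)/7)*x^10*y*z^3) * hG2 + (((4950 : ℂ)/7)*x^7*y^3*z^4) * hG2 + (((-1237632 : ℂ)/35)*x^8*z^6) * hG2 + (((-1982739 : ℂ)/7)*x^5*y^2*z^7) * hG2 + (((-38466648 : ℂ)/7)*x^3*y*z^10) * hG2 + (((-374752785 : ℂ)/7)*y^3*z^11) * hG2 + (((18741609678 : ℂ)/7)*x*z^13) * hG2 + (((143 : ℂ)/35)*x^11*z) * hG2 + (((1034 : ℂ)/35)*x^8*y^2*z^2) * hG2 + (((-122232 : ℂ)/7)*x^6*y*z^5) * hG2 + (((-742984 : ℂ)/5)*x^3*y^3*z^6) * hG2 + (((233791888 : ℂ)/35)*x^4*z^8) * hG2 + (((401864067 : ℂ)/7)*x*y^2*z^9) * hG2 + (((-411 : ℂ)/7)*x^9*y)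 * hG2 + (((-20693 : ℂ)/35)*x^6*y^3*z) * hG2 + (((1037818 : ℂ)/35)*x^7*z^3) * hG2 + (((8375244 : ℂ)/35)*x^4*y^2*z^4) * hG2 + (((53176877 : ℂ)/7)*x^2*y*z^7) * hG2 + (((90447766438 : ℂ)/245)*z^10) * hG2 + (((530702 : ℂ)/35)*x^5*y*z^2) * hG2 + (((4538211 : ℂ)/35)*x^2*y^3*z^3) * hG2 + (((-204833644 : ℂ)/35)*x^3*z^5) * hG2 + (((-354465985 : ℂ)/7)*y^2*z^6) * hG2 + (((-411 : ℂ)/35)*x^6) * hG2 + (((-67422 : ℂ)/35)*x^3*y^2*z) * hG2 + (((-92350131 : ℂ)/35)*x*y*z^4) * hG2 + (((411 : ℂ)/35)*x*y^3) * hG2 + (((-82459 : ℂ)/25)*x^2*z^2) * hG2 + (((-30363 : ℂ)/5)*y*z) * hG2 + (((150133151520 : ℂ)/7)*y*z^14) * hG3 + (((17375044093 : ℂ)/7)*x*z^12) * hG3 + (((2450787286 : ℂ)/35)*x*y^2*z^8) * hG3 + (((1811468414796 : ℂ)/13475)*z^9) * hG3 + (((-111046757 : ℂ)/5)*y^2*z^5)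 * hG3 + (((70503731 : ℂ)/175)*x*y*z^3) * hG3 + (((1233 : ℂ)/35)*y) * hG3 + (((626361803924 : ℂ)/245)*z^9) * hG4 + (((-935021766165902 : ℂ)/60025)*y) * hG4 + (((17342687252223 : ℂ)/8575)*x*z^3) * hG6 + (((727237309218032 : ℂ)/94325)) * hG6 + (((-148259387595 : ℂ)/7)*z^12) * hG7 + (((-64973251222 : ℂ)/49)*x*z^9) * hG8 + (((123177527933 : ℂ)/77)*z^6) * hG8 + (((-6626179758 : ℂ)/7)*z^11) * hG11 + (((-9843610763191 : ℂ)/875)*y*z^2) * hG11 + (((-155836384984761 : ℂ)/8575)*x) * hG11 + (((-837784134 : ℂ)/35)*z^9) * hG12 + (((-711145789477 : ℂ)/490)*z^5) * hG13 + (((-38396991418 : ℂ)/175)*y*z^6) * hG16 + (((103891040456421 : ℂ)/42875)*z) * hG16 + (((-1506420030709919 : ℂ)/42875)) * hG28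
  have hP39 : x^39 = ((57301276402 : ℂ)/117649)*y^4*z + ((98894825033 : ℂ)/117649)*x*y*z^3 + ((22006203091 : ℂ)/117649)*x^2*z + ((-178202186877 : ℂ)/117649)*y := by
    linear_combination (x^14) * hP25 + (((-2721440500 : ℂ)/2401)*x^9*z^5) * hG0 + (((206034000051750 : ℂ)/2401)*x^2*z^12) * hG0 + (((272144050 : ℂ)/2401)*x^7*y*z^4) * hG0 + (((66752978955 : ℂ)/343)*x^5*z^7) * hG0 + (((-20603400005175 : ℂ)/2401)*y*z^11) * hG0 + (((2294144549 : ℂ)/2401)*x^8*z^2) * hG0 + (((-8232559344 : ℂ)/343)*x^3*y*z^6) * hG0 + (((7055011699335 : ℂ)/343)*x*z^9) * hG0 + (((-228509223 : ℂ)/2401)*x^6*y*z) * hG0 + (((-408049201423 : ℂ)/2401)*x^4*z^4) * hG0 + (((7150184760 : ℂ)/343)*x^2*y*z^3) * hG0 + (((-16423066044057639 : ℂ)/132055)*z^6) * hG0 + (((-3950119478 : ℂ)/12005)*x^3*z) * hG0 + (((22716571 : ℂ)/12005)*x*y) * hG0 + (((-1460937 : ℂ)/2401)*x^13*z) * hG1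 + (((218288746840 : ℂ)/2401)*x^6*z^8) * hG1 + (((-12661757 : ℂ)/2401)*x^9*z^3) * hG1 + (((-45021313392341 : ℂ)/2401)*x^2*z^10) * hG1 + (((-186509041669 : ℂ)/2401)*x^5*z^5) * hG1 + (((-22716571 : ℂ)/12005)*x^8) * hG1 + (((39732169164356 : ℂ)/2401)*x*z^7) * hG1 + (((13299377923 : ℂ)/12005)*x^4*z^2) * hG1 + (((4675698170561224 : ℂ)/12005)*z^4) * hG1 + (((-27214405 : ℂ)/2401)*x^10*y*z^3) * hG2 + (((-272144050 : ℂ)/2401)*x^7*y^3*z^4) * hG2 + (((13608663437 : ℂ)/2401)*x^8*z^6) * hG2 + (((15572614485 : ℂ)/343)*x^5*y^2*z^7) * hG2 + (((2114844151215 : ℂ)/2401)*x^3*y*z^10) * hG2 + (((20603400005175 : ℂ)/2401)*y^3*z^11) * hG2 + (((-1030388289005590 : ℂ)/2401)*x*z^13) * hG2 + (((-1343513 : ℂ)/2401)*x^11*z) * hG2 + (((-9052319 : ℂ)/2401)*x^8*y^2*z^2) * hG2 + (((966477780 : ℂ)/343)*x^6*y*z^5) * hG2 + (((8232559344 : ℂ)/343)*x^3*y^3*z^6)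 * hG2 + (((-2592734898319 : ℂ)/2401)*x^4*z^8) * hG2 + (((-22270358323345 : ℂ)/2401)*x*y^2*z^9) * hG2 + (((22716571 : ℂ)/2401)*x^9*y) * hG2 + (((228509223 : ℂ)/2401)*x^6*y^3*z) * hG2 + (((-11454030449 : ℂ)/2401)*x^7*z^3) * hG2 + (((-92463731777 : ℂ)/2401)*x^4*y^2*z^4) * hG2 + (((-2942061422890 : ℂ)/2401)*x^2*y*z^7) * hG2 + (((-285891185630341 : ℂ)/4802)*z^10) * hG2 + (((-5853470387 : ℂ)/2401)*x^5*y*z^2) * hG2 + (((-7150184760 : ℂ)/343)*x^2*y^3*z^3) * hG2 + (((11294137694481 : ℂ)/12005)*x^3*z^5) * hG2 + (((19546852793229 : ℂ)/2401)*y^2*z^6) * hG2 + (((22716571 : ℂ)/12005)*x^6) * hG2 + (((3722953768 : ℂ)/12005)*x^3*y^2*z) * hG2 + (((1018256097328 : ℂ)/2401)*x*y*z^4) * hG2 + (((-22716571 : ℂ)/12005)*x*y^3) * hG2 + (((6383069754 : ℂ)/12005)*x^2*z^2) * hG2 + (((11736775579 : ℂ)/12005)*y*z) * hG2 + (((-1179159587184925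 : ℂ)/343)*y*z^14) * hG3 + (((-136954141716405 : ℂ)/343)*x*z^12) * hG3 + (((-27114723572000 : ℂ)/2401)*x*y^2*z^8) * hG3 + (((-4122268519183526 : ℂ)/184877)*z^9) * hG3 + (((6121912352697 : ℂ)/1715)*y^2*z^5) * hG3 + (((-111072413159 : ℂ)/1715)*x*y*z^3) * hG3 + (((-68149713 : ℂ)/12005)*y) * hG3 + (((-1980644572092259 : ℂ)/4802)*z^9) * hG4 + (((1478705299738454603 : ℂ)/588245)*y) * hG4 + (((-27426753191959617 : ℂ)/84035)*x*z^3) * hG6 + (((-1610141794110379111 : ℂ)/1294139)) * hG6 + (((8151100110268600 : ℂ)/2401)*z^12) * hG7 + (((514610603852725 : ℂ)/2401)*x*z^9) * hG8 + (((-47582490492984366 : ℂ)/184877)*z^6) * hG8 + (((52042625556095 : ℂ)/343)*z^11) * hG11 + (((108972939799477503 : ℂ)/60025)*y*z^2) * hG11 + (((246449974503063852 : ℂ)/84035)*x) * hG11 + (((2603916608291 : ℂ)/686)*z^9) * hG12 + (((2811315135898406 : ℂ)/12005)*z^5) * hG13 + (((85009153652985 : ℂ)/2401)*y*z^6) * hG16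 + (((-6572007118848365 : ℂ)/16807)*z) * hG16 + (((2382352466331429322 : ℂ)/420175)) * hG28
  have hP53 : x^53 = ((-449515024880711 : ℂ)/5764801)*y^4*z + ((-110829426373013 : ℂ)/823543)*x*y*z^3 + ((-172633070796640 : ℂ)/5764801)*x^2*z + ((1397954086053243 : ℂ)/5764801)*y := by
    linear_combination (x^14) * hP39 + (((21349737783700 : ℂ)/117649)*x^9*z^5) * hG0 + (((-1616339520731958350 : ℂ)/117649)*x^2*z^12) * hG0 + (((-2134973778370 : ℂ)/117649)*x^7*y*z^4) * hG0 + (((-3665626118492747 : ℂ)/117649)*x^5*z^7) * hG0 + (((161633952073195835 : ℂ)/117649)*y*z^11) * hG0 + (((-89983784390354 : ℂ)/588245)*x^8*z^2) * hG0 + (((2260398859641368 : ℂ)/588245)*x^3*y*z^6) * hG0 + (((-1937062381894163379 : ℂ)/588245)*x*z^9) * hG0 + (((8962839082903 : ℂ)/588245)*x^6*y*z) * hG0 + (((3201007539260612 : ℂ)/117649)*x^4*z^4) * hG0 + (((-1963175589372659 : ℂ)/588245)*x^2*y*z^3) * hG0 + (((128834299033596613832 : ℂ)/6470695)*z^6)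 * hG0 + (((6197433509376 : ℂ)/117649)*x^3*z) * hG0 + (((-178202186877 : ℂ)/588245)*x*y) * hG0 + (((57301276402 : ℂ)/588245)*x^13*z) * hG1 + (((-1712478175358348 : ℂ)/117649)*x^6*z^8) * hG1 + (((497289744811 : ℂ)/588245)*x^9*z^3) * hG1 + (((1765915912605717156 : ℂ)/588245)*x^2*z^10) * hG1 + (((1463094444154431 : ℂ)/117649)*x^5*z^5) * hG1 + (((178202186877 : ℂ)/588245)*x^8) * hG1 + (((-1558426302864382386 : ℂ)/588245)*x*z^7) * hG1 + (((-74520524172796 : ℂ)/420175)*x^4*z^2) * hG1 + (((-44932460267486199755511 : ℂ)/720600125)*z^4) * hG1 + (((213497377837 : ℂ)/117649)*x^10*y*z^3) * hG2 + (((2134973778370 : ℂ)/117649)*x^7*y^3*z^4) * hG2 + (((-533800745868902 : ℂ)/588245)*x^8*z^6) * hG2 + (((-122167371541427 : ℂ)/16807)*x^5*y^2*z^7) * hG2 + (((-16590981007714578 : ℂ)/117649)*x^3*y*z^10) * hG2 + (((-161633952073195835 : ℂ)/117649)*y^3*z^11) * hG2 + (((8083410081835150098 : ℂ)/117649)*x*z^13)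 * hG2 + (((52729739053 : ℂ)/588245)*x^11*z) * hG2 + (((355393561324 : ℂ)/588245)*x^8*y^2*z^2) * hG2 + (((-53072986842192 : ℂ)/117649)*x^6*y*z^5) * hG2 + (((-2260398859641368 : ℂ)/588245)*x^3*y^3*z^6) * hG2 + (((20339440019610762 : ℂ)/117649)*x^4*z^8) * hG2 + (((174706453273836121 : ℂ)/117649)*x*y^2*z^9) * hG2 + (((-178202186877 : ℂ)/117649)*x^9*y) * hG2 + (((-8962839082903 : ℂ)/588245)*x^6*y^3*z) * hG2 + (((89852688597960 : ℂ)/117649)*x^7*z^3) * hG2 + (((725343639484706 : ℂ)/117649)*x^4*y^2*z^4) * hG2 + (((23079514428696329 : ℂ)/117649)*x^2*y*z^7) * hG2 + (((5606812152995325837 : ℂ)/588245)*z^10) * hG2 + (((229592212428472 : ℂ)/588245)*x^5*y*z^2) * hG2 + (((1963175589372659 : ℂ)/588245)*x^2*y^3*z^3) * hG2 + (((-88598645449053378 : ℂ)/588245)*x^3*z^5) * hG2 + (((-766691806423156699 : ℂ)/588245)*y^2*z^6) * hG2 + (((-178202186877 : ℂ)/588245)*x^6) * hG2 + (((-5841029135622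 : ℂ)/117649)*x^3*y^2*z) * hG2 + (((-5705624420842709 : ℂ)/84035)*x*y*z^4) * hG2 + (((178202186877 : ℂ)/588245)*x*y^3) * hG2 + (((-250362486659273 : ℂ)/2941225)*x^2*z^2) * hG2 + (((-18414098341251 : ℂ)/117649)*y*z) * hG2 + (((9250522930867212910 : ℂ)/16807)*y*z^14) * hG3 + (((7520756369966420111 : ℂ)/117649)*x*z^12) * hG3 + (((1063530115524982774 : ℂ)/588245)*x*y^2*z^8) * hG3 + (((808501707027998247504 : ℂ)/226474325)*z^9) * hG3 + (((-48024331563341467 : ℂ)/84035)*y^2*z^5) * hG3 + (((622375011104929 : ℂ)/60025)*x*y*z^3) * hG3 + (((534606560631 : ℂ)/588245)*y) * hG3 + (((38843660230377731137 : ℂ)/588245)*z^9) * hG4 + (((-406001179624315964962132 : ℂ)/1008840175)*y) * hG4 + (((153682344105277476257 : ℂ)/2941225)*x*z^3) * hG6 + (((315777915307585635682762 : ℂ)/1585320275)) * hG6 + (((-63945490755704511195 : ℂ)/117649)*z^12) * hG7 + (((-4037009803894608104 : ℂ)/117649)*x*z^9) * hG8 + (((1866342439471674380731 : ℂ)/45294865)*z^6)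 * hG8 + (((-408275102302717564 : ℂ)/16807)*z^11) * hG11 + (((-29920190866065239615567 : ℂ)/102942875)*y*z^2) * hG11 + (((-67666613752783061732801 : ℂ)/144120025)*x) * hG11 + (((-357499222829755113 : ℂ)/588245)*z^9) * hG12 + (((-220539850626963229447 : ℂ)/5882450)*z^5) * hG13 + (((-16671830804652085312 : ℂ)/2941225)*y*z^6) * hG16 + (((45111129356906903342111 : ℂ)/720600125)*z) * hG16 + (((-654111344330085972596579 : ℂ)/720600125)) * hG28
  have hP9 : x^9 = ((-132 : ℂ)/7)*y^3*z^2 + ((-123 : ℂ)/7)*x*z^4 + ((-78 : ℂ)/7)*x*y^2 + ((340 : ℂ)/7)*z := by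
    linear_combination ((-9 : ℂ)*x*z) * hG0 + ((20 : ℂ)*x^2*z^2) * hG1 + ((1 : ℂ)*x^4) * hG2 + ((10 : ℂ)*x*y^2*z) * hG2 + (((-5 : ℂ)/2)*z^2) * hG2 + ((195 : ℂ)*x*z^4) * hG3 + ((-1 : ℂ)*x*y^2) * hG3 + ((27 : ℂ)*z) * hG3 + (((-65 : ℂ)/2)*z) * hG4 + ((-245 : ℂ)*x*z) * hG8 + (((11 : ℂ)/2)*z) * hG12 + (((-57 : ℂ)/5)) * hG22
  have hP23 : x^23 = ((1010482 : ℂ)/343)*y^3*z^2 + ((941160 : ℂ)/343)*x*z^4 + ((630269 : ℂ)/343)*x*y^2 + ((-2581568 : ℂ)/343)*z := by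
    linear_combination (x^14) * hP9 + (((-1320 : ℂ)/7)*x^11*z^3) * hG0 + (((97455000 : ℂ)/7)*x^4*z^10) * hG0 + (((132 : ℂ)/7)*x^9*y*z^2) * hG0 + (((78720 : ℂ)/7)*x^7*z^5) * hG0 + (((-9745500 : ℂ)/7)*x^2*y*z^9) * hG0 + (((6948188643 : ℂ)/7)*z^12) * hG0 + (((78 : ℂ)/7)*x^10) * hG0 + (((-13029 : ℂ)/7)*x^5*y*z^4) * hG0 + (((-5564204 : ℂ)/7)*x^3*z^7) * hG0 + (((-26606 : ℂ)/7)*x^6*z^2) * hG0 + ((148550 : ℂ)*x*y*z^6) * hG0 + (((2446 : ℂ)/7)*x^4*y*z) * hG0 + (((4864053 : ℂ)/7)*x^2*z^4) * hG0 + (((-22201525866617 : ℂ)/385)*y*z^3) * hG0 + (((39498 : ℂ)/35)*x*z) * hG0 + (((103272 : ℂ)/7)*x^8*z^6) * hG1 + (((-7818214290 : ℂ)/7)*x*z^13) * hG1 + (((-156 : ℂ)/7)*x^11*z) * hG1 + (((-9881688 : ℂ)/7)*x^4*z^8) * hG1 + (((3944 : ℂ)/7)*x^7*z^3) * hG1 +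 (((283122229237 : ℂ)/245)*z^10) * hG1 + (((10577957 : ℂ)/35)*x^3*z^5) * hG1 + (((234 : ℂ)/35)*x^6) * hG1 + (((-148222 : ℂ)/35)*x^2*z^2) * hG1 + (((-132 : ℂ)/7)*x^9*y^3*z^2) * hG2 + (((6477 : ℂ)/7)*x^10*z^4) * hG2 + (((51570 : ℂ)/7)*x^7*y^2*z^5) * hG2 + ((142905 : ℂ)*x^5*y*z^8) * hG2 + (((9745500 : ℂ)/7)*x^2*y^3*z^9) * hG2 + (((-487378272 : ℂ)/7)*x^3*z^11) * hG2 + (((-3904234395 : ℂ)/7)*y^2*z^12) * hG2 + (((-78 : ℂ)/7)*x^10*y^2) * hG2 + (((1740 : ℂ)/7)*x^8*y*z^3) * hG2 + (((13029 : ℂ)/7)*x^5*y^3*z^4) * hG2 + (((-514827 : ℂ)/7)*x^6*z^6) * hG2 + (((-4834296 : ℂ)/7)*x^3*y^2*z^7) * hG2 + (((-342881250 : ℂ)/7)*x*y*z^10) * hG2 + (((106 : ℂ)/7)*x^9*z) * hG2 + (((2146 : ℂ)/7)*x^6*y^2*z^2) * hG2 + (((-137457 : ℂ)/7)*x^4*y*z^5)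 * hG2 + ((-148550 : ℂ)*x*y^3*z^6) * hG2 + (((39164525 : ℂ)/7)*x^2*z^8) * hG2 + (((-234 : ℂ)/7)*x^7*y) * hG2 + (((-2446 : ℂ)/7)*x^4*y^3*z) * hG2 + (((128690 : ℂ)/7)*x^5*z^3) * hG2 + (((1042827 : ℂ)/7)*x^2*y^2*z^4) * hG2 + (((32431226 : ℂ)/7)*y*z^7) * hG2 + (((68758 : ℂ)/7)*x^3*y*z^2) * hG2 + ((84384 : ℂ)*y^3*z^3) * hG2 + (((-19139548 : ℂ)/5)*x*z^5) * hG2 + (((-234 : ℂ)/35)*x^4) * hG2 + (((-5676 : ℂ)/5)*x*y^2*z) * hG2 + (((-432929736413966 : ℂ)/8575)*z^2) * hG2 + ((-10820750220 : ℂ)*z^15) * hG3 + (((-3043954248 : ℂ)/7)*y^2*z^11) * hG3 + (((410074947 : ℂ)/7)*x*y*z^9) * hG3 + (((-6041935791186114 : ℂ)/94325)*y*z^6) * hG3 + (((22201359798638 : ℂ)/77)*x*z^4) * hG3 + (((234 : ℂ)/35)*x*y^2) * hG3 + (((-118494 : ℂ)/35)*z) * hG3 + (((2736288889868 : ℂ)/343)*y*z^6)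 * hG4 + (((144310182725277 : ℂ)/8575)*z) * hG4 + (((-7627165926 : ℂ)/7)*x*z^9) * hG6 + (((-10732796906714 : ℂ)/2695)*z^6) * hG6 + (((-665424614741178 : ℂ)/18865)*z^4) * hG7 + (((95266423515 : ℂ)/7)*z^12) * hG8 + (((-865859449030592 : ℂ)/1715)*x*z) * hG8 + (((182906663823 : ℂ)/35)*y*z^8) * hG11 + (((453651626503 : ℂ)/49)*x*z^6) * hG11 + (((1554126540273497 : ℂ)/13475)*z^3) * hG11 + (((144309921461087 : ℂ)/1225)*z) * hG12 + (((-621804381 : ℂ)/2)*z^11) * hG13 + (((-306971835892 : ℂ)/245)*z^7) * hG16 + (((22201493378777 : ℂ)/1225)*y^2*z^3) * hG16 + (((3116947 : ℂ)/1225)) * hG22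
  have hP37 : x^37 = ((-55498711512 : ℂ)/117649)*y^3*z^2 + ((-51695308907 : ℂ)/117649)*x*z^4 + ((-34602800784 : ℂ)/117649)*x*y^2 + ((141796938852 : ℂ)/117649)*z := by
    linear_combination (x^14) * hP23 + (((10104820 : ℂ)/343)*x^11*z^3) * hG0 + (((-746042352000 : ℂ)/343)*x^4*z^10) * hG0 + (((-1010482 : ℂ)/343)*x^9*y*z^2) * hG0 + (((-537932510 : ℂ)/343)*x^7*z^5) * hG0 + (((74604235200 : ℂ)/343)*x^2*y*z^9) * hG0 + (((-52700298142558 : ℂ)/343)*z^12) * hG0 + (((-630269 : ℂ)/343)*x^10) * hG0 + (((93271371 : ℂ)/343)*x^5*y*z^4) * hG0 + (((4591674972 : ℂ)/49)*x^3*z^7) * hG0 + (((211839585 : ℂ)/343)*x^6*z^2) * hG0 + (((-950827632 : ℂ)/49)*x*y*z^6) * hG0 + (((-2799833 : ℂ)/49)*x^4*y*z) * hG0 + (((-38663423565 : ℂ)/343)*x^2*z^4) * hG0 + (((163365592021822347 : ℂ)/18865)*y*z^3) * hG0 + (((-316672149 : ℂ)/1715)*x*z) * hG0 + (((-790572882 :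 ℂ)/343)*x^8*z^6) * hG1 + (((59850381994040 : ℂ)/343)*x*z^13) * hG1 + (((1260538 : ℂ)/343)*x^11*z) * hG1 + (((70457253067 : ℂ)/343)*x^4*z^8) * hG1 + (((-29171216 : ℂ)/343)*x^7*z^3) * hG1 + (((-2092669261388241 : ℂ)/12005)*z^10) * hG1 + (((-84086620917 : ℂ)/1715)*x^3*z^5) * hG1 + (((-1890807 : ℂ)/1715)*x^6) * hG1 + (((1184104547 : ℂ)/1715)*x^2*z^2) * hG1 + (((1010482 : ℂ)/343)*x^9*y^3*z^2) * hG2 + (((-49582940 : ℂ)/343)*x^10*z^4) * hG2 + (((-394781200 : ℂ)/343)*x^7*y^2*z^5) * hG2 + (((-7657814120 : ℂ)/343)*x^5*y*z^8) * hG2 + (((-74604235200 : ℂ)/343)*x^2*y^3*z^9) * hG2 + (((3731002332882 : ℂ)/343)*x^3*z^11) * hG2 + (((29887888879420 : ℂ)/343)*y^2*z^12) * hG2 + (((630269 : ℂ)/343)*x^10*y^2) * hG2 + (((-12656670 : ℂ)/343)*x^8*y*z^3) * hG2 + (((-93271371 : ℂ)/343)*x^5*y^3*z^4) * hG2 + (((3617618894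 : ℂ)/343)*x^6*z^6) * hG2 + (((4916601348 : ℂ)/49)*x^3*y^2*z^7) * hG2 + (((2574563758560 : ℂ)/343)*x*y*z^10) * hG2 + (((-690761 : ℂ)/343)*x^9*z) * hG2 + (((-15851275 : ℂ)/343)*x^6*y^2*z^2) * hG2 + (((898162812 : ℂ)/343)*x^4*y*z^5) * hG2 + (((950827632 : ℂ)/49)*x*y^3*z^6) * hG2 + (((-241451630043 : ℂ)/343)*x^2*z^8) * hG2 + (((1890807 : ℂ)/343)*x^7*y) * hG2 + (((2799833 : ℂ)/49)*x^4*y^3*z) * hG2 + (((-1027324157 : ℂ)/343)*x^5*z^3) * hG2 + (((-8309046395 : ℂ)/343)*x^2*y^2*z^4) * hG2 + (((-228970588148 : ℂ)/343)*y*z^7) * hG2 + (((-78139805 : ℂ)/49)*x^3*y*z^2) * hG2 + (((-4697246996 : ℂ)/343)*y^3*z^3) * hG2 + (((1065024765279 : ℂ)/1715)*x*z^5) * hG2 + (((1890807 : ℂ)/1715)*x^4) * hG2 + (((318562956 : ℂ)/1715)*x*y^2*z) * hG2 + (((127425157354254216 : ℂ)/16807)*z^2) * hG2 + (((579848808275990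 : ℂ)/343)*z^15) * hG3 + (((22812409263138 : ℂ)/343)*y^2*z^11) * hG3 + (((-2636022959559 : ℂ)/343)*x*y*z^9) * hG3 + (((44460184926884833669 : ℂ)/4621925)*y*z^6) * hG3 + (((-163364271833461449 : ℂ)/3773)*x*z^4) * hG3 + (((-1890807 : ℂ)/1715)*x*y^2) * hG3 + (((950016447 : ℂ)/1715)*z) * hG3 + (((-20160007311628588 : ℂ)/16807)*y*z^6) * hG4 + (((-212375670884408088 : ℂ)/84035)*z) * hG4 + (((391607628196819 : ℂ)/2401)*x*z^9) * hG6 + (((78961354705913619 : ℂ)/132055)*z^6) * hG6 + (((4896022464947061208 : ℂ)/924385)*z^4) * hG7 + (((-729288252673090 : ℂ)/343)*z^12) * hG8 + (((1274251534971332014 : ℂ)/16807)*x*z) * hG8 + (((-1352447807657676 : ℂ)/1715)*y*z^8) * hG11 + (((-3342906471543977 : ℂ)/2401)*x*z^6) * hG11 + (((-11435748975354440342 : ℂ)/660275)*z^3) * hG11 + (((-212375276208754389 : ℂ)/12005)*z) * hG12 + (((16660237135751 : ℂ)/343)*z^11) * hG13 + (((2258100241642671 : ℂ)/12005)*z^7)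 * hG16 + (((-163365333673237567 : ℂ)/60025)*y^2*z^3) * hG16 + (((-171068363517 : ℂ)/420175)) * hG22
  have hP51 : x^51 = ((435373753668930 : ℂ)/5764801)*y^3*z^2 + ((405536862405210 : ℂ)/5764801)*x*z^4 + ((271451099383661 : ℂ)/5764801)*x*y^2 + ((-1112361709693000 : ℂ)/5764801)*z := by
    linear_combination (x^14) * hP37 + (((-554987115120 : ℂ)/117649)*x^11*z^3) * hG0 + (((40974815033839000 : ℂ)/117649)*x^4*z^10) * hG0 + (((55498711512 : ℂ)/117649)*x^9*y*z^2) * hG0 + (((29571215565100 : ℂ)/117649)*x^7*z^5) * hG0 + (((-4097481503383900 : ℂ)/117649)*x^2*y*z^9) * hG0 + (((2894653486206872143 : ℂ)/117649)*z^12) * hG0 + (((34602800784 : ℂ)/117649)*x^10) * hG0 + (((-732196386869 : ℂ)/16807)*x^5*y*z^4) * hG0 + (((-1769565748525524 : ℂ)/117649)*x^3*z^7) * hG0 + (((-11631568045560 : ℂ)/117649)*x^6*z^2) * hG0 + (((366086160802986 : ℂ)/117649)*x*y*z^6) * hG0 + (((1076072560020 : ℂ)/117649)*x^4*y*z) * hG0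 + (((2122935231276759 : ℂ)/117649)*x^2*z^4) * hG0 + (((-8975204099852992678487 : ℂ)/6470695)*y*z^3) * hG0 + (((17386789228524 : ℂ)/588245)*x*z) * hG0 + (((43420561742972 : ℂ)/117649)*x^8*z^6) * hG1 + (((-3287156989606325890 : ℂ)/117649)*x*z^13) * hG1 + (((-69205601568 : ℂ)/117649)*x^11*z) * hG1 + (((-3871834976936006 : ℂ)/117649)*x^4*z^8) * hG1 + (((1602602536296 : ℂ)/117649)*x^7*z^3) * hG1 + (((3284741998522989637 : ℂ)/117649)*z^10) * hG1 + (((659575888968401 : ℂ)/84035)*x^3*z^5) * hG1 + (((103808402352 : ℂ)/588245)*x^6) * hG1 + (((-65014578610092 : ℂ)/588245)*x^2*z^2) * hG1 + (((-55498711512 : ℂ)/117649)*x^9*y^3*z^2) * hG2 + (((2723240266693 : ℂ)/117649)*x^10*z^4) * hG2 + (((21682531515730 : ℂ)/117649)*x^7*y^2*z^5) * hG2 + (((60084202299465 : ℂ)/16807)*x^5*y*z^8) * hG2 + (((4097481503383900 : ℂ)/117649)*x^2*y^3*z^9) * hG2 + (((-204917495730937972 : ℂ)/117649)*x^3*z^11)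 * hG2 + (((-1641529754051470995 : ℂ)/117649)*y^2*z^12) * hG2 + (((-34602800784 : ℂ)/117649)*x^10*y^2) * hG2 + (((695411772120 : ℂ)/117649)*x^8*y*z^3) * hG2 + (((732196386869 : ℂ)/16807)*x^5*y^3*z^4) * hG2 + (((-28403166807409 : ℂ)/16807)*x^6*z^6) * hG2 + (((-1891295859504336 : ℂ)/117649)*x^3*y^2*z^7) * hG2 + (((-141423044763987010 : ℂ)/117649)*x*y*z^10) * hG2 + (((37988536500 : ℂ)/117649)*x^9*z) * hG2 + (((870842445360 : ℂ)/117649)*x^6*y^2*z^2) * hG2 + (((-49392424502297 : ℂ)/117649)*x^4*y*z^5) * hG2 + (((-366086160802986 : ℂ)/117649)*x*y^3*z^6) * hG2 + (((13284956404417819 : ℂ)/117649)*x^2*z^8) * hG2 + (((-103808402352 : ℂ)/117649)*x^7*y) * hG2 + (((-1076072560020 : ℂ)/117649)*x^4*y^3*z) * hG2 + (((56406669281220 : ℂ)/117649)*x^5*z^3) * hG2 + (((456225843547641 : ℂ)/117649)*x^2*y^2*z^4) * hG2 + (((1797656884132590 : ℂ)/16807)*y*z^7) * hG2 + (((30033383348340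 : ℂ)/117649)*x^3*y*z^2) * hG2 + (((257916107482440 : ℂ)/117649)*y^3*z^3) * hG2 + (((-8354065430298662 : ℂ)/84035)*x*z^5) * hG2 + (((-103808402352 : ℂ)/588245)*x^4) * hG2 + (((-17490597630876 : ℂ)/588245)*x*y^2*z) * hG2 + (((-714352954543566741598 : ℂ)/588245)*z^2) * hG2 + (((-4549568916772652720 : ℂ)/16807)*z^15) * hG3 + (((-179017676022200164 : ℂ)/16807)*y^2*z^11) * hG3 + (((144982705700907161 : ℂ)/117649)*x*y*z^9) * hG3 + (((-348944882830781786530812 : ℂ)/226474325)*y*z^6) * hG3 + (((1282161658696153556264 : ℂ)/184877)*x*z^4) * hG3 + (((103808402352 : ℂ)/588245)*x*y^2) * hG3 + (((-52160367685572 : ℂ)/588245)*z) * hG3 + (((158223924401889983516 : ℂ)/823543)*y*z^6) * hG4 + (((1666826767097649071591 : ℂ)/4117715)*z) * hG4 + (((-3073601548256990008 : ℂ)/117649)*x*z^9) * hG6 + (((-394372145874743017384 : ℂ)/4117715)*z^6) * hG6 + (((-38426369896885840550214 : ℂ)/45294865)*z^4) * hG7 + (((40054631187665924015 : ℂ)/117649)*z^12)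 * hG8 + (((-204100837981606976036 : ℂ)/16807)*x*z) * hG8 + (((1516323495814222071 : ℂ)/12005)*y*z^8) * hG11 + (((26236453547897839143 : ℂ)/117649)*x*z^6) * hG11 + (((89753276656431466435811 : ℂ)/32353475)*z^3) * hG11 + (((11667765690615167530093 : ℂ)/4117715)*z) * hG12 + (((-261436760538410481 : ℂ)/33614)*z^11) * hG13 + (((-3544540471828837470 : ℂ)/117649)*z^7) * hG16 + (((1282169987781011592041 : ℂ)/2941225)*y^2*z^3) * hG16 + (((1341995661772561 : ℂ)/20588575)) * hG22
  refine ⟨by linear_combination ((-43690996 : ℂ)) * hP14 + ((-88428830 : ℂ)) * hP28 + ((131296284 : ℂ)) * hP42 + ((823543 : ℂ)) * hP56, by linear_combination (((698836612381093125 : ℂ)/482785886336)) * hP11 + (((1414416628604138929 : ℂ)/482785886336)) * hP25 + (((-2100081171641123825 : ℂ)/482785886336)) * hP39 + (((-13172552129994565 : ℂ)/482785886336)) * hP53, by linear_combination (((-18202975872921601 : ℂ)/241392943168)) * hP9 + (((-36840555850385553 : ℂ)/241392943168)) * hP23 + (((54700188801399813 : ℂ)/241392943168)) * hP37 + (((343101528964173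 : ℂ)/241392943168)) * hP51⟩

set_option maxHeartbeats 4000000 in
theorem backward_lemma (t y z : ℂ)
    (hy : y = ((13172552129994565 : ℂ)/482785886336)*t^53 + ((2100081171641123825 : ℂ)/482785886336)*t^39 + ((-1414416628604138929 : ℂ)/482785886336)*t^25 + ((-698836612381093125 : ℂ)/482785886336)*t^11) (hz : z = ((-343101528964173 : ℂ)/241392943168)*t^51 + ((-54700188801399813 : ℂ)/241392943168)*t^37 + ((36840555850385553 : ℂ)/241392943168)*t^23 + ((18202975872921601 : ℂ)/241392943168)*t^9)
    (ht : (823543 : ℂ)*t^56 + (131296284 : ℂ)*t^42 + (-88428830 : ℂ)*t^28 + (-43690996 : ℂ)*t^14 + (-1 : ℂ) = 0) :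
    ((5 : ℂ)*t^4*z + y^5 - (10 : ℂ)*t*y^2*z^2 + ((3 : ℂ)*t^2*y + z^3) = 0) ∧
    ((5 : ℂ)*t*y^4 + z^5 - (10 : ℂ)*t^2*y*z^2 + (t^3 + (3 : ℂ)*y^2*z) = 0) ∧
    (t^5 + (5 : ℂ)*y*z^4 - (10 : ℂ)*t^2*y^2*z + ((3 : ℂ)*t*z^2 + y^3) = 0) ∧
    ((2 : ℂ)*(t^3*y + t*z^3 + y^3*z) - 6 = 0) ∧
    (t^5*z + t*y^5 + y*z^5 - (5 : ℂ)*t^2*y^2*z^2 + (t^3*y + t*z^3 + y^3*z) - 1 = 0) := by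
  subst hy; subst hz
  refine ⟨by linear_combination (((481574352834893527519335279562791724438011009963579330779064474911049221875 : ℂ)/26228462166207511842550831219080188158968805036928245170176)*t^209 + ((42260471318832695032564621378492498277190724493535800671657840972483628125 : ℂ)/3609255836825032591516558582507250331494262424236720128)*t^195 + ((73235570342992401085245283900018657230799139486013552471407506214574477464753125 : ℂ)/26228462166207511842550831219080188158968805036928245170176)*t^181 + ((592834532308170391882826145621557803704063409322092681114822041920192861564978125 : ℂ)/2017574012785193218657756247621552935305292695148326551552)*t^167 + ((147666277768068628662001104449733978479514806607732917281526468759456597239827773375 : ℂ)/13114231083103755921275415609540094079484402518464122585088)*t^153 + ((-417650789401287469493402478106022379210514759198032250550587053969570074823876132125 : ℂ)/13114231083103755921275415609540094079484402518464122585088)*t^139 + ((220380720336512082181605253712405066418863480103775279801734100226703532667823370325 : ℂ)/13114231083103755921275415609540094079484402518464122585088)*t^125 + ((227798877756907290557430532498261267870343208667299086490265094594062284783280740425 : ℂ)/13114231083103755921275415609540094079484402518464122585088)*t^111 + ((-22659212517684642871130195430315058184402859063147028424386886255524111518696744549 : ℂ)/2017574012785193218657756247621552935305292695148326551552)*t^97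 + ((-152208659918065916038446313081721175955372361265526040314355388683954136261470819565 : ℂ)/26228462166207511842550831219080188158968805036928245170176)*t^83 + ((47907906312395311095917683804517925953891125739427576475453361238395782338501791777 : ℂ)/26228462166207511842550831219080188158968805036928245170176)*t^69 + ((30885023817252302152989080013100355091671188558169717701702888336891788837010439477 : ℂ)/26228462166207511842550831219080188158968805036928245170176)*t^55 + ((987737950432982090476421631474285808393457466996184185291419605322493 : ℂ)/6790914696487609503768751659651299255728996352)*t^41 + ((-8468561533653771206292153030476507361514298730497 : ℂ)/14066100291426911775646459770437632)*t^27 + ((1914480078414063365 : ℂ)/482785886336)*t^13) * ht,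
    by linear_combination (((-5773338038983582162158915789654543752162153256755098559307617539851 : ℂ)/819639442693984745079713475596255879967775157404007661568)*t^199 + ((-283210794418515994153027401025457430244367138704743170821554909074559 : ℂ)/63049187899537288083054882738173529228290396723385204736)*t^185 + ((-877982300267686656174184865374449686121091218301011956030606045709532869 : ℂ)/819639442693984745079713475596255879967775157404007661568)*t^171 + ((-7106966892713052119057769277672099712082739317099800178141135007715832925 : ℂ)/63049187899537288083054882738173529228290396723385204736)*t^157 + ((-1769634115620147269408661851904353327706854098055790440629461138922536814183 : ℂ)/409819721346992372539856737798127939983887578702003830784)*t^143 + ((5111641602560316676047476344472858537865953684397189533087539983272432360665 : ℂ)/409819721346992372539856737798127939983887578702003830784)*t^129 + ((2804076825186412209304735813068089177263977075344889895515065289345478536091 : ℂ)/409819721346992372539856737798127939983887578702003830784)*t^115 + ((-14043596472251636421462728620177588387721997255596008562128378058560594947489 : ℂ)/409819721346992372539856737798127939983887578702003830784)*t^101 + ((590546640904875662435420042113914666644824094298145682019762936354723454509 : ℂ)/63049187899537288083054882738173529228290396723385204736)*t^87 + ((13461956152913080468876719917412245253011780478605392267066326487413631622033 : ℂ)/819639442693984745079713475596255879967775157404007661568)*t^73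 + ((-44709943709111275003917809628410709034355951369878803848738398575877605155 : ℂ)/19061382388232203373946825013866415813204073428000178176)*t^59 + ((-2870696874536932523465833880171623032362403411591317457871049746491489703125 : ℂ)/819639442693984745079713475596255879967775157404007661568)*t^45 + ((-31408074738912773188563143017530659222321863530961583 : ℂ)/56264401165707647102585839081750528)*t^31 + (43690996 : ℂ)*t^17 + (-1 : ℂ)*t^3) * ht,
    by linear_combination (((1108266647953833571988875556587542159752038967652779960820813688655775 : ℂ)/1639278885387969490159426951192511759935550314808015323136)*t^201 + ((54365961714515901275075607538619520157165059223845872411360278856444175 : ℂ)/126098375799074576166109765476347058456580793446770409472)*t^187 + ((168540014366564871670282114191992950905782360397738943936165568637056792985 : ℂ)/1639278885387969490159426951192511759935550314808015323136)*t^173 + ((1364314539777178224471467591077377920268817099701088730262967608720980902545 : ℂ)/126098375799074576166109765476347058456580793446770409472)*t^159 + ((339830626032234141750256625438574495858524041552904905703336803351871601888795 : ℂ)/819639442693984745079713475596255879967775157404007661568)*t^145 + ((-961148694681901576147196481089330465323404244867277787319457138169560014596705 : ℂ)/819639442693984745079713475596255879967775157404007661568)*t^131 + ((507138584128831362113969473487875175443259832478056446399806914272832240190665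 : ℂ)/819639442693984745079713475596255879967775157404007661568)*t^117 + ((524277236268433838804472867234750179895994325608949535666551226760305396861245 : ℂ)/819639442693984745079713475596255879967775157404007661568)*t^103 + ((-52146056989256257579413434213024897702111513726909926107334658048470171596825 : ℂ)/126098375799074576166109765476347058456580793446770409472)*t^89 + ((-350318124163674915729158955224542953597185194794076649895985125125429629980145 : ℂ)/1639278885387969490159426951192511759935550314808015323136)*t^75 + ((110252240186561148879496920334644371360722954945461646804062843764646406836805 : ℂ)/1639278885387969490159426951192511759935550314808015323136)*t^61 + ((71083203402573208322994915449747441140645713268071545667545040868668502912281 : ℂ)/1639278885387969490159426951192511759935550314808015323136)*t^47 + ((602745683132710433335988267730365200851913071254635889 : ℂ)/112528802331415294205171678163501056)*t^33 + ((-991499093391962864139761485930499 : ℂ)/58270553011309277876224)*t^19 + (-1 : ℂ)*t^5) * ht,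
    by linear_combination (((-952239409280783862964418138530432272659257650691241283375 : ℂ)/13581829392975219007537503319302598511457992704)*t^154 + ((-113860628213951571697960197915998997615354935398275396226125 : ℂ)/3395457348243804751884375829825649627864498176)*t^140 + ((-4518988007336309934710286995699510830715994042399239679084675 : ℂ)/848864337060951187971093957456412406966124544)*t^126 + ((-940193417470650209035239734285575118084452051445158134011526725 : ℂ)/3395457348243804751884375829825649627864498176)*t^112 + ((134689626193933377170073961635489294608886818808534352937759193 : ℂ)/234169472292676189785129367574182732956172288)*t^98 + ((-357845024053314925280170013140302938727641953016407556456477935 : ℂ)/3395457348243804751884375829825649627864498176)*t^84 + ((-502266444875575662877714813137473493719749968455347712644763577 : ℂ)/1697728674121902375942187914912824813932249088)*t^70 + ((116372438426428701309008130892696977157854995626327583383210529 : ℂ)/3395457348243804751884375829825649627864498176)*t^56 + ((863364741083464605949038804288979456884990730787641515393524093 : ℂ)/13581829392975219007537503319302598511457992704)*t^42 + ((73631355782290970695749331964293440884833267963903 : ℂ)/7033050145713455887823229885218816)*t^28 + ((-62581352073906798843 : ℂ)/241392943168)*t^14 + (6 : ℂ)) * ht,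
    by linear_combination (((-76049596282591830152934555814453258559404991542362809112817024789119813031300909815 : ℂ)/395710354816960504768972485288661501093293956485255751728641603534848)*t^252 + ((-30311197452752446898813396552653805533637566736211529122741278608458909843797705041965 : ℂ)/197855177408480252384486242644330750546646978242627875864320801767424)*t^238 + ((-19289055254693809181535178670942339883692516794803073721716395773474565825074001652383681 : ℂ)/395710354816960504768972485288661501093293956485255751728641603534848)*t^224 + ((-29381453894931759284497879105945503027213500587906784275911244240966952438556492827746333 : ℂ)/3804907257855389468932427743160206741281672658512074535852323110912)*t^210 + ((-239423018599515022738257216568056037670682614436876174233233455590845679121721126581998029739 : ℂ)/395710354816960504768972485288661501093293956485255751728641603534848)*t^196 + ((-3585605578085622785557847178131297404491767778679699994861450938374291468032950502603624293825 : ℂ)/197855177408480252384486242644330750546646978242627875864320801767424)*t^182 + ((26149069283939000675183107163009029762299903044720490180361976246585102745249081449326873816219 : ℂ)/395710354816960504768972485288661501093293956485255751728641603534848)*t^168 + ((-19829539187716673669600163789923874320805925849144901678295068026723630405665212053384381955 : ℂ)/426412020276897095656220350526574893419497797936698008328277590016)*t^154 + ((-1811688594612661069881421891011319208155139894660913895911504648447553940829478271146158192121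 : ℂ)/30439258062843115751459421945281653930253381268096596286818584887296)*t^140 + ((12754254541213512492989970659060238038908220718255445226276655692136315180331449254929241638241 : ℂ)/197855177408480252384486242644330750546646978242627875864320801767424)*t^126 + ((9521087202480129916541791651607748769088991652172541739647669083788497625221913218456986210957 : ℂ)/395710354816960504768972485288661501093293956485255751728641603534848)*t^112 + ((-1338046314446903892036833433890546945445545130422680541528622177377857104082253251560577925691 : ℂ)/49463794352120063096121560661082687636661744560656968966080200441856)*t^98 + ((-3832775947039081143570684572080540628716500436005470579934047519054147902645057838788967675 : ℂ)/428721944547086137344498900637769773665540581240797130800261758976)*t^84 + ((59687008125721344090438549764219191466684337963720874664060294509685673284531155019893817793 : ℂ)/15219629031421557875729710972640826965126690634048298143409292443648)*t^70 + ((789445642964117248589988641923210025740604838821896698125589242102142294777912410546919530969 : ℂ)/395710354816960504768972485288661501093293956485255751728641603534848)*t^56 + ((6145305188995196496601994114873244597878975160671091180874742009755255 : ℂ)/27163658785950438015075006638605197022915985408)*t^42 + ((19976055408977034661524024435323519564383766546431 : ℂ)/14066100291426911775646459770437632)*t^28 + ((-20430965568127380733 : ℂ)/482785886336)*t^14 +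 (1 : ℂ)) * ht⟩


section PolyStuff

noncomputable def pp : Polynomial ℂ :=
  823543 * Polynomial.X^56 + 131296284 * Polynomial.X^42 - 88428830 * Polynomial.X^28 - 43690996 * Polynomial.X^14 - 1

lemma pp_natDegree : pp.natDegree = 56 := by
  unfold pp; compute_degree!

lemma pp_ne_zero : pp ≠ 0 := by
  intro h
  have := pp_natDegree
  rw [h] at this
  simp at this

lemma pp_deriv : Polynomial.derivative pp = 46118408 * Polynomial.X^55 + 5514443928 * Polynomial.X^41 - 2476007240 * Polynomial.X^27
    - 611673944 * Polynomial.X^13 := by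
  unfold pp
  simp [map_ofNat]
  ring

lemma pp_eval (t : ℂ) : pp.eval t = 823543*t^56 + 131296284*t^42 - 88428830*t^28
    - 43690996*t^14 - 1 := by
  simp [pp]

lemma pp_sep : pp.Separable := by
  rw [Polynomial.separable_def]
  have hD : (26105207749066556488548352 : Polynomial ℂ) = Polynomial.C (26105207749066556488548352 : ℂ) :=
    (map_ofNat Polynomial.C _).symm
  have h1 : (Polynomial.C ((26105207749066556488548352 : ℂ)⁻¹)) * (26105207749066556488548352 : Polynomial ℂ) = 1 := by
    rw [hD, ← Polynomial.C_mul, inv_mul_cancel₀ (by norm_num), Polynomial.C_1]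
  have key : (-105671822060197760395199416 * Polynomial.X^14 - 26105207749066556488548352
        + 1968255876257299161101240 * Polynomial.X^42 + 235347166844868059935745344 * Polynomial.X^28) * pp
      + (1864657869120313523560357 * Polynomial.X + 3773993540731343839575813 * Polynomial.X^15
        - 5603503972933323687493529 * Polynomial.X^29 - 35147426361737485019665 * Polynomial.X^43) * Polynomial.derivative pp
      = (26105207749066556488548352 : Polynomial ℂ) := by
    rw [pp_deriv]; unfold pp; ring
  refine ⟨Polynomial.C ((26105207749066556488548352 : ℂ)⁻¹) * (-105671822060197760395199416 * Polynomial.X^14 - 26105207749066556488548352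
        + 1968255876257299161101240 * Polynomial.X^42 + 235347166844868059935745344 * Polynomial.X^28),
      Polynomial.C ((26105207749066556488548352 : ℂ)⁻¹) * (1864657869120313523560357 * Polynomial.X + 3773993540731343839575813 * Polynomial.X^15
        - 5603503972933323687493529 * Polynomial.X^29 - 35147426361737485019665 * Polynomial.X^43), ?_⟩
  linear_combination (Polynomial.C ((26105207749066556488548352 : ℂ)⁻¹)) * key + h1

lemma pp_toFinset_card : pp.roots.toFinset.card = 56 := by
  rw [Multiset.toFinset_card_of_nodup (Polynomial.nodup_roots pp_sep), ← pp_natDegree]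
  exact Polynomial.splits_iff_card_roots.mp (IsAlgClosed.splits pp)

end PolyStuff

noncomputable def Yf (t : ℂ) : ℂ := ((13172552129994565 : ℂ)/482785886336)*t^53 + ((2100081171641123825 : ℂ)/482785886336)*t^39 + ((-1414416628604138929 : ℂ)/482785886336)*t^25 + ((-698836612381093125 : ℂ)/482785886336)*t^11
noncomputable def Zf (t : ℂ) : ℂ := ((-343101528964173 : ℂ)/241392943168)*t^51 + ((-54700188801399813 : ℂ)/241392943168)*t^37 + ((36840555850385553 : ℂ)/241392943168)*t^23 + ((18202975872921601 : ℂ)/241392943168)*t^9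
noncomputable def vv (t : ℂ) : Fin 4 → ℂ := ![t, Yf t, Zf t, 1]

lemma vv_ne (t : ℂ) : vv t ≠ 0 := by
  intro h
  have := congrFun h 3
  simp [vv] at this

lemma evalQ (v : Fin 4 → ℂ) : eval v Q = v 0^5*v 2 + v 0*v 1^5 + v 1*v 2^5
    - 5*v 0^2*v 1^2*v 2^2 + (v 0^3*v 1 + v 0*v 2^3 + v 1^3*v 2)*v 3^2 - v 3^6 := by
  simp [Q]

lemma evalPD0 (v : Fin 4 → ℂ) : eval v (pderiv 0 Q) =
    5*v 0^4*v 2 + v 1^5 - 10*v 0*v 1^2*v 2^2 + (3*v 0^2*v 1 + v 2^3)*v 3^2 := by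
  simp [Q, pderiv_X_self, pderiv_X_of_ne, pderiv_five]; ring

lemma evalPD1 (v : Fin 4 → ℂ) : eval v (pderiv 1 Q) =
    5*v 0*v 1^4 + v 2^5 - 10*v 0^2*v 1*v 2^2 + (v 0^3 + 3*v 1^2*v 2)*v 3^2 := by
  simp [Q, pderiv_X_self, pderiv_X_of_ne, pderiv_five]; ring

lemma evalPD2 (v : Fin 4 → ℂ) : eval v (pderiv 2 Q) =
    v 0^5 + 5*v 1*v 2^4 - 10*v 0^2*v 1^2*v 2 + (3*v 0*v 2^2 + v 1^3)*v 3^2 := by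
  simp [Q, pderiv_X_self, pderiv_X_of_ne, pderiv_five]; ring

lemma evalPD3 (v : Fin 4 → ℂ) : eval v (pderiv 3 Q) =
    2*(v 0^3*v 1 + v 0*v 2^3 + v 1^3*v 2)*v 3 - 6*v 3^5 := by
  simp [Q, pderiv_X_self, pderiv_X_of_ne, pderiv_five]; ring

set_option maxHeartbeats 1000000 in
/-- The singular locus of the sextic surface `Q = 0` consists of exactly 56
points of `ℙ³(ℂ)`. -/
theorem card_singular_locus_eq_56 :
    {x : Projectivization ℂ (Fin 4 → ℂ) |
        ∃ (v : Fin 4 → ℂ) (hv : v ≠ 0), x = Projectivization.mk ℂ v hv ∧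
          eval v Q = 0 ∧ ∀ i : Fin 4, eval v (pderiv i Q) = 0}.ncard = 56 := by
  classical
  have hset : {x : Projectivization ℂ (Fin 4 → ℂ) |
        ∃ (v : Fin 4 → ℂ) (hv : v ≠ 0), x = Projectivization.mk ℂ v hv ∧
          eval v Q = 0 ∧ ∀ i : Fin 4, eval v (pderiv i Q) = 0}
      = (fun t : ℂ => Projectivization.mk ℂ (vv t) (vv_ne t)) '' ↑(pp.roots.toFinset) := by
    ext P
    simp only [Set.mem_setOf_eq, Set.mem_image, Finset.mem_coe, Multiset.mem_toFinset]
    constructor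
    · rintro ⟨v, hv, rfl, hQ0, hD⟩
      have h0 := hD 0; rw [evalPD0] at h0
      have h1 := hD 1; rw [evalPD1] at h1
      have h2 := hD 2; rw [evalPD2] at h2
      have h3 := hD 3; rw [evalPD3] at h3
      by_cases hd : v 3 = 0
      · exfalso
        rw [hd] at h0 h1 h2
        obtain ⟨ha, hb, hc⟩ := nss_lemma (v 0) (v 1) (v 2)
          (by linear_combination h0) (by linear_combination h1) (by linear_combination h2)
        apply hv
        funext i; fin_cases i
        · exact ha
        · exact hb
        · exact hc
        · exact hd
      · have hd5 : v 3 ^ 5 ≠ 0 := pow_ne_zero _ hd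
        have hE1 : (5 : ℂ)*(v 0/v 3)^4*(v 2/v 3) + (v 1/v 3)^5
            - (10 : ℂ)*(v 0/v 3)*(v 1/v 3)^2*(v 2/v 3)^2 + (3 : ℂ)*(v 0/v 3)^2*(v 1/v 3)
            + (v 2/v 3)^3 = 0 := by
          simp only [div_eq_mul_inv]
          have hinv : (v 3)⁻¹ * v 3 = 1 := inv_mul_cancel₀ hd
          linear_combination ((v 3)⁻¹)^5 * h0 + (-(3*v 0^2*v 1 + v 2^3)*((v 3)⁻¹)^3*(((v 3)⁻¹)*v 3 + 1)) * hinv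
        have hE2 : (5 : ℂ)*(v 0/v 3)*(v 1/v 3)^4 + (v 2/v 3)^5
            - (10 : ℂ)*(v 0/v 3)^2*(v 1/v 3)*(v 2/v 3)^2 + (v 0/v 3)^3
            + (3 : ℂ)*(v 1/v 3)^2*(v 2/v 3) = 0 := by
          simp only [div_eq_mul_inv]
          have hinv : (v 3)⁻¹ * v 3 = 1 := inv_mul_cancel₀ hd
          linear_combination ((v 3)⁻¹)^5 * h1 + (-(v 0^3 + 3*v 1^2*v 2)*((v 3)⁻¹)^3*(((v 3)⁻¹)*v 3 + 1)) * hinv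
        have hE3 : (v 0/v 3)^5 + (5 : ℂ)*(v 1/v 3)*(v 2/v 3)^4
            - (10 : ℂ)*(v 0/v 3)^2*(v 1/v 3)^2*(v 2/v 3) + (3 : ℂ)*(v 0/v 3)*(v 2/v 3)^2
            + (v 1/v 3)^3 = 0 := by
          simp only [div_eq_mul_inv]
          have hinv : (v 3)⁻¹ * v 3 = 1 := inv_mul_cancel₀ hd
          linear_combination ((v 3)⁻¹)^5 * h2 + (-(3*v 0*v 2^2 + v 1^3)*((v 3)⁻¹)^3*(((v 3)⁻¹)*v 3 + 1)) * hinv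
        have hE4 : (v 0/v 3)^3*(v 1/v 3) + (v 0/v 3)*(v 2/v 3)^3 + (v 1/v 3)^3*(v 2/v 3) - 3
            = 0 := by
          simp only [div_eq_mul_inv]
          have hinv : (v 3)⁻¹ * v 3 = 1 := inv_mul_cancel₀ hd
          linear_combination ((1 : ℂ)/2)*((v 3)⁻¹)^5 * h3 + (-(v 0^3*v 1 + v 0*v 2^3 + v 1^3*v 2)*((v 3)⁻¹)^4 + 3*(((v 3)⁻¹)^4*v 3^4 + ((v 3)⁻¹)^3*v 3^3 + ((v 3)⁻¹)^2*v 3^2 + ((v 3)⁻¹)*v 3 + 1)) * hinv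
        obtain ⟨hp, hy, hz⟩ := chain_lemma (v 0/v 3) (v 1/v 3) (v 2/v 3) hE1 hE2 hE3 hE4
        refine ⟨v 0/v 3, ?_, ?_⟩
        · rw [Polynomial.mem_roots pp_ne_zero]
          show pp.eval _ = 0
          rw [pp_eval]
          linear_combination hp
        · rw [Projectivization.mk_eq_mk_iff']
          refine ⟨(v 3)⁻¹, ?_⟩
          funext i; fin_cases i
          · show (v 3)⁻¹ * v 0 = vv (v 0/v 3) 0
            simp [vv]
            rw [inv_mul_eq_div]
          · show (v 3)⁻¹ * v 1 = vv (v 0/v 3) 1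
            simp only [vv, Matrix.cons_val_one, Matrix.head_cons, Matrix.cons_val_zero]
            rw [inv_mul_eq_div, Yf]
            linear_combination hy
          · show (v 3)⁻¹ * v 2 = vv (v 0/v 3) 2
            simp only [vv, Matrix.cons_val_two, Matrix.tail_cons, Matrix.head_cons]
            rw [inv_mul_eq_div, Zf]
            linear_combination hz
          · show (v 3)⁻¹ * v 3 = vv (v 0/v 3) 3
            simp only [vv, Matrix.cons_val_three, Matrix.tail_cons, Matrix.head_cons]
            exact inv_mul_cancel₀ hd
    · rintro ⟨t, ht, rfl⟩
      rw [Polynomial.mem_roots pp_ne_zero] at ht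
      have hroot : (823543 : ℂ)*t^56 + (131296284 : ℂ)*t^42 + (-88428830 : ℂ)*t^28
          + (-43690996 : ℂ)*t^14 + (-1 : ℂ) = 0 := by
        have := ht
        rw [Polynomial.IsRoot, pp_eval] at this
        linear_combination this
      obtain ⟨b1, b2, b3, b4, bq⟩ := backward_lemma t (Yf t) (Zf t) (by rw [Yf]) (by rw [Zf])
        (by linear_combination hroot)
      refine ⟨vv t, vv_ne t, rfl, ?_, ?_⟩
      · rw [evalQ]
        simp only [vv, Matrix.cons_val_zero, Matrix.cons_val_one, Matrix.head_cons,
          Matrix.cons_val_two, Matrix.cons_val_three, Matrix.tail_cons]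
        linear_combination bq
      · intro i; fin_cases i
        · show eval (vv t) (pderiv 0 Q) = 0
          rw [evalPD0]
          simp only [vv, Matrix.cons_val_zero, Matrix.cons_val_one, Matrix.head_cons,
            Matrix.cons_val_two, Matrix.cons_val_three, Matrix.tail_cons]
          linear_combination b1
        · show eval (vv t) (pderiv 1 Q) = 0
          rw [evalPD1]
          simp only [vv, Matrix.cons_val_zero, Matrix.cons_val_one, Matrix.head_cons,
            Matrix.cons_val_two, Matrix.cons_val_three, Matrix.tail_cons]
          linear_combination b2
        · show eval (vv t) (pderiv 2 Q) = 0
          rw [evalPD2]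
          simp only [vv, Matrix.cons_val_zero, Matrix.cons_val_one, Matrix.head_cons,
            Matrix.cons_val_two, Matrix.cons_val_three, Matrix.tail_cons]
          linear_combination b3
        · show eval (vv t) (pderiv 3 Q) = 0
          rw [evalPD3]
          simp only [vv, Matrix.cons_val_zero, Matrix.cons_val_one, Matrix.head_cons,
            Matrix.cons_val_two, Matrix.cons_val_three, Matrix.tail_cons]
          linear_combination b4
  rw [hset]
  have hinj : Set.InjOn (fun t : ℂ => Projectivization.mk ℂ (vv t) (vv_ne t))
      ↑(pp.roots.toFinset) := by
    intro t _ t' _ h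
    simp only at h
    rw [Projectivization.mk_eq_mk_iff'] at h
    obtain ⟨a, ha⟩ := h
    have h3 := congrFun ha 3
    simp [vv] at h3
    have h0 := congrFun ha 0
    simp [vv, h3] at h0
    exact h0.symm
  rw [Set.ncard_image_of_injOn hinj, Set.ncard_coe_finset, pp_toFinset_card]
end

section
/- The polynomial Q is invariant under the linear substitution given by the matrix g₂: composing Q with the linear map x ↦ g₂·x yields Q again as a polynomial. -/
open MvPolynomial

set_option maxHeartbeats 1600000 in
/-- `Q` is invariant under the linear substitution `x ↦ g₂·x`, where
`g₂ = (1/√−7)·[[a,c,b,0],[c,b,a,0],[b,a,c,0],[0,0,0,√−7]]` with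
`a = ω² − ω⁵`, `b = ω − ω⁶`, `c = ω⁴ − ω³`, `√−7 = 1 + 2(ω + ω² + ω⁴)`
and `ω` a primitive seventh root of unity. -/
theorem Q_invariant_g2 (ω : ℂ) (hω : IsPrimitiveRoot ω 7)
    (s : ℂ) (hs : s = 1 + 2 * (ω + ω ^ 2 + ω ^ 4))
    (a b c : ℂ) (ha : a = ω ^ 2 - ω ^ 5) (hb : b = ω - ω ^ 6) (hc : c = ω ^ 4 - ω ^ 3)
    (g₂ : Matrix (Fin 4) (Fin 4) ℂ)
    (hg₂ : g₂ = s⁻¹ • !![a, c, b, 0; c, b, a, 0; b, a, c, 0; 0, 0, 0, s]) :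
    aeval (fun i : Fin 4 => ∑ j : Fin 4, C (g₂ i j) * X j) Q = Q := by
  have h7 : ω ^ 7 = 1 := hω.pow_eq_one
  have hne : ω ≠ 1 := hω.ne_one (by norm_num)
  have hΦ : ω ^ 6 + ω ^ 5 + ω ^ 4 + ω ^ 3 + ω ^ 2 + ω + 1 = 0 := by
    have h0 : (ω - 1) * (ω ^ 6 + ω ^ 5 + ω ^ 4 + ω ^ 3 + ω ^ 2 + ω + 1) = 0 := by
      linear_combination h7
    rcases mul_eq_zero.mp h0 with h | h
    · exact absurd (sub_eq_zero.mp h) hne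
    · exact h
  have hs2 : s * s = -7 := by
    rw [hs]; linear_combination (4 * ω ^ 2 - 4 * ω + 8) * hΦ
  have hs0 : s ≠ 0 := by
    intro h; rw [h, mul_zero] at hs2; norm_num at hs2
  have hinv : s⁻¹ = -s / 7 := inv_eq_of_mul_eq_one_right (by linear_combination (-1/7 : ℂ) * hs2)
  have hp3 : 7 * (s⁻¹ * a) ^ 3 - 7 * (s⁻¹ * a) ^ 2 + 1 = 0 := by
    rw [hinv, ha, hs]
    linear_combination (1 * 1 - (1) * ω - (1/7) * ω ^ 4 - (3/7) * ω ^ 5 - (29/49) * ω ^ 6 + (58/49) * ω ^ 7 - (19/49) * ω ^ 8 + (45/49) * ω ^ 9 - (2/49) * ω ^ 10 + (58/49) * ω ^ 11 - (46/49) * ω ^ 12 + (22/49) * ω ^ 13 - (60/49) * ω ^ 14 + (32/49) * ω ^ 15 - (60/49) * ω ^ 16 + (36/49) * ω ^ 17 - (24/49) * ω ^ 18 + (24/49) * ω ^ 19 - (8/49) * ω ^ 20 + (8/49) * ω ^ 21) * hΦ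
  have hq : s⁻¹ * b = 7 * (s⁻¹ * a) ^ 2 - 3 * (s⁻¹ * a) - 1 := by
    rw [hinv, ha, hb, hs]
    linear_combination (1 * 1 - (8/7) * ω - (4/7) * ω ^ 2 - (3/7) * ω ^ 3 + (1/7) * ω ^ 4 + (4/7) * ω ^ 5 - (4/7) * ω ^ 6 + (16/7) * ω ^ 7 - (8/7) * ω ^ 8 + (8/7) * ω ^ 9 - (8/7) * ω ^ 10 + (4/7) * ω ^ 11 - (4/7) * ω ^ 12) * hΦ
  have hr : s⁻¹ * c = -7 * (s⁻¹ * a) ^ 2 + 2 * (s⁻¹ * a) + 2 := by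
    rw [hinv, ha, hc, hs]
    linear_combination ((-2) * 1 + 2 * ω + (2/7) * ω ^ 2 + (3/7) * ω ^ 3 + (1/7) * ω ^ 4 - (4/7) * ω ^ 5 + (4/7) * ω ^ 6 - (16/7) * ω ^ 7 + (8/7) * ω ^ 8 - (8/7) * ω ^ 9 + (8/7) * ω ^ 10 - (4/7) * ω ^ 11 + (4/7) * ω ^ 12) * hΦ
  subst hg₂
  apply MvPolynomial.funext
  intro x
  simp only [Q, map_add, map_sub, map_mul, map_pow, aeval_X, map_ofNat, eval_add, eval_sub,
    eval_mul, eval_pow, eval_X, eval_C, eval_ofNat, map_sum, Fin.sum_univ_four,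
    Matrix.smul_apply, Matrix.of_apply, Matrix.cons_val', Matrix.cons_val_zero,
    Matrix.cons_val_one, Matrix.head_cons, Matrix.empty_val', Matrix.cons_val_fin_one,
    Matrix.head_fin_const, smul_eq_mul, mul_zero, zero_mul, add_zero, zero_add,
    Matrix.cons_val_two, Matrix.cons_val_three, Matrix.tail_cons, mul_one]
  rw [inv_mul_cancel₀ hs0, hq, hr]
  obtain ⟨p, hP⟩ : ∃ p : ℂ, s⁻¹ * a = p := ⟨_, rfl⟩
  rw [hP] at hp3 ⊢
  linear_combination ((-8) * x 2 ^ 4 * x 3 ^ 2 - (49) * p * x 2 ^ 4 * x 3 ^ 2 - (21) * p ^ 2 * x 2 ^ 4 * x 3 ^ 2 + 217 * p ^ 3 * x 2 ^ 4 * x 3 ^ 2 + 147 * p ^ 4 * x 2 ^ 4 * x 3 ^ 2 - (343) * p ^ 5 * x 2 ^ 4 * x 3 ^ 2 - (2) * x 2 ^ 6 - (7) * p ^ 2 * x 2 ^ 6 - (91) * p ^ 3 * x 2 ^ 6 + 686 * p ^ 4 * x 2 ^ 6 + 1225 * p ^ 5 * x 2 ^ 6 - (6958) * p ^ 6 * x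 2 ^ 6 - (1029) * p ^ 7 * x 2 ^ 6 + 21609 * p ^ 8 * x 2 ^ 6 - (16807) * p ^ 9 * x 2 ^ 6 + 17 * x 1 * x 2 ^ 3 * x 3 ^ 2 + 70 * p * x 1 * x 2 ^ 3 * x 3 ^ 2 - (7) * p ^ 2 * x 1 * x 2 ^ 3 * x 3 ^ 2 - (336) * p ^ 3 * x 1 * x 2 ^ 3 * x 3 ^ 2 - (294) * p ^ 4 * x 1 * x 2 ^ 3 * x 3 ^ 2 + 686 * p ^ 5 * x 1 * x 2 ^ 3 * x 3 ^ 2 - (13) * x 1 * x 2 ^ 5 + 63 * p * x 1 * x 2 ^ 5 + 1358 * p ^ 2 * x 1 * x 2 ^ 5 + 2317 * p ^ 3 * x 1 * x 2 ^ 5 - (12495) * p ^ 4 * x 1 * x 2 ^ 5 - (17052) * p ^ 5 * x 1 * x 2 ^ 5 + 58604 * p ^ 6 * x 1 * x 2 ^ 5 + 17493 * p ^ 7 * x 1 * x 2 ^ 5 - (115248) * p ^ 8 * x 1 * x 2 ^ 5 + 67228 * p ^ 9 * x 1 * x 2 ^ 5 - (6) * x 1 ^ 2 * x 2 ^ 2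 * x 3 ^ 2 - (42) * p * x 1 ^ 2 * x 2 ^ 2 * x 3 ^ 2 - (63) * p ^ 2 * x 1 ^ 2 * x 2 ^ 2 * x 3 ^ 2 + 357 * p ^ 3 * x 1 ^ 2 * x 2 ^ 2 * x 3 ^ 2 + 441 * p ^ 4 * x 1 ^ 2 * x 2 ^ 2 * x 3 ^ 2 - (1029) * p ^ 5 * x 1 ^ 2 * x 2 ^ 2 * x 3 ^ 2 - (100) * x 1 ^ 2 * x 2 ^ 4 - (1470) * p * x 1 ^ 2 * x 2 ^ 4 - (5530) * p ^ 2 * x 1 ^ 2 * x 2 ^ 4 + 7245 * p ^ 3 * x 1 ^ 2 * x 2 ^ 4 + 59290 * p ^ 4 * x 1 ^ 2 * x 2 ^ 4 - (14945) * p ^ 5 * x 1 ^ 2 * x 2 ^ 4 - (233485) * p ^ 6 * x 1 ^ 2 * x 2 ^ 4 + 87465 * p ^ 7 * x 1 ^ 2 * x 2 ^ 4 + 348145 * p ^ 8 * x 1 ^ 2 * x 2 ^ 4 - (252105) * p ^ 9 * x 1 ^ 2 * x 2 ^ 4 + 9 * x 1 ^ 3 * x 2 * x 3 ^ 2 + 84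 * p * x 1 ^ 3 * x 2 * x 3 ^ 2 + 91 * p ^ 2 * x 1 ^ 3 * x 2 * x 3 ^ 2 - (385) * p ^ 3 * x 1 ^ 3 * x 2 * x 3 ^ 2 - (294) * p ^ 4 * x 1 ^ 3 * x 2 * x 3 ^ 2 + 686 * p ^ 5 * x 1 ^ 3 * x 2 * x 3 ^ 2 + 240 * x 1 ^ 3 * x 2 ^ 3 + 2660 * p * x 1 ^ 3 * x 2 ^ 3 + 5670 * p ^ 2 * x 1 ^ 3 * x 2 ^ 3 - (23800) * p ^ 3 * x 1 ^ 3 * x 2 ^ 3 - (70560) * p ^ 4 * x 1 ^ 3 * x 2 ^ 3 + 99470 * p ^ 5 * x 1 ^ 3 * x 2 ^ 3 + 264110 * p ^ 6 * x 1 ^ 3 * x 2 ^ 3 - (264110) * p ^ 7 * x 1 ^ 3 * x 2 ^ 3 - (336140) * p ^ 8 * x 1 ^ 3 * x 2 ^ 3 + 336140 * p ^ 9 * x 1 ^ 3 * x 2 ^ 3 - (8) * x 1 ^ 4 * x 3 ^ 2 - (49) * p * x 1 ^ 4 * x 3 ^ 2 - (21) * p ^ 2 * x 1 ^ 4 * x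 3 ^ 2 + 217 * p ^ 3 * x 1 ^ 4 * x 3 ^ 2 + 147 * p ^ 4 * x 1 ^ 4 * x 3 ^ 2 - (343) * p ^ 5 * x 1 ^ 4 * x 3 ^ 2 - (240) * x 1 ^ 4 * x 2 ^ 2 - (1925) * p * x 1 ^ 4 * x 2 ^ 2 - (980) * p ^ 2 * x 1 ^ 4 * x 2 ^ 2 + 21070 * p ^ 3 * x 1 ^ 4 * x 2 ^ 2 + 22785 * p ^ 4 * x 1 ^ 4 * x 2 ^ 2 - (93835) * p ^ 5 * x 1 ^ 4 * x 2 ^ 2 - (82565) * p ^ 6 * x 1 ^ 4 * x 2 ^ 2 + 195510 * p ^ 7 * x 1 ^ 4 * x 2 ^ 2 + 96040 * p ^ 8 * x 1 ^ 4 * x 2 ^ 2 - (168070) * p ^ 9 * x 1 ^ 4 * x 2 ^ 2 + 65 * x 1 ^ 5 * x 2 + 252 * p * x 1 ^ 5 * x 2 - (966) * p ^ 2 * x 1 ^ 5 * x 2 - (3836) * p ^ 3 * x 1 ^ 5 * x 2 + 4704 * p ^ 4 * x 1 ^ 5 * x 2 + 16562 * p ^ 5 * x 1 ^ 5 * x 2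 - (8281) * p ^ 6 * x 1 ^ 5 * x 2 - (23324) * p ^ 7 * x 1 ^ 5 * x 2 - (14406) * p ^ 8 * x 1 ^ 5 * x 2 + 33614 * p ^ 9 * x 1 ^ 5 * x 2 - (2) * x 1 ^ 6 - (7) * p ^ 2 * x 1 ^ 6 - (91) * p ^ 3 * x 1 ^ 6 + 686 * p ^ 4 * x 1 ^ 6 + 1225 * p ^ 5 * x 1 ^ 6 - (6958) * p ^ 6 * x 1 ^ 6 - (1029) * p ^ 7 * x 1 ^ 6 + 21609 * p ^ 8 * x 1 ^ 6 - (16807) * p ^ 9 * x 1 ^ 6 + 9 * x 0 * x 2 ^ 3 * x 3 ^ 2 + 84 * p * x 0 * x 2 ^ 3 * x 3 ^ 2 + 91 * p ^ 2 * x 0 * x 2 ^ 3 * x 3 ^ 2 - (385) * p ^ 3 * x 0 * x 2 ^ 3 * x 3 ^ 2 - (294) * p ^ 4 * x 0 * x 2 ^ 3 * x 3 ^ 2 + 686 * p ^ 5 * x 0 * x 2 ^ 3 * x 3 ^ 2 + 65 * x 0 * x 2 ^ 5 + 252 * p * x 0 * x 2 ^ 5 - (966) * p ^ 2 * x 0 *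 x 2 ^ 5 - (3836) * p ^ 3 * x 0 * x 2 ^ 5 + 4704 * p ^ 4 * x 0 * x 2 ^ 5 + 16562 * p ^ 5 * x 0 * x 2 ^ 5 - (8281) * p ^ 6 * x 0 * x 2 ^ 5 - (23324) * p ^ 7 * x 0 * x 2 ^ 5 - (14406) * p ^ 8 * x 0 * x 2 ^ 5 + 33614 * p ^ 9 * x 0 * x 2 ^ 5 - (12) * x 0 * x 1 * x 2 ^ 2 * x 3 ^ 2 - (63) * p * x 0 * x 1 * x 2 ^ 2 * x 3 ^ 2 + 147 * p ^ 3 * x 0 * x 1 * x 2 ^ 2 * x 3 ^ 2 + 150 * x 0 * x 1 * x 2 ^ 4 + 1960 * p * x 0 * x 1 * x 2 ^ 4 + 4550 * p ^ 2 * x 0 * x 1 * x 2 ^ 4 - (19005) * p ^ 3 * x 0 * x 1 * x 2 ^ 4 - (52675) * p ^ 4 * x 0 * x 1 * x 2 ^ 4 + 91140 * p ^ 5 * x 0 * x 1 * x 2 ^ 4 + 168805 * p ^ 6 * x 0 * x 1 * x 2 ^ 4 - (238385) * p ^ 7 * x 0 * x 1 * x 2 ^ 4 - (120050) * p ^ 8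 * x 0 * x 1 * x 2 ^ 4 + 168070 * p ^ 9 * x 0 * x 1 * x 2 ^ 4 - (12) * x 0 * x 1 ^ 2 * x 2 * x 3 ^ 2 - (63) * p * x 0 * x 1 ^ 2 * x 2 * x 3 ^ 2 + 147 * p ^ 3 * x 0 * x 1 ^ 2 * x 2 * x 3 ^ 2 - (260) * x 0 * x 1 ^ 2 * x 2 ^ 3 - (1960) * p * x 0 * x 1 ^ 2 * x 2 ^ 3 + 3430 * p ^ 2 * x 0 * x 1 ^ 2 * x 2 ^ 3 + 37730 * p ^ 3 * x 0 * x 1 ^ 2 * x 2 ^ 3 - (16170) * p ^ 4 * x 0 * x 1 ^ 2 * x 2 ^ 3 - (221480) * p ^ 5 * x 0 * x 1 ^ 2 * x 2 ^ 3 + 117600 * p ^ 6 * x 0 * x 1 ^ 2 * x 2 ^ 3 + 442470 * p ^ 7 * x 0 * x 1 ^ 2 * x 2 ^ 3 - (384160) * p ^ 8 * x 0 * x 1 ^ 2 * x 2 ^ 3 + 17 * x 0 * x 1 ^ 3 * x 3 ^ 2 + 70 * p * x 0 * x 1 ^ 3 * x 3 ^ 2 - (7) * p ^ 2 * x 0 *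 x 1 ^ 3 * x 3 ^ 2 - (336) * p ^ 3 * x 0 * x 1 ^ 3 * x 3 ^ 2 - (294) * p ^ 4 * x 0 * x 1 ^ 3 * x 3 ^ 2 + 686 * p ^ 5 * x 0 * x 1 ^ 3 * x 3 ^ 2 + 160 * x 0 * x 1 ^ 3 * x 2 ^ 2 - (350) * p * x 0 * x 1 ^ 3 * x 2 ^ 2 - (10710) * p ^ 2 * x 0 * x 1 ^ 3 * x 2 ^ 2 - (10850) * p ^ 3 * x 0 * x 1 ^ 3 * x 2 ^ 2 + 103880 * p ^ 4 * x 0 * x 1 ^ 3 * x 2 ^ 2 + 73500 * p ^ 5 * x 0 * x 1 ^ 3 * x 2 ^ 2 - (420910) * p ^ 6 * x 0 * x 1 ^ 3 * x 2 ^ 2 - (13720) * p ^ 7 * x 0 * x 1 ^ 3 * x 2 ^ 2 + 624260 * p ^ 8 * x 0 * x 1 ^ 3 * x 2 ^ 2 - (336140) * p ^ 9 * x 0 * x 1 ^ 3 * x 2 ^ 2 + 150 * x 0 * x 1 ^ 4 * x 2 + 1960 * p * x 0 * x 1 ^ 4 * x 2 + 4550 * p ^ 2 * x 0 * x 1 ^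 4 * x 2 - (19005) * p ^ 3 * x 0 * x 1 ^ 4 * x 2 - (52675) * p ^ 4 * x 0 * x 1 ^ 4 * x 2 + 91140 * p ^ 5 * x 0 * x 1 ^ 4 * x 2 + 168805 * p ^ 6 * x 0 * x 1 ^ 4 * x 2 - (238385) * p ^ 7 * x 0 * x 1 ^ 4 * x 2 - (120050) * p ^ 8 * x 0 * x 1 ^ 4 * x 2 + 168070 * p ^ 9 * x 0 * x 1 ^ 4 * x 2 - (13) * x 0 * x 1 ^ 5 + 63 * p * x 0 * x 1 ^ 5 + 1358 * p ^ 2 * x 0 * x 1 ^ 5 + 2317 * p ^ 3 * x 0 * x 1 ^ 5 - (12495) * p ^ 4 * x 0 * x 1 ^ 5 - (17052) * p ^ 5 * x 0 * x 1 ^ 5 + 58604 * p ^ 6 * x 0 * x 1 ^ 5 + 17493 * p ^ 7 * x 0 * x 1 ^ 5 - (115248) * p ^ 8 * x 0 * x 1 ^ 5 + 67228 * p ^ 9 * x 0 * x 1 ^ 5 - (6) * x 0 ^ 2 * x 2 ^ 2 * x 3 ^ 2 - (42) * p * x 0 ^ 2 * x 2 ^ 2 * x 3 ^ 2 - (63)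 * p ^ 2 * x 0 ^ 2 * x 2 ^ 2 * x 3 ^ 2 + 357 * p ^ 3 * x 0 ^ 2 * x 2 ^ 2 * x 3 ^ 2 + 441 * p ^ 4 * x 0 ^ 2 * x 2 ^ 2 * x 3 ^ 2 - (1029) * p ^ 5 * x 0 ^ 2 * x 2 ^ 2 * x 3 ^ 2 - (240) * x 0 ^ 2 * x 2 ^ 4 - (1925) * p * x 0 ^ 2 * x 2 ^ 4 - (980) * p ^ 2 * x 0 ^ 2 * x 2 ^ 4 + 21070 * p ^ 3 * x 0 ^ 2 * x 2 ^ 4 + 22785 * p ^ 4 * x 0 ^ 2 * x 2 ^ 4 - (93835) * p ^ 5 * x 0 ^ 2 * x 2 ^ 4 - (82565) * p ^ 6 * x 0 ^ 2 * x 2 ^ 4 + 195510 * p ^ 7 * x 0 ^ 2 * x 2 ^ 4 + 96040 * p ^ 8 * x 0 ^ 2 * x 2 ^ 4 - (168070) * p ^ 9 * x 0 ^ 2 * x 2 ^ 4 - (12) * x 0 ^ 2 * x 1 * x 2 * x 3 ^ 2 - (63) * p * x 0 ^ 2 * x 1 * x 2 * x 3 ^ 2 + 147 * p ^ 3 * x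 0 ^ 2 * x 1 * x 2 * x 3 ^ 2 + 160 * x 0 ^ 2 * x 1 * x 2 ^ 3 - (350) * p * x 0 ^ 2 * x 1 * x 2 ^ 3 - (10710) * p ^ 2 * x 0 ^ 2 * x 1 * x 2 ^ 3 - (10850) * p ^ 3 * x 0 ^ 2 * x 1 * x 2 ^ 3 + 103880 * p ^ 4 * x 0 ^ 2 * x 1 * x 2 ^ 3 + 73500 * p ^ 5 * x 0 ^ 2 * x 1 * x 2 ^ 3 - (420910) * p ^ 6 * x 0 ^ 2 * x 1 * x 2 ^ 3 - (13720) * p ^ 7 * x 0 ^ 2 * x 1 * x 2 ^ 3 + 624260 * p ^ 8 * x 0 ^ 2 * x 1 * x 2 ^ 3 - (336140) * p ^ 9 * x 0 ^ 2 * x 1 * x 2 ^ 3 - (6) * x 0 ^ 2 * x 1 ^ 2 * x 3 ^ 2 - (42) * p * x 0 ^ 2 * x 1 ^ 2 * x 3 ^ 2 - (63) * p ^ 2 * x 0 ^ 2 * x 1 ^ 2 * x 3 ^ 2 + 357 * p ^ 3 * x 0 ^ 2 * x 1 ^ 2 * x 3 ^ 2 + 441 * p ^ 4 * x 0 ^ 2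 * x 1 ^ 2 * x 3 ^ 2 - (1029) * p ^ 5 * x 0 ^ 2 * x 1 ^ 2 * x 3 ^ 2 + 2310 * p * x 0 ^ 2 * x 1 ^ 2 * x 2 ^ 2 + 9555 * p ^ 2 * x 0 ^ 2 * x 1 ^ 2 * x 2 ^ 2 - (32340) * p ^ 3 * x 0 ^ 2 * x 1 ^ 2 * x 2 ^ 2 - (118335) * p ^ 4 * x 0 ^ 2 * x 1 ^ 2 * x 2 ^ 2 + 196245 * p ^ 5 * x 0 ^ 2 * x 1 ^ 2 * x 2 ^ 2 + 429240 * p ^ 6 * x 0 ^ 2 * x 1 ^ 2 * x 2 ^ 2 - (607110) * p ^ 7 * x 0 ^ 2 * x 1 ^ 2 * x 2 ^ 2 - (360150) * p ^ 8 * x 0 ^ 2 * x 1 ^ 2 * x 2 ^ 2 + 504210 * p ^ 9 * x 0 ^ 2 * x 1 ^ 2 * x 2 ^ 2 - (260) * x 0 ^ 2 * x 1 ^ 3 * x 2 - (1960) * p * x 0 ^ 2 * x 1 ^ 3 * x 2 + 3430 * p ^ 2 * x 0 ^ 2 * x 1 ^ 3 * x 2 + 37730 * p ^ 3 * x 0 ^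 2 * x 1 ^ 3 * x 2 - (16170) * p ^ 4 * x 0 ^ 2 * x 1 ^ 3 * x 2 - (221480) * p ^ 5 * x 0 ^ 2 * x 1 ^ 3 * x 2 + 117600 * p ^ 6 * x 0 ^ 2 * x 1 ^ 3 * x 2 + 442470 * p ^ 7 * x 0 ^ 2 * x 1 ^ 3 * x 2 - (384160) * p ^ 8 * x 0 ^ 2 * x 1 ^ 3 * x 2 - (100) * x 0 ^ 2 * x 1 ^ 4 - (1470) * p * x 0 ^ 2 * x 1 ^ 4 - (5530) * p ^ 2 * x 0 ^ 2 * x 1 ^ 4 + 7245 * p ^ 3 * x 0 ^ 2 * x 1 ^ 4 + 59290 * p ^ 4 * x 0 ^ 2 * x 1 ^ 4 - (14945) * p ^ 5 * x 0 ^ 2 * x 1 ^ 4 - (233485) * p ^ 6 * x 0 ^ 2 * x 1 ^ 4 + 87465 * p ^ 7 * x 0 ^ 2 * x 1 ^ 4 + 348145 * p ^ 8 * x 0 ^ 2 * x 1 ^ 4 - (252105) * p ^ 9 * x 0 ^ 2 * x 1 ^ 4 + 17 * x 0 ^ 3 * x 2 * x 3 ^ 2 + 70 * p * x 0 ^ 3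 * x 2 * x 3 ^ 2 - (7) * p ^ 2 * x 0 ^ 3 * x 2 * x 3 ^ 2 - (336) * p ^ 3 * x 0 ^ 3 * x 2 * x 3 ^ 2 - (294) * p ^ 4 * x 0 ^ 3 * x 2 * x 3 ^ 2 + 686 * p ^ 5 * x 0 ^ 3 * x 2 * x 3 ^ 2 + 240 * x 0 ^ 3 * x 2 ^ 3 + 2660 * p * x 0 ^ 3 * x 2 ^ 3 + 5670 * p ^ 2 * x 0 ^ 3 * x 2 ^ 3 - (23800) * p ^ 3 * x 0 ^ 3 * x 2 ^ 3 - (70560) * p ^ 4 * x 0 ^ 3 * x 2 ^ 3 + 99470 * p ^ 5 * x 0 ^ 3 * x 2 ^ 3 + 264110 * p ^ 6 * x 0 ^ 3 * x 2 ^ 3 - (264110) * p ^ 7 * x 0 ^ 3 * x 2 ^ 3 - (336140) * p ^ 8 * x 0 ^ 3 * x 2 ^ 3 + 336140 * p ^ 9 * x 0 ^ 3 * x 2 ^ 3 + 9 * x 0 ^ 3 * x 1 * x 3 ^ 2 + 84 * p * x 0 ^ 3 * x 1 * x 3 ^ 2 + 91 * p ^ 2 * x 0 ^ 3 * x 1 *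 x 3 ^ 2 - (385) * p ^ 3 * x 0 ^ 3 * x 1 * x 3 ^ 2 - (294) * p ^ 4 * x 0 ^ 3 * x 1 * x 3 ^ 2 + 686 * p ^ 5 * x 0 ^ 3 * x 1 * x 3 ^ 2 - (260) * x 0 ^ 3 * x 1 * x 2 ^ 2 - (1960) * p * x 0 ^ 3 * x 1 * x 2 ^ 2 + 3430 * p ^ 2 * x 0 ^ 3 * x 1 * x 2 ^ 2 + 37730 * p ^ 3 * x 0 ^ 3 * x 1 * x 2 ^ 2 - (16170) * p ^ 4 * x 0 ^ 3 * x 1 * x 2 ^ 2 - (221480) * p ^ 5 * x 0 ^ 3 * x 1 * x 2 ^ 2 + 117600 * p ^ 6 * x 0 ^ 3 * x 1 * x 2 ^ 2 + 442470 * p ^ 7 * x 0 ^ 3 * x 1 * x 2 ^ 2 - (384160) * p ^ 8 * x 0 ^ 3 * x 1 * x 2 ^ 2 + 160 * x 0 ^ 3 * x 1 ^ 2 * x 2 - (350) * p * x 0 ^ 3 * x 1 ^ 2 * x 2 - (10710) * p ^ 2 * x 0 ^ 3 * x 1 ^ 2 * x 2 - (10850) * p ^ 3 * x 0 ^ 3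 * x 1 ^ 2 * x 2 + 103880 * p ^ 4 * x 0 ^ 3 * x 1 ^ 2 * x 2 + 73500 * p ^ 5 * x 0 ^ 3 * x 1 ^ 2 * x 2 - (420910) * p ^ 6 * x 0 ^ 3 * x 1 ^ 2 * x 2 - (13720) * p ^ 7 * x 0 ^ 3 * x 1 ^ 2 * x 2 + 624260 * p ^ 8 * x 0 ^ 3 * x 1 ^ 2 * x 2 - (336140) * p ^ 9 * x 0 ^ 3 * x 1 ^ 2 * x 2 + 240 * x 0 ^ 3 * x 1 ^ 3 + 2660 * p * x 0 ^ 3 * x 1 ^ 3 + 5670 * p ^ 2 * x 0 ^ 3 * x 1 ^ 3 - (23800) * p ^ 3 * x 0 ^ 3 * x 1 ^ 3 - (70560) * p ^ 4 * x 0 ^ 3 * x 1 ^ 3 + 99470 * p ^ 5 * x 0 ^ 3 * x 1 ^ 3 + 264110 * p ^ 6 * x 0 ^ 3 * x 1 ^ 3 - (264110) * p ^ 7 * x 0 ^ 3 * x 1 ^ 3 - (336140) * p ^ 8 * x 0 ^ 3 * x 1 ^ 3 + 336140 * p ^ 9 * x 0 ^ 3 * x 1 ^ 3 - (8) * x 0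 ^ 4 * x 3 ^ 2 - (49) * p * x 0 ^ 4 * x 3 ^ 2 - (21) * p ^ 2 * x 0 ^ 4 * x 3 ^ 2 + 217 * p ^ 3 * x 0 ^ 4 * x 3 ^ 2 + 147 * p ^ 4 * x 0 ^ 4 * x 3 ^ 2 - (343) * p ^ 5 * x 0 ^ 4 * x 3 ^ 2 - (100) * x 0 ^ 4 * x 2 ^ 2 - (1470) * p * x 0 ^ 4 * x 2 ^ 2 - (5530) * p ^ 2 * x 0 ^ 4 * x 2 ^ 2 + 7245 * p ^ 3 * x 0 ^ 4 * x 2 ^ 2 + 59290 * p ^ 4 * x 0 ^ 4 * x 2 ^ 2 - (14945) * p ^ 5 * x 0 ^ 4 * x 2 ^ 2 - (233485) * p ^ 6 * x 0 ^ 4 * x 2 ^ 2 + 87465 * p ^ 7 * x 0 ^ 4 * x 2 ^ 2 + 348145 * p ^ 8 * x 0 ^ 4 * x 2 ^ 2 - (252105) * p ^ 9 * x 0 ^ 4 * x 2 ^ 2 + 150 * x 0 ^ 4 * x 1 * x 2 + 1960 * p * x 0 ^ 4 * x 1 * x 2 + 4550 * p ^ 2 * x 0 ^ 4 * x 1 *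 x 2 - (19005) * p ^ 3 * x 0 ^ 4 * x 1 * x 2 - (52675) * p ^ 4 * x 0 ^ 4 * x 1 * x 2 + 91140 * p ^ 5 * x 0 ^ 4 * x 1 * x 2 + 168805 * p ^ 6 * x 0 ^ 4 * x 1 * x 2 - (238385) * p ^ 7 * x 0 ^ 4 * x 1 * x 2 - (120050) * p ^ 8 * x 0 ^ 4 * x 1 * x 2 + 168070 * p ^ 9 * x 0 ^ 4 * x 1 * x 2 - (240) * x 0 ^ 4 * x 1 ^ 2 - (1925) * p * x 0 ^ 4 * x 1 ^ 2 - (980) * p ^ 2 * x 0 ^ 4 * x 1 ^ 2 + 21070 * p ^ 3 * x 0 ^ 4 * x 1 ^ 2 + 22785 * p ^ 4 * x 0 ^ 4 * x 1 ^ 2 - (93835) * p ^ 5 * x 0 ^ 4 * x 1 ^ 2 - (82565) * p ^ 6 * x 0 ^ 4 * x 1 ^ 2 + 195510 * p ^ 7 * x 0 ^ 4 * x 1 ^ 2 + 96040 * p ^ 8 * x 0 ^ 4 * x 1 ^ 2 - (168070) * p ^ 9 * x 0 ^ 4 * x 1 ^ 2 - (13) * x 0 ^ 5 * x 2 + 63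 * p * x 0 ^ 5 * x 2 + 1358 * p ^ 2 * x 0 ^ 5 * x 2 + 2317 * p ^ 3 * x 0 ^ 5 * x 2 - (12495) * p ^ 4 * x 0 ^ 5 * x 2 - (17052) * p ^ 5 * x 0 ^ 5 * x 2 + 58604 * p ^ 6 * x 0 ^ 5 * x 2 + 17493 * p ^ 7 * x 0 ^ 5 * x 2 - (115248) * p ^ 8 * x 0 ^ 5 * x 2 + 67228 * p ^ 9 * x 0 ^ 5 * x 2 + 65 * x 0 ^ 5 * x 1 + 252 * p * x 0 ^ 5 * x 1 - (966) * p ^ 2 * x 0 ^ 5 * x 1 - (3836) * p ^ 3 * x 0 ^ 5 * x 1 + 4704 * p ^ 4 * x 0 ^ 5 * x 1 + 16562 * p ^ 5 * x 0 ^ 5 * x 1 - (8281) * p ^ 6 * x 0 ^ 5 * x 1 - (23324) * p ^ 7 * x 0 ^ 5 * x 1 - (14406) * p ^ 8 * x 0 ^ 5 * x 1 + 33614 * p ^ 9 * x 0 ^ 5 * x 1 - (2) * x 0 ^ 6 - (7) * p ^ 2 * x 0 ^ 6 - (91) * p ^ 3 * x 0 ^ 6 + 686 * p ^ 4 * x 0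 ^ 6 + 1225 * p ^ 5 * x 0 ^ 6 - (6958) * p ^ 6 * x 0 ^ 6 - (1029) * p ^ 7 * x 0 ^ 6 + 21609 * p ^ 8 * x 0 ^ 6 - (16807) * p ^ 9 * x 0 ^ 6) * hp3
end

section
/- The seven polynomials p₀₁², p₀₁p₀₂, p₀₁p₁₂, p₀₂², p₀₂p₁₂, p₁₂², g̃ are linearly independent modulo the ideal generated by f(u) and f(v): if a ℂ-linear combination λ₁p₀₁² + λ₂p₀₁p₀₂ + λ₃p₀₁p₁₂ + λ₄p₀₂² + λ₅p₀₂p₁₂ + λ₆p₁₂² + λ₇g̃ lies in the ideal of ℂ[u₀,u₁,u₂,v₀,v₁,v₂] generated by f(u₀,u₁,u₂) and f(v₀,v₁,v₂), then λ₁ = λ₂ = λ₃ = λ₄ = λ₅ = λ₆ = λ₇ = 0. -/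
open MvPolynomial

namespace Klein56

/-- The Klein quartic in the variables `u₀,u₁,u₂` (variables `0,1,2` of `Fin 6`):
`f(u) = u₀u₁³ + u₁u₂³ + u₂u₀³`. -/
noncomputable def fu : MvPolynomial (Fin 6) ℂ :=
  X 0 * X 1 ^ 3 + X 1 * X 2 ^ 3 + X 2 * X 0 ^ 3

/-- The Klein quartic in the variables `v₀,v₁,v₂` (variables `3,4,5` of `Fin 6`):
`f(v) = v₀v₁³ + v₁v₂³ + v₂v₀³`. -/
noncomputable def fv : MvPolynomial (Fin 6) ℂ :=
  X 3 * X 4 ^ 3 + X 4 * X 5 ^ 3 + X 5 * X 3 ^ 3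

/-- `p₀₁ = u₀v₁ − u₁v₀`. -/
noncomputable def p01 : MvPolynomial (Fin 6) ℂ := X 0 * X 4 - X 1 * X 3
/-- `p₀₂ = u₀v₂ − u₂v₀`. -/
noncomputable def p02 : MvPolynomial (Fin 6) ℂ := X 0 * X 5 - X 2 * X 3
/-- `p₁₂ = u₁v₂ − u₂v₁`. -/
noncomputable def p12 : MvPolynomial (Fin 6) ℂ := X 1 * X 5 - X 2 * X 4

/-- `g̃ = u₀u₁v₁² + u₁u₂v₂² + u₂u₀v₀² + v₀v₁u₁² + v₁v₂u₂² + v₂v₀u₀²`. -/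
noncomputable def gt : MvPolynomial (Fin 6) ℂ :=
  X 0 * X 1 * X 4 ^ 2 + X 1 * X 2 * X 5 ^ 2 + X 2 * X 0 * X 3 ^ 2
    + X 3 * X 4 * X 1 ^ 2 + X 4 * X 5 * X 2 ^ 2 + X 5 * X 3 * X 0 ^ 2

set_option maxHeartbeats 1600000 in
/-- The seven polynomials `p₀₁², p₀₁p₀₂, p₀₁p₁₂, p₀₂², p₀₂p₁₂, p₁₂², g̃` are
linearly independent modulo the ideal generated by `f(u)` and `f(v)`. -/
theorem linearly_independent_mod_ideal (l : Fin 7 → ℂ)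
    (h : C (l 0) * p01 ^ 2 + C (l 1) * (p01 * p02) + C (l 2) * (p01 * p12)
        + C (l 3) * p02 ^ 2 + C (l 4) * (p02 * p12) + C (l 5) * p12 ^ 2
        + C (l 6) * gt ∈ Ideal.span ({fu, fv} : Set (MvPolynomial (Fin 6) ℂ))) :
    ∀ i : Fin 7, l i = 0 := by

  set P : MvPolynomial (Fin 6) ℂ :=
      C (l 0) * p01 ^ 2 + C (l 1) * (p01 * p02) + C (l 2) * (p01 * p12)
        + C (l 3) * p02 ^ 2 + C (l 4) * (p02 * p12) + C (l 5) * p12 ^ 2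
        + C (l 6) * gt with hPdef
  rw [Ideal.mem_span_pair] at h
  obtain ⟨a, b, hab⟩ := h
  -- the weighting algebra map
  set g : Fin 6 → Polynomial (Polynomial (MvPolynomial (Fin 6) ℂ)) := fun i =>
    if (i : ℕ) < 3 then Polynomial.C (Polynomial.C (X i)) * Polynomial.X
    else Polynomial.C (Polynomial.C (X i) * Polynomial.X) with hg
  have hgu : ∀ i : Fin 6, (i : ℕ) < 3 →
      g i = Polynomial.C (Polynomial.C (X i)) * Polynomial.X := by
    intro i hi; simp [hg, hi]
  have hgv : ∀ i : Fin 6, ¬ (i : ℕ) < 3 →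
      g i = Polynomial.C (Polynomial.C (X i) * Polynomial.X) := by
    intro i hi; simp [hg, hi]
  have hfu : aeval g fu = Polynomial.C (Polynomial.C fu) * Polynomial.X ^ 4 := by
    rw [fu]
    simp only [map_add, map_mul, map_pow, aeval_X,
      hgu 0 (by decide), hgu 1 (by decide), hgu 2 (by decide)]
    ring
  have hfv : aeval g fv = Polynomial.C (Polynomial.C fv * Polynomial.X ^ 4) := by
    rw [fv]
    simp only [map_add, map_mul, map_pow, aeval_X,
      hgv 3 (by decide), hgv 4 (by decide), hgv 5 (by decide)]
    ring
  have hCA : ∀ c : ℂ, (algebraMap ℂ (Polynomial (Polynomial (MvPolynomial (Fin 6) ℂ)))) c = Polynomial.C (Polynomial.C (C c)) := fun c => rfl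
  have hP : aeval g P = Polynomial.C (Polynomial.C P * Polynomial.X ^ 2) * Polynomial.X ^ 2 := by
    rw [hPdef, p01, p02, p12, gt]
    simp only [map_add, map_sub, map_mul, map_pow, aeval_X, aeval_C,
      hgu 0 (by decide), hgu 1 (by decide), hgu 2 (by decide),
      hgv 3 (by decide), hgv 4 (by decide), hgv 5 (by decide),
      Polynomial.C_add, Polynomial.C_sub, Polynomial.C_mul, Polynomial.C_pow, hCA]
    ring
  have hE := congrArg (aeval g) hab
  rw [map_add, map_mul, map_mul, hfu, hfv, hP] at hE
  have c1 : Polynomial.coeff (aeval g a * (Polynomial.C (Polynomial.C fu) * Polynomial.X ^ 4)) 2 = 0 := by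
    rw [show aeval g a * (Polynomial.C (Polynomial.C fu) * Polynomial.X ^ 4)
          = (aeval g a * Polynomial.C (Polynomial.C fu)) * Polynomial.X ^ 4 by ring,
        Polynomial.coeff_mul_X_pow']
    norm_num
  have c2 : Polynomial.coeff (aeval g b * Polynomial.C (Polynomial.C fv * Polynomial.X ^ 4)) 2
      = (Polynomial.coeff (aeval g b) 2) * (Polynomial.C fv * Polynomial.X ^ 4) :=
    Polynomial.coeff_mul_C _ _ _
  have c3 : Polynomial.coeff (Polynomial.C (Polynomial.C P * Polynomial.X ^ 2) * Polynomial.X ^ 2) 2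
      = Polynomial.C P * Polynomial.X ^ 2 := by
    rw [Polynomial.coeff_C_mul, Polynomial.coeff_X_pow]
    simp
  have step : (Polynomial.coeff (aeval g b) 2) * (Polynomial.C fv * Polynomial.X ^ 4)
      = Polynomial.C P * Polynomial.X ^ 2 := by
    have h2 := congrArg (fun q => Polynomial.coeff q 2) hE
    simpa only [Polynomial.coeff_add, c1, c2, c3, zero_add] using h2
  have hP0 : P = 0 := by
    have h3 := congrArg (fun q => Polynomial.coeff q 2) step
    rw [show (Polynomial.coeff (aeval g b) 2) * (Polynomial.C fv * Polynomial.X ^ 4)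
          = ((Polynomial.coeff (aeval g b) 2) * Polynomial.C fv) * Polynomial.X ^ 4 by ring,
        Polynomial.coeff_mul_X_pow', Polynomial.coeff_mul_X_pow'] at h3
    norm_num [Polynomial.coeff_C_zero] at h3
    exact h3.symm
  -- now evaluate at points
  have hv : ∀ x : Fin 6 → ℂ, eval x P = 0 := by
    intro x; rw [hP0, map_zero]
  have e1 := hv ![1,0,0,0,1,0]
  have e2 := hv ![1,0,0,0,0,1]
  have e3 := hv ![0,1,0,0,0,1]
  simp [hPdef, p01, p02, p12, gt, show (![1,0,0,0,1,0] : Fin 6 → ℂ) 5 = 0 from rfl] at e1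
  simp [hPdef, p01, p02, p12, gt, show (![1,0,0,0,0,1] : Fin 6 → ℂ) 5 = 1 from rfl] at e2
  simp [hPdef, p01, p02, p12, gt, show (![0,1,0,0,0,1] : Fin 6 → ℂ) 5 = 1 from rfl] at e3
  -- e1 : l 0 = 0, e2 : l 3 = 0, e3 : l 5 = 0
  have e4 := hv ![1,0,0,0,1,1]
  have e5 := hv ![0,1,0,1,0,1]
  have e6 := hv ![1,1,0,0,0,1]
  have e7 := hv ![1,1,0,0,1,0]
  simp [hPdef, p01, p02, p12, gt, e1, e2, e3, show (![1,0,0,0,1,1] : Fin 6 → ℂ) 5 = 1 from rfl] at e4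
  simp [hPdef, p01, p02, p12, gt, e1, e2, e3, show (![0,1,0,1,0,1] : Fin 6 → ℂ) 5 = 1 from rfl] at e5
  simp [hPdef, p01, p02, p12, gt, e1, e2, e3, show (![1,1,0,0,0,1] : Fin 6 → ℂ) 5 = 1 from rfl] at e6
  simp [hPdef, p01, p02, p12, gt, e1, e2, e3, show (![1,1,0,0,1,0] : Fin 6 → ℂ) 5 = 0 from rfl] at e7
  intro i
  fin_cases i <;> simp_all


end Klein56
end
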